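/- arXiv:2105.06975 — 6 statements merged into one kernel-verified Lean document; each statement's English description precedes it below -/
import Mathlib

section
/- Let m, q be positive integers. Let D, D̂ ∈ ℝ^{m×m} and R, R̂ ∈ ℝ^{q×q} be symmetric positive definite matrices, let L, L̂ ∈ ℝ^{m×m} be invertible matrices, and let H ∈ ℝ^{q×m}. Define S = LᵀD⁻¹L + HᵀR⁻¹H, S̃ = LᵀD⁻¹L, Ŝ = L̂ᵀD⁻¹L̂, and suppose all four matrices S, S̃, Ŝ are symmetric positive definite. Suppose every eigenvalue of D̂⁻¹D lies in [λ_D, Λ_D], every eigenvalue of R̂⁻¹R lies in [λ_R, Λ_R], every eigenvalue of S̃⁻¹S lies in [λ_S, Λ_S], and every eigenvalue of (L̂ᵀL̂)⁻¹(LᵀL) lies in [λ_L, Λ_L], where all these interval endpoints are positive. Set λ_Φ = min{λ_D, λ_R}, Λ_Φ = max{Λ_D, Λ_R}, and let κ(D) denote the spectral condition number of D (the ratio of its largest to smallest eigenvalue). Let 𝒜 be the (2m+q)×(2m+q) block matrix with block rows (D, 0, L), (0, R, H), (Lᵀ, Hᵀ, 0), and let P_D = blkdiag(D̂, R̂, Ŝ).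 Then every eigenvalue λ of P_D⁻¹𝒜 is real and satisfies: λ ∈ [ (λ_Φ − √(λ_Φ² + 4Λ_ΦΛ_SΛ_Lκ(D)))/2 , (Λ_Φ − √(Λ_Φ² + 4λ_Φλ_Sλ_L/κ(D)))/2 ] ∪ [λ_Φ, Λ_Φ] ∪ [ (λ_Φ + √(λ_Φ² + 4λ_Φλ_Sλ_L/κ(D)))/2 , (Λ_Φ + √(Λ_Φ² + 4Λ_ΦΛ_SΛ_Lκ(D)))/2 ]. -/
open Matrix Set

set_option linter.unusedSectionVars false
set_option maxHeartbeats 1000000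

section Helpers

variable {n : Type*} [Fintype n] [DecidableEq n]

private lemma sym_dot_shift {R : Type*} [CommRing R] (M : Matrix n n R) (hM : Mᵀ = M)
    (y w : n → R) : y ⬝ᵥ M *ᵥ w = (M *ᵥ y) ⬝ᵥ w := by
  rw [Matrix.dotProduct_mulVec, ← Matrix.mulVec_transpose, hM]

private lemma dot_symm {R : Type*} [CommRing R] (M : Matrix n n R) (hM : Mᵀ = M) (x z : n → R) :
    x ⬝ᵥ M *ᵥ z = z ⬝ᵥ M *ᵥ x := by
  rw [sym_dot_shift M hM, dotProduct_comm]

private lemma quad_ineq (M : Matrix n n ℝ) (hM : Mᵀ = M)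
    (hpsd : ∀ z, 0 ≤ z ⬝ᵥ M *ᵥ z) (x z : n → ℝ) :
    2 * (z ⬝ᵥ M *ᵥ x) - z ⬝ᵥ M *ᵥ z ≤ x ⬝ᵥ M *ᵥ x := by
  have h := hpsd (x - z)
  have hs : z ⬝ᵥ M *ᵥ x = x ⬝ᵥ M *ᵥ z := dot_symm M hM z x
  rw [Matrix.mulVec_sub, dotProduct_sub, sub_dotProduct,
    sub_dotProduct] at h
  linarith

private lemma herm_form_lower (C : Matrix n n ℝ) (hC : C.IsHermitian) (l : ℝ)
    (h : ∀ (μ : ℝ) (v : n → ℝ), v ≠ 0 → C *ᵥ v = μ • v → l ≤ μ) :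
    ∀ y : n → ℝ, l * (y ⬝ᵥ y) ≤ y ⬝ᵥ C *ᵥ y := by
  intro y
  have hC' : (C - l • 1).IsHermitian := by
    refine hC.sub ?_
    simp [Matrix.IsHermitian, Matrix.conjTranspose_smul]
  have hpsd : (C - l • 1).PosSemidef := by
    refine hC'.posSemidef_iff_eigenvalues_nonneg.mpr ?_
    intro i
    have hev := hC'.mulVec_eigenvectorBasis i
    set u : n → ℝ := ⇑(hC'.eigenvectorBasis i) with hu
    have hne : u ≠ 0 := by
      intro h0
      exact hC'.eigenvectorBasis.orthonormal.ne_zero i (by ext j; exact congrFun h0 j)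
    have hCu : C *ᵥ u = (hC'.eigenvalues i + l) • u := by
      have h1 : C *ᵥ u - l • u = hC'.eigenvalues i • u := by
        simpa [Matrix.sub_mulVec, Matrix.smul_mulVec, Matrix.one_mulVec] using hev
      have h2 : C *ᵥ u = hC'.eigenvalues i • u + l • u := by
        rw [← h1]; abel
      rw [h2, ← add_smul]
    have := h _ u hne hCu
    simp only [Pi.zero_apply]; linarith
  have h2 := hpsd.dotProduct_mulVec_nonneg y
  simp only [star_trivial] at h2
  have h3 : y ⬝ᵥ (C - l • 1) *ᵥ y = y ⬝ᵥ C *ᵥ y - l * (y ⬝ᵥ y) := by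
    rw [Matrix.sub_mulVec, dotProduct_sub, Matrix.smul_mulVec,
      Matrix.one_mulVec, dotProduct_smul, smul_eq_mul]
  linarith [h2, h3.symm ▸ h2]

private lemma herm_form_upper (C : Matrix n n ℝ) (hC : C.IsHermitian) (L : ℝ)
    (h : ∀ (μ : ℝ) (v : n → ℝ), v ≠ 0 → C *ᵥ v = μ • v → μ ≤ L) :
    ∀ y : n → ℝ, y ⬝ᵥ C *ᵥ y ≤ L * (y ⬝ᵥ y) := by
  intro y
  have hneg := herm_form_lower (-C) (by simpa [Matrix.IsHermitian] using hC.neg) (-L) ?_ y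
  · rw [Matrix.neg_mulVec, dotProduct_neg] at hneg
    linarith
  · intro μ v hv hev
    have h1 : C *ᵥ v = (-μ) • v := by
      have h0 : -(C *ᵥ v) = μ • v := by rwa [Matrix.neg_mulVec] at hev
      rw [neg_smul, ← h0]; abel
    linarith [h _ v hv h1]

private lemma real_herm_transpose {A : Matrix n n ℝ} (h : A.IsHermitian) : Aᵀ = A := by
  rw [← Matrix.conjTranspose_eq_transpose_of_trivial]; exact h

open scoped MatrixOrder in
private lemma rayleigh_bounds (A B : Matrix n n ℝ) (hA : A.IsHermitian) (hB : B.PosDef)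
    (l L : ℝ)
    (h : ∀ (μ : ℝ) (v : n → ℝ), v ≠ 0 → (B⁻¹ * A) *ᵥ v = μ • v → l ≤ μ ∧ μ ≤ L) :
    ∀ x : n → ℝ, l * (x ⬝ᵥ B *ᵥ x) ≤ x ⬝ᵥ A *ᵥ x ∧ x ⬝ᵥ A *ᵥ x ≤ L * (x ⬝ᵥ B *ᵥ x) := by
  intro x
  have hBdet : IsUnit B.det := hB.det_pos.ne'.isUnit
  set Bs := CFC.sqrt B with hBs
  have hBsH : Bs.IsHermitian := (CFC.sqrt_nonneg B).posSemidef.1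
  have hBsT : Bsᵀ = Bs := real_herm_transpose hBsH
  have hBsq : Bs * Bs = B := CFC.sqrt_mul_sqrt_self B hB.posSemidef.nonneg
  have hBsdet : IsUnit Bs.det := by
    have : Bs.det * Bs.det = B.det := by rw [← Matrix.det_mul, hBsq]
    rcases hBdet with ⟨u, hu⟩
    exact isUnit_iff_ne_zero.mpr (fun h0 => by simp [h0, ← hu] at this; exact hB.det_pos.ne' (by rw [← hu, ← this]))
  have hBs1 : Bs * Bs⁻¹ = 1 := Matrix.mul_nonsing_inv _ hBsdet
  have hBs2 : Bs⁻¹ * Bs = 1 := Matrix.nonsing_inv_mul _ hBsdet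
  have hB2 : B⁻¹ * B = 1 := Matrix.nonsing_inv_mul _ hBdet
  have hBsiT : (Bs⁻¹)ᵀ = Bs⁻¹ := by rw [Matrix.transpose_nonsing_inv, hBsT]
  set C := Bs⁻¹ * A * Bs⁻¹ with hC
  have hAT : Aᵀ = A := real_herm_transpose hA
  have hCT : Cᵀ = C := by
    rw [hC, Matrix.transpose_mul, Matrix.transpose_mul, hBsiT, hAT, Matrix.mul_assoc]
  have hCH : C.IsHermitian := by
    rw [Matrix.IsHermitian, Matrix.conjTranspose_eq_transpose_of_trivial, hCT]
  have htrans : ∀ (μ : ℝ) (u : n → ℝ), u ≠ 0 → C *ᵥ u = μ • u → l ≤ μ ∧ μ ≤ L := by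
    intro μ u hu hev
    set v := Bs⁻¹ *ᵥ u with hv
    have hBsv : Bs *ᵥ v = u := by
      rw [hv, Matrix.mulVec_mulVec, hBs1, Matrix.one_mulVec]
    have hvne : v ≠ 0 := by
      intro h0; apply hu; rw [← hBsv, h0, Matrix.mulVec_zero]
    have hAv : A *ᵥ v = μ • (Bs *ᵥ u) := by
      have h0 : Bs *ᵥ (C *ᵥ u) = Bs *ᵥ (μ • u) := by rw [hev]
      have h1 : Bs * (Bs⁻¹ * A * Bs⁻¹) = A * Bs⁻¹ := by
        rw [← Matrix.mul_assoc, ← Matrix.mul_assoc, hBs1, Matrix.one_mul]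
      rw [hC, Matrix.mulVec_mulVec, h1, Matrix.mulVec_smul] at h0
      rw [hv, Matrix.mulVec_mulVec]; exact h0
    have hBv : B *ᵥ v = Bs *ᵥ u := by
      rw [← hBsq, ← Matrix.mulVec_mulVec, hBsv]
    apply h μ v hvne
    rw [← Matrix.mulVec_mulVec, hAv, Matrix.mulVec_smul, ← hBv, Matrix.mulVec_mulVec, hB2,
      Matrix.one_mulVec]
  have hlow := herm_form_lower C hCH l (fun μ u hu hev => (htrans μ u hu hev).1)
  have hup := herm_form_upper C hCH L (fun μ u hu hev => (htrans μ u hu hev).2)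
  set y := Bs *ᵥ x with hy
  have hCy : C *ᵥ y = Bs⁻¹ *ᵥ (A *ᵥ x) := by
    rw [hy, hC, Matrix.mulVec_mulVec, Matrix.mulVec_mulVec, Matrix.mul_assoc, Matrix.mul_assoc,
      hBs2, Matrix.mul_one, ← Matrix.mulVec_mulVec]
  have hBsiy : Bs⁻¹ *ᵥ y = x := by rw [hy, Matrix.mulVec_mulVec, hBs2, Matrix.one_mulVec]
  have hyCy : y ⬝ᵥ C *ᵥ y = x ⬝ᵥ A *ᵥ x := by
    rw [hCy, sym_dot_shift (Bs⁻¹) hBsiT, hBsiy]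
  have hyy : y ⬝ᵥ y = x ⬝ᵥ B *ᵥ x := by
    have h0 : x ⬝ᵥ B *ᵥ x = x ⬝ᵥ Bs *ᵥ (Bs *ᵥ x) := by
      rw [Matrix.mulVec_mulVec, hBsq]
    rw [h0, sym_dot_shift Bs hBsT, hy, dotProduct_comm]
  constructor
  · rw [← hyCy, ← hyy]; exact hlow y
  · rw [← hyCy, ← hyy]; exact hup y

private lemma mulVec_map_re (M : Matrix n n ℝ) (v : n → ℂ) (i : n) :
    (((M.map (fun x : ℝ => (x : ℂ))) *ᵥ v) i).re = (M *ᵥ (fun j => (v j).re)) i := by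
  simp [Matrix.mulVec, dotProduct, Complex.re_sum, Complex.mul_re]

private lemma mulVec_map_im (M : Matrix n n ℝ) (v : n → ℂ) (i : n) :
    (((M.map (fun x : ℝ => (x : ℂ))) *ᵥ v) i).im = (M *ᵥ (fun j => (v j).im)) i := by
  simp [Matrix.mulVec, dotProduct, Complex.im_sum, Complex.mul_im]

private lemma star_dot_real (M : Matrix n n ℝ) (hM : Mᵀ = M) (v : n → ℂ) :
    star v ⬝ᵥ ((M.map (fun x : ℝ => (x : ℂ))) *ᵥ v) =
      (((fun j => (v j).re) ⬝ᵥ M *ᵥ (fun j => (v j).re)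
        + (fun j => (v j).im) ⬝ᵥ M *ᵥ (fun j => (v j).im) : ℝ) : ℂ) := by
  have hsymm : ∀ i j, M j i = M i j := by
    intro i j
    have h := congrFun (congrFun hM i) j
    rwa [Matrix.transpose_apply] at h
  apply Complex.ext
  · simp [dotProduct, Matrix.mulVec, Complex.re_sum, Complex.mul_re, Complex.mul_im,
      Finset.mul_sum, Finset.sum_add_distrib, mul_add, mul_comm, mul_left_comm, add_comm]
  · rw [Complex.ofReal_im]
    simp only [Matrix.mulVec, dotProduct, Pi.star_apply, Matrix.map_apply]
    rw [Complex.im_sum]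
    have hterm : ∀ i, (star (v i) * ∑ j, ((M i j : ℂ) * v j)).im
        = ∑ j, (M i j * ((v i).re * (v j).im) - M i j * ((v i).im * (v j).re)) := by
      intro i
      rw [Finset.mul_sum, Complex.im_sum]
      refine Finset.sum_congr rfl fun j _ => ?_
      simp [Complex.mul_im, Complex.mul_re]
      ring
    simp_rw [hterm]
    have h1 : (∑ x : n, ∑ j : n, (M x j * ((v x).re * (v j).im)))
        = ∑ x : n, ∑ j : n, (M x j * ((v x).im * (v j).re)) := by
      rw [Finset.sum_comm]
      refine Finset.sum_congr rfl fun i _ => Finset.sum_congr rfl fun k _ => ?_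
      rw [hsymm k i]
      ring
    simp_rw [Finset.sum_sub_distrib]
    rw [h1, sub_self]

private lemma inv_form_bounds (Φ : Matrix n n ℝ) (hΦ : Φ.PosDef) (hΦt : Φᵀ = Φ)
    (M : Matrix n n ℝ) (hMt : Mᵀ = M) (c C : ℝ) (hc : 0 < c) (hcC : c ≤ C)
    (hlow : ∀ z, c * (z ⬝ᵥ Φ *ᵥ z) ≤ z ⬝ᵥ M *ᵥ z)
    (hup : ∀ z, z ⬝ᵥ M *ᵥ z ≤ C * (z ⬝ᵥ Φ *ᵥ z))
    (x y : n → ℝ) (hxy : M *ᵥ x = y) :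
    (y ⬝ᵥ Φ⁻¹ *ᵥ y) / C ≤ x ⬝ᵥ y ∧ x ⬝ᵥ y ≤ (y ⬝ᵥ Φ⁻¹ *ᵥ y) / c := by
  have hC : 0 < C := lt_of_lt_of_le hc hcC
  have hdet : IsUnit Φ.det := hΦ.det_pos.ne'.isUnit
  have hΦinv : Φ *ᵥ (Φ⁻¹ *ᵥ y) = y := by
    rw [Matrix.mulVec_mulVec, Matrix.mul_nonsing_inv _ hdet, Matrix.one_mulVec]
  have hΦit : (Φ⁻¹)ᵀ = Φ⁻¹ := by rw [Matrix.transpose_nonsing_inv, hΦt]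
  set g := y ⬝ᵥ Φ⁻¹ *ᵥ y with hg
  have hΦiyy : (Φ⁻¹ *ᵥ y) ⬝ᵥ y = g := by rw [hg, sym_dot_shift _ hΦit]
  have hΦiyΦ : (Φ⁻¹ *ᵥ y) ⬝ᵥ Φ *ᵥ (Φ⁻¹ *ᵥ y) = g := by
    rw [hΦinv, hΦiyy]
  have hxMx : x ⬝ᵥ M *ᵥ x = x ⬝ᵥ y := by rw [hxy]
  constructor
  · set z := C⁻¹ • (Φ⁻¹ *ᵥ y) with hz
    have hMpsd : ∀ w, 0 ≤ w ⬝ᵥ M *ᵥ w := by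
      intro w
      have hw := hΦ.posSemidef.dotProduct_mulVec_nonneg w
      simp only [star_trivial] at hw
      exact le_trans (mul_nonneg hc.le hw) (hlow w)
    have h1 := quad_ineq M hMt hMpsd x z
    have hzMx : z ⬝ᵥ M *ᵥ x = C⁻¹ * g := by
      rw [hz, smul_dotProduct, smul_eq_mul, hxy, hΦiyy]
    have hzΦz : z ⬝ᵥ Φ *ᵥ z = C⁻¹ * (C⁻¹ * g) := by
      rw [hz, smul_dotProduct, Matrix.mulVec_smul, dotProduct_smul,
        smul_eq_mul, smul_eq_mul, hΦiyΦ]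
    have hzMz : z ⬝ᵥ M *ᵥ z ≤ C⁻¹ * g := by
      have h0 := hup z
      rw [hzΦz] at h0
      calc z ⬝ᵥ M *ᵥ z ≤ C * (C⁻¹ * (C⁻¹ * g)) := h0
        _ = C⁻¹ * g := by field_simp
    rw [hxMx, hzMx] at h1
    rw [div_le_iff₀ hC]
    have h2 : C⁻¹ * g ≤ x ⬝ᵥ y := by linarith
    have h3 := mul_le_mul_of_nonneg_left h2 hC.le
    have h4 : C * (C⁻¹ * g) = g := by field_simp
    nlinarith [h3, h4]
  · set N := c • Φ with hN
    set x0 := c⁻¹ • (Φ⁻¹ *ᵥ y) with hx0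
    have hNt : Nᵀ = N := by rw [hN, Matrix.transpose_smul, hΦt]
    have hNpsd : ∀ w, 0 ≤ w ⬝ᵥ N *ᵥ w := by
      intro w
      have hw := hΦ.posSemidef.dotProduct_mulVec_nonneg w
      simp only [star_trivial] at hw
      rw [hN, Matrix.smul_mulVec, dotProduct_smul, smul_eq_mul]
      positivity
    have hNx0 : N *ᵥ x0 = y := by
      rw [hN, hx0, Matrix.smul_mulVec, Matrix.mulVec_smul, hΦinv, smul_smul,
        mul_inv_cancel₀ hc.ne', one_smul]
    have h1 := quad_ineq N hNt hNpsd x0 x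
    have hxNx0 : x ⬝ᵥ N *ᵥ x0 = x ⬝ᵥ y := by rw [hNx0]
    have hx0Nx0 : x0 ⬝ᵥ N *ᵥ x0 = c⁻¹ * g := by
      rw [hNx0, hx0, smul_dotProduct, smul_eq_mul, hΦiyy]
    have hxNx : x ⬝ᵥ N *ᵥ x ≤ x ⬝ᵥ y := by
      rw [hN, Matrix.smul_mulVec, dotProduct_smul, smul_eq_mul, ← hxMx]
      exact hlow x
    rw [hxNx0, hx0Nx0] at h1
    rw [le_div_iff₀ hc]
    have h2 : x ⬝ᵥ y ≤ c⁻¹ * g := by linarith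
    have h3 := mul_le_mul_of_nonneg_left h2 hc.le
    have h4 : c * (c⁻¹ * g) = g := by field_simp
    nlinarith [h3, h4]

end Helpers

section Blk
variable {n₁ n₂ : Type*} [Fintype n₁] [Fintype n₂] [DecidableEq n₁] [DecidableEq n₂]

private lemma elim_comp_eq (v : n₁ ⊕ n₂ → ℝ) : v = Sum.elim (v ∘ Sum.inl) (v ∘ Sum.inr) := by
  funext i; cases i <;> rfl

private lemma smul_elim (t : ℝ) (a : n₁ → ℝ) (b : n₂ → ℝ) :
    t • Sum.elim a b = Sum.elim (t • a) (t • b) := by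
  funext i; cases i <;> rfl

private lemma elim_dot (a c : n₁ → ℝ) (b d : n₂ → ℝ) :
    Sum.elim a b ⬝ᵥ Sum.elim c d = a ⬝ᵥ c + b ⬝ᵥ d := by
  simp [dotProduct, Fintype.sum_sum_type]

private lemma blockdiag_posdef {A : Matrix n₁ n₁ ℝ} {B : Matrix n₂ n₂ ℝ}
    (hA : A.PosDef) (hB : B.PosDef) : (Matrix.fromBlocks A 0 0 B).PosDef := by
  refine Matrix.PosDef.of_dotProduct_mulVec_pos ?_ ?_
  · show _ = _
    rw [Matrix.conjTranspose_eq_transpose_of_trivial, Matrix.fromBlocks_transpose]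
    rw [← Matrix.conjTranspose_eq_transpose_of_trivial A,
      ← Matrix.conjTranspose_eq_transpose_of_trivial B, hA.1, hB.1]
    simp
  · intro x hx
    rw [elim_comp_eq x]
    set a := x ∘ Sum.inl; set b := x ∘ Sum.inr
    rw [Matrix.fromBlocks_mulVec]
    simp only [Matrix.zero_mulVec, add_zero, zero_add]
    have hstar : star (Sum.elim a b) = Sum.elim a b := by simp
    rw [hstar, elim_dot]
    rw [Sum.elim_comp_inl, Sum.elim_comp_inr]
    have hab : a ≠ 0 ∨ b ≠ 0 := by
      by_contra h
      push_neg at h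
      apply hx
      funext i
      cases i with
      | inl i => exact congrFun h.1 i
      | inr i => exact congrFun h.2 i
    rcases hab with h | h
    · have h1 := hA.dotProduct_mulVec_pos h
      have h2 := hB.posSemidef.dotProduct_mulVec_nonneg b
      simp only [star_trivial] at h1 h2
      linarith
    · have h1 := hA.posSemidef.dotProduct_mulVec_nonneg a
      have h2 := hB.dotProduct_mulVec_pos h
      simp only [star_trivial] at h1 h2
      linarith

private lemma blockdiag_inv {A : Matrix n₁ n₁ ℝ} {B : Matrix n₂ n₂ ℝ}
    (hA : IsUnit A.det) (hB : IsUnit B.det) :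
    (Matrix.fromBlocks A 0 0 B)⁻¹ = Matrix.fromBlocks A⁻¹ 0 0 B⁻¹ := by
  apply Matrix.inv_eq_right_inv
  rw [Matrix.fromBlocks_multiply]
  simp [Matrix.mul_nonsing_inv _ hA, Matrix.mul_nonsing_inv _ hB, ← Matrix.fromBlocks_one]

private lemma posdef_transpose_mul_self {m : Type*} [Fintype m] [DecidableEq m]
    (L : Matrix m m ℝ) (hL : IsUnit L.det) : (Lᵀ * L).PosDef := by
  refine Matrix.PosDef.of_dotProduct_mulVec_pos ?_ ?_
  · show _ = _
    rw [Matrix.conjTranspose_eq_transpose_of_trivial, Matrix.transpose_mul,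
      Matrix.transpose_transpose]
  · intro x hx
    have key : star x ⬝ᵥ (Lᵀ * L) *ᵥ x = (L *ᵥ x) ⬝ᵥ (L *ᵥ x) := by
      rw [star_trivial, ← Matrix.mulVec_mulVec, Matrix.dotProduct_mulVec,
        ← Matrix.mulVec_transpose, Matrix.transpose_transpose]
    rw [key]
    have hLx : L *ᵥ x ≠ 0 := by
      intro h0
      apply hx
      have := congrArg (fun y => L⁻¹ *ᵥ y) h0
      simpa [Matrix.mulVec_mulVec, Matrix.nonsing_inv_mul _ hL] using this
    have hnn : (0:ℝ) ≤ (L *ᵥ x) ⬝ᵥ (L *ᵥ x) :=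
      Finset.sum_nonneg fun i _ => mul_self_nonneg _
    rcases lt_or_eq_of_le hnn with h | h
    · exact h
    · exact absurd (dotProduct_self_eq_zero.mp h.symm) hLx

end Blk

/-- Theorem 3.1: eigenvalue bounds for the block diagonally preconditioned
saddle point system arising in weak-constraint 4D-Var. -/
theorem block_diag_preconditioner_eigenvalue_bounds
    (m q : ℕ) (hm : 0 < m) (hq : 0 < q)
    (D Dhat : Matrix (Fin m) (Fin m) ℝ) (R Rhat : Matrix (Fin q) (Fin q) ℝ)
    (L Lhat : Matrix (Fin m) (Fin m) ℝ) (H : Matrix (Fin q) (Fin m) ℝ)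
    (hD : D.PosDef) (hDhat : Dhat.PosDef) (hR : R.PosDef) (hRhat : Rhat.PosDef)
    (hL : IsUnit L.det) (hLhat : IsUnit Lhat.det)
    (S Stilde Shat : Matrix (Fin m) (Fin m) ℝ)
    (hSdef : S = Lᵀ * D⁻¹ * L + Hᵀ * R⁻¹ * H)
    (hStdef : Stilde = Lᵀ * D⁻¹ * L)
    (hShdef : Shat = Lhatᵀ * D⁻¹ * Lhat)
    (hS : S.PosDef) (hSt : Stilde.PosDef) (hSh : Shat.PosDef)
    (lD LD lR LR lS LS lL LL : ℝ)
    (hlD : 0 < lD) (hLD : 0 < LD) (hlR : 0 < lR) (hLR : 0 < LR)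
    (hlS : 0 < lS) (hLS : 0 < LS) (hlL : 0 < lL) (hLL : 0 < LL)
    -- every eigenvalue of D̂⁻¹D lies in [lD, LD]
    (hDint : ∀ (μ : ℝ) (v : Fin m → ℝ), v ≠ 0 → (Dhat⁻¹ * D) *ᵥ v = μ • v →
      μ ∈ Icc lD LD)
    -- every eigenvalue of R̂⁻¹R lies in [lR, LR]
    (hRint : ∀ (μ : ℝ) (v : Fin q → ℝ), v ≠ 0 → (Rhat⁻¹ * R) *ᵥ v = μ • v →
      μ ∈ Icc lR LR)
    -- every eigenvalue of S̃⁻¹S lies in [lS, LS]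
    (hSint : ∀ (μ : ℝ) (v : Fin m → ℝ), v ≠ 0 → (Stilde⁻¹ * S) *ᵥ v = μ • v →
      μ ∈ Icc lS LS)
    -- every eigenvalue of (L̂ᵀL̂)⁻¹(LᵀL) lies in [lL, LL]
    (hLint : ∀ (μ : ℝ) (v : Fin m → ℝ), v ≠ 0 →
      ((Lhatᵀ * Lhat)⁻¹ * (Lᵀ * L)) *ᵥ v = μ • v → μ ∈ Icc lL LL)
    -- extreme eigenvalues of D and its spectral condition number
    (dmin dmax : ℝ)
    (hdmin : IsLeast {μ : ℝ | ∃ v : Fin m → ℝ, v ≠ 0 ∧ D *ᵥ v = μ • v} dmin)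
    (hdmax : IsGreatest {μ : ℝ | ∃ v : Fin m → ℝ, v ≠ 0 ∧ D *ᵥ v = μ • v} dmax)
    (lPhi LPhi κD : ℝ)
    (hlPhi : lPhi = min lD lR) (hLPhi : LPhi = max LD LR) (hκD : κD = dmax / dmin) :
    ∀ (lam : ℂ) (v : ((Fin m ⊕ Fin q) ⊕ Fin m) → ℂ), v ≠ 0 →
      ((Matrix.fromBlocks (Matrix.fromBlocks D 0 0 R) (Matrix.fromRows L H)
          (Matrix.fromCols Lᵀ Hᵀ) 0).map (fun x : ℝ => (x : ℂ))) *ᵥ v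
        = lam • (((Matrix.fromBlocks (Matrix.fromBlocks Dhat 0 0 Rhat) 0 0 Shat).map
            (fun x : ℝ => (x : ℂ))) *ᵥ v) →
      lam.im = 0 ∧
        lam.re ∈
          Icc ((lPhi - Real.sqrt (lPhi ^ 2 + 4 * LPhi * LS * LL * κD)) / 2)
              ((LPhi - Real.sqrt (LPhi ^ 2 + 4 * lPhi * lS * lL / κD)) / 2)
            ∪ Icc lPhi LPhi
            ∪ Icc ((lPhi + Real.sqrt (lPhi ^ 2 + 4 * lPhi * lS * lL / κD)) / 2)
                ((LPhi + Real.sqrt (LPhi ^ 2 + 4 * LPhi * LS * LL * κD)) / 2) := by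
  intro lam v hv heig
  rw [← Matrix.transpose_fromRows] at heig
  set Φm : Matrix (Fin m ⊕ Fin q) (Fin m ⊕ Fin q) ℝ := Matrix.fromBlocks D 0 0 R with hΦm
  set Φh : Matrix (Fin m ⊕ Fin q) (Fin m ⊕ Fin q) ℝ := Matrix.fromBlocks Dhat 0 0 Rhat with hΦh
  set Bm : Matrix (Fin m ⊕ Fin q) (Fin m) ℝ := Matrix.fromRows L H with hBm
  set bigA : Matrix ((Fin m ⊕ Fin q) ⊕ Fin m) ((Fin m ⊕ Fin q) ⊕ Fin m) ℝ :=
    Matrix.fromBlocks Φm Bm Bmᵀ 0 with hbigA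
  set bigP : Matrix ((Fin m ⊕ Fin q) ⊕ Fin m) ((Fin m ⊕ Fin q) ⊕ Fin m) ℝ :=
    Matrix.fromBlocks Φh 0 0 Shat with hbigP
  -- basic symmetry facts
  have hDt : Dᵀ = D := real_herm_transpose hD.1
  have hRt : Rᵀ = R := real_herm_transpose hR.1
  have hSht : Shatᵀ = Shat := real_herm_transpose hSh.1
  have hΦmP : Φm.PosDef := blockdiag_posdef hD hR
  have hΦhP : Φh.PosDef := blockdiag_posdef hDhat hRhat
  have hPbig : bigP.PosDef := blockdiag_posdef hΦhP hSh
  have hΦmt : Φmᵀ = Φm := real_herm_transpose hΦmP.1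
  have hΦht : Φhᵀ = Φh := real_herm_transpose hΦhP.1
  have hAt : bigAᵀ = bigA := by
    rw [hbigA, Matrix.fromBlocks_transpose, Matrix.transpose_transpose, hΦmt,
      Matrix.transpose_zero]
  have hPt : bigPᵀ = bigP := real_herm_transpose hPbig.1
  -- determinant units
  have hDdet : IsUnit D.det := hD.det_pos.ne'.isUnit
  have hRdet : IsUnit R.det := hR.det_pos.ne'.isUnit
  have hDhdet : IsUnit Dhat.det := hDhat.det_pos.ne'.isUnit
  have hRhdet : IsUnit Rhat.det := hRhat.det_pos.ne'.isUnit
  -- STEP 1 : the eigenvalue is real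
  set a : ((Fin m ⊕ Fin q) ⊕ Fin m) → ℝ := fun i => (v i).re with ha
  set b : ((Fin m ⊕ Fin q) ⊕ Fin m) → ℝ := fun i => (v i).im with hb
  have hsA := star_dot_real bigA hAt v
  have hsP := star_dot_real bigP hPt v
  have hab : a ≠ 0 ∨ b ≠ 0 := by
    by_contra h
    push_neg at h
    apply hv
    funext i
    have h1 := congrFun h.1 i
    have h2 := congrFun h.2 i
    simp only [ha, hb, Pi.zero_apply] at h1 h2
    exact Complex.ext h1 h2
  have hrP : (0:ℝ) < a ⬝ᵥ bigP *ᵥ a + b ⬝ᵥ bigP *ᵥ b := by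
    have h1 := hPbig.posSemidef.dotProduct_mulVec_nonneg a
    have h2 := hPbig.posSemidef.dotProduct_mulVec_nonneg b
    simp only [star_trivial] at h1 h2
    rcases hab with h | h
    · have := hPbig.dotProduct_mulVec_pos h; simp only [star_trivial] at this; linarith only [this, h2]
    · have := hPbig.dotProduct_mulVec_pos h; simp only [star_trivial] at this; linarith only [this, h1]
  have heq : ((a ⬝ᵥ bigA *ᵥ a + b ⬝ᵥ bigA *ᵥ b : ℝ) : ℂ)
      = lam * ((a ⬝ᵥ bigP *ᵥ a + b ⬝ᵥ bigP *ᵥ b : ℝ) : ℂ) := by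
    rw [← hsA, ← hsP, heig, dotProduct_smul, smul_eq_mul]
  have him : lam.im = 0 := by
    have h0 := congrArg Complex.im heq
    simp only [Complex.ofReal_im, Complex.mul_im, Complex.ofReal_re] at h0
    have : lam.im * (a ⬝ᵥ bigP *ᵥ a + b ⬝ᵥ bigP *ᵥ b) = 0 := by linarith only [h0]
    exact (mul_eq_zero.mp this).resolve_right hrP.ne'
  refine ⟨him, ?_⟩
  simp only [Set.mem_union, Set.mem_Icc]
  set t : ℝ := lam.re with hts
  have hlam : lam = (t : ℂ) := by
    apply Complex.ext
    · simp [hts]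
    · simp [him]
  -- STEP 2 : a real eigenvector
  have heiga : bigA *ᵥ a = t • (bigP *ᵥ a) := by
    funext i
    have h0 := congrFun heig i
    rw [hlam] at h0
    have h1 := congrArg Complex.re h0
    rw [mulVec_map_re] at h1
    simpa [Pi.smul_apply, smul_eq_mul, Complex.mul_re, mulVec_map_re, mulVec_map_im,
      ha, hb] using h1
  have heigb : bigA *ᵥ b = t • (bigP *ᵥ b) := by
    funext i
    have h0 := congrFun heig i
    rw [hlam] at h0
    have h1 := congrArg Complex.im h0
    rw [mulVec_map_im] at h1
    simpa [Pi.smul_apply, smul_eq_mul, Complex.mul_im, mulVec_map_re, mulVec_map_im,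
      ha, hb] using h1
  obtain ⟨w, hw0, hweig⟩ : ∃ w : ((Fin m ⊕ Fin q) ⊕ Fin m) → ℝ,
      w ≠ 0 ∧ bigA *ᵥ w = t • (bigP *ᵥ w) := by
    rcases hab with h | h
    · exact ⟨a, h, heiga⟩
    · exact ⟨b, h, heigb⟩
  -- STEP 3 : block decomposition
  set x : (Fin m ⊕ Fin q) → ℝ := w ∘ Sum.inl with hx
  set p : Fin m → ℝ := w ∘ Sum.inr with hp
  have hwel : w = Sum.elim x p := elim_comp_eq w
  have hAw : bigA *ᵥ w = Sum.elim (Φm *ᵥ x + Bm *ᵥ p) (Bmᵀ *ᵥ x) := by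
    rw [hbigA, Matrix.fromBlocks_mulVec, ← hx, ← hp]
    simp [Matrix.zero_mulVec]
  have hPw : bigP *ᵥ w = Sum.elim (Φh *ᵥ x) (Shat *ᵥ p) := by
    rw [hbigP, Matrix.fromBlocks_mulVec, ← hx, ← hp]
    simp [Matrix.zero_mulVec]
  rw [hAw, hPw] at hweig
  have E1 : Φm *ᵥ x + Bm *ᵥ p = t • (Φh *ᵥ x) := by
    funext i
    have h0 := congrFun hweig (Sum.inl i)
    simpa using h0
  have E2 : Bmᵀ *ᵥ x = t • (Shat *ᵥ p) := by
    funext i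
    have h0 := congrFun hweig (Sum.inr i)
    simpa using h0
  -- nonzero components
  have hBminj : ∀ pp : Fin m → ℝ, Bm *ᵥ pp = 0 → pp = 0 := by
    intro pp h0
    have hLpp : L *ᵥ pp = 0 := by
      funext i
      have := congrFun h0 (Sum.inl i)
      rw [hBm, Matrix.fromRows_mulVec] at this
      simpa using this
    have := congrArg (fun y => L⁻¹ *ᵥ y) hLpp
    simpa [Matrix.mulVec_mulVec, Matrix.nonsing_inv_mul _ hL] using this
  have hxne : x ≠ 0 := by
    intro h0
    rw [h0] at E1
    rw [Matrix.mulVec_zero, Matrix.mulVec_zero, zero_add, smul_zero] at E1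
    have hp0 := hBminj p E1
    apply hw0
    rw [hwel, h0, hp0]
    funext i; cases i <;> rfl
  -- scalar quantities
  set a0 := x ⬝ᵥ Φm *ᵥ x with ha0
  set b0 := x ⬝ᵥ Φh *ᵥ x with hb0
  set s0 := p ⬝ᵥ Shat *ᵥ p with hs0
  have hb0pos : 0 < b0 := by
    have := hΦhP.dotProduct_mulVec_pos hxne; simpa [star_trivial, hb0] using this
  have ha0pos : 0 < a0 := by
    have := hΦmP.dotProduct_mulVec_pos hxne; simpa [star_trivial, ha0] using this
  have hs0nn : 0 ≤ s0 := by
    have := hSh.posSemidef.dotProduct_mulVec_nonneg p; simpa [star_trivial, hs0] using this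
  have hc0 : x ⬝ᵥ Bm *ᵥ p = t * s0 := by
    rw [Matrix.dotProduct_mulVec, ← Matrix.mulVec_transpose, E2, smul_dotProduct,
      smul_eq_mul, ← sym_dot_shift Shat hSht, ← hs0]
  have hmain : a0 + t * s0 = t * b0 := by
    have h0 := congrArg (fun y => x ⬝ᵥ y) E1
    simpa [dotProduct_add, dotProduct_smul, smul_eq_mul, ha0, hb0, hc0] using h0
  -- Rayleigh bounds for the pencils
  have rΦ : ∀ z : (Fin m ⊕ Fin q) → ℝ,
      lPhi * (z ⬝ᵥ Φh *ᵥ z) ≤ z ⬝ᵥ Φm *ᵥ z ∧ z ⬝ᵥ Φm *ᵥ z ≤ LPhi * (z ⬝ᵥ Φh *ᵥ z) := by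
    apply rayleigh_bounds Φm Φh hΦmP.1 hΦhP lPhi LPhi
    intro μ u hu hequ
    have hΦhinv : Φh⁻¹ = Matrix.fromBlocks Dhat⁻¹ 0 0 Rhat⁻¹ := blockdiag_inv hDhdet hRhdet
    have hprod : Φh⁻¹ * Φm = Matrix.fromBlocks (Dhat⁻¹ * D) 0 0 (Rhat⁻¹ * R) := by
      rw [hΦhinv, hΦm, Matrix.fromBlocks_multiply]
      simp
    rw [hprod, elim_comp_eq u, Matrix.fromBlocks_mulVec, smul_elim] at hequ
    simp only [Matrix.zero_mulVec, add_zero, zero_add] at hequ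
    have e1 : (Dhat⁻¹ * D) *ᵥ (u ∘ Sum.inl) = μ • (u ∘ Sum.inl) := by
      funext i; exact congrFun hequ (Sum.inl i)
    have e2 : (Rhat⁻¹ * R) *ᵥ (u ∘ Sum.inr) = μ • (u ∘ Sum.inr) := by
      funext i; exact congrFun hequ (Sum.inr i)
    have hu12 : u ∘ Sum.inl ≠ 0 ∨ u ∘ Sum.inr ≠ 0 := by
      by_contra h
      push_neg at h
      apply hu
      funext i
      cases i with
      | inl i => exact congrFun h.1 i
      | inr i => exact congrFun h.2 i
    rcases hu12 with h | h
    · have := hDint μ _ h e1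
      rw [Set.mem_Icc] at this
      exact ⟨le_trans (hlPhi ▸ min_le_left _ _) this.1,
        le_trans this.2 (hLPhi ▸ le_max_left _ _)⟩
    · have := hRint μ _ h e2
      rw [Set.mem_Icc] at this
      exact ⟨le_trans (hlPhi ▸ min_le_right _ _) this.1,
        le_trans this.2 (hLPhi ▸ le_max_right _ _)⟩
  have rS : ∀ z : Fin m → ℝ,
      lS * (z ⬝ᵥ Stilde *ᵥ z) ≤ z ⬝ᵥ S *ᵥ z ∧ z ⬝ᵥ S *ᵥ z ≤ LS * (z ⬝ᵥ Stilde *ᵥ z) := by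
    apply rayleigh_bounds S Stilde hS.1 hSt lS LS
    intro μ u hu hequ
    have := hSint μ u hu hequ
    rw [Set.mem_Icc] at this
    exact this
  have rL : ∀ z : Fin m → ℝ,
      lL * (z ⬝ᵥ (Lhatᵀ * Lhat) *ᵥ z) ≤ z ⬝ᵥ (Lᵀ * L) *ᵥ z ∧
        z ⬝ᵥ (Lᵀ * L) *ᵥ z ≤ LL * (z ⬝ᵥ (Lhatᵀ * Lhat) *ᵥ z) := by
    apply rayleigh_bounds (Lᵀ * L) (Lhatᵀ * Lhat) (posdef_transpose_mul_self L hL).1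
      (posdef_transpose_mul_self Lhat hLhat) lL LL
    intro μ u hu hequ
    have := hLint μ u hu hequ
    rw [Set.mem_Icc] at this
    exact this
  have rD : ∀ z : Fin m → ℝ,
      dmin * (z ⬝ᵥ D⁻¹ *ᵥ z) ≤ z ⬝ᵥ z ∧ z ⬝ᵥ z ≤ dmax * (z ⬝ᵥ D⁻¹ *ᵥ z) := by
    intro z
    have h0 := rayleigh_bounds 1 D⁻¹ Matrix.isHermitian_one hD.inv dmin dmax ?_ z
    · rwa [Matrix.one_mulVec] at h0
    · intro μ u hu hequ
      rw [Matrix.nonsing_inv_nonsing_inv D hDdet, Matrix.mul_one] at hequ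
      exact ⟨hdmin.2 ⟨u, hu, hequ⟩, hdmax.2 ⟨u, hu, hequ⟩⟩
  -- positivity of the extreme eigenvalues of D
  have hdminpos : 0 < dmin := by
    obtain ⟨v0, hv0, he0⟩ := hdmin.1
    have h1 := hD.dotProduct_mulVec_pos hv0
    simp only [star_trivial] at h1
    rw [he0, dotProduct_smul, smul_eq_mul] at h1
    have h2 : 0 < v0 ⬝ᵥ v0 := by
      have hnn : (0:ℝ) ≤ v0 ⬝ᵥ v0 := Finset.sum_nonneg fun i _ => mul_self_nonneg _
      rcases lt_or_eq_of_le hnn with h | h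
      · exact h
      · exact absurd (dotProduct_self_eq_zero.mp h.symm) hv0
    nlinarith only [h1, h2]
  have hdmaxge : dmin ≤ dmax := hdmin.2 hdmax.1
  have hdmaxpos : 0 < dmax := lt_of_lt_of_le hdminpos hdmaxge
  have hκpos : 0 < κD := by rw [hκD]; positivity
  have hlPhipos : 0 < lPhi := by rw [hlPhi]; exact lt_min hlD hlR
  have hLPhipos : 0 < LPhi := by rw [hLPhi]; exact lt_of_lt_of_le hLD (le_max_left _ _)
  have hlLePhi : lPhi ≤ LPhi := by
    have h0 := rΦ x
    nlinarith only [h0.1, h0.2, hb0pos]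
  -- the S vs Shat bound
  have R5 : ∀ z : Fin m → ℝ, (lS * lL / κD) * (z ⬝ᵥ Shat *ᵥ z) ≤ z ⬝ᵥ S *ᵥ z ∧
      z ⬝ᵥ S *ᵥ z ≤ (LS * LL * κD) * (z ⬝ᵥ Shat *ᵥ z) := by
    intro z
    have hSt_form : z ⬝ᵥ Stilde *ᵥ z = (L *ᵥ z) ⬝ᵥ D⁻¹ *ᵥ (L *ᵥ z) := by
      rw [hStdef, ← Matrix.mulVec_mulVec, ← Matrix.mulVec_mulVec, Matrix.dotProduct_mulVec,
        Matrix.vecMul_transpose]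
    have hSh_form : z ⬝ᵥ Shat *ᵥ z = (Lhat *ᵥ z) ⬝ᵥ D⁻¹ *ᵥ (Lhat *ᵥ z) := by
      rw [hShdef, ← Matrix.mulVec_mulVec, ← Matrix.mulVec_mulVec, Matrix.dotProduct_mulVec,
        Matrix.vecMul_transpose]
    have hLL_form : z ⬝ᵥ (Lᵀ * L) *ᵥ z = (L *ᵥ z) ⬝ᵥ (L *ᵥ z) := by
      rw [← Matrix.mulVec_mulVec, Matrix.dotProduct_mulVec, Matrix.vecMul_transpose]
    have hLh_form : z ⬝ᵥ (Lhatᵀ * Lhat) *ᵥ z = (Lhat *ᵥ z) ⬝ᵥ (Lhat *ᵥ z) := by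
      rw [← Matrix.mulVec_mulVec, Matrix.dotProduct_mulVec, Matrix.vecMul_transpose]
    have hrD1 := rD (L *ᵥ z)
    have hrD2 := rD (Lhat *ᵥ z)
    have hrL := rL z
    have hrS := rS z
    rw [hLL_form, hLh_form] at hrL
    rw [hSt_form] at hrS
    have hγnn : 0 ≤ (L *ᵥ z) ⬝ᵥ D⁻¹ *ᵥ (L *ᵥ z) := by
      have := hD.inv.posSemidef.dotProduct_mulVec_nonneg (L *ᵥ z); simpa [star_trivial] using this
    have hδnn : 0 ≤ (Lhat *ᵥ z) ⬝ᵥ D⁻¹ *ᵥ (Lhat *ᵥ z) := by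
      have := hD.inv.posSemidef.dotProduct_mulVec_nonneg (Lhat *ᵥ z); simpa [star_trivial] using this
    rw [hSh_form]
    set α := (L *ᵥ z) ⬝ᵥ (L *ᵥ z) with hα
    set β := (Lhat *ᵥ z) ⬝ᵥ (Lhat *ᵥ z) with hβ
    set γ := (L *ᵥ z) ⬝ᵥ D⁻¹ *ᵥ (L *ᵥ z) with hγ
    set δ := (Lhat *ᵥ z) ⬝ᵥ D⁻¹ *ᵥ (Lhat *ᵥ z) with hδ
    constructor
    · have hbound : lS * lL / κD = lS * lL * dmin / dmax := by
        rw [hκD]; field_simp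
      rw [hbound, div_mul_eq_mul_div, div_le_iff₀ hdmaxpos]
      have s1 : lS * γ ≤ z ⬝ᵥ S *ᵥ z := hrS.1
      have s2 : lL * β ≤ α := hrL.1
      have s3 : α ≤ dmax * γ := hrD1.2
      have s4 : dmin * δ ≤ β := hrD2.1
      nlinarith only [mul_le_mul_of_nonneg_left s4 (mul_nonneg hlS.le hlL.le),
        mul_le_mul_of_nonneg_left s2 hlS.le,
        mul_le_mul_of_nonneg_left s3 hlS.le,
        mul_le_mul_of_nonneg_left s1 hdmaxpos.le]
    · have hbound : LS * LL * κD = LS * LL * dmax / dmin := by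
        rw [hκD]; ring
      rw [hbound, div_mul_eq_mul_div, le_div_iff₀ hdminpos]
      have s1 : z ⬝ᵥ S *ᵥ z ≤ LS * γ := hrS.2
      have s2 : α ≤ LL * β := hrL.2
      have s3 : dmin * γ ≤ α := hrD1.1
      have s4 : β ≤ dmax * δ := hrD2.2
      nlinarith only [mul_le_mul_of_nonneg_left s4 (mul_nonneg hLS.le hLL.le),
        mul_le_mul_of_nonneg_left s2 hLS.le,
        mul_le_mul_of_nonneg_left s3 hLS.le,
        mul_le_mul_of_nonneg_left s1 hdminpos.le]
  -- the Schur complement identity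
  have hΦminv : Φm⁻¹ = Matrix.fromBlocks D⁻¹ 0 0 R⁻¹ := blockdiag_inv hDdet hRdet
  have hKey : Bmᵀ * Φm⁻¹ * Bm = S := by
    rw [hBm, Matrix.transpose_fromRows, hΦminv, hSdef]
    rw [Matrix.fromCols_mul_fromBlocks]
    simp only [Matrix.mul_zero, Matrix.zero_mul, add_zero, zero_add]
    rw [Matrix.fromCols_mul_fromRows]
  have hgS : (Bm *ᵥ p) ⬝ᵥ Φm⁻¹ *ᵥ (Bm *ᵥ p) = p ⬝ᵥ S *ᵥ p := by
    conv_rhs => rw [← hKey, ← Matrix.mulVec_mulVec, ← Matrix.mulVec_mulVec,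
      Matrix.dotProduct_mulVec p, Matrix.vecMul_transpose]
  have hR5 := R5 p
  -- abbreviations used in all outer cases
  rcases lt_trichotomy t 0 with htneg | htzero | htpos
  · -- negative eigenvalues : first interval
    have hpne : p ≠ 0 := by
      intro h0
      have hs00 : s0 = 0 := by rw [hs0, h0]; simp
      rw [hs00] at hmain
      nlinarith only [hmain, hb0pos, ha0pos, htneg]
    have hs0pos : 0 < s0 := by
      have := hSh.dotProduct_mulVec_pos hpne; simpa [star_trivial, hs0] using this
    set M := Φm - t • Φh with hM
    have hMt : Mᵀ = M := by
      rw [hM, Matrix.transpose_sub, Matrix.transpose_smul, hΦht, hΦmt]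
    have hMx : M *ᵥ x = -(Bm *ᵥ p) := by
      rw [hM, Matrix.sub_mulVec, Matrix.smul_mulVec, ← E1]
      abel
    set c := (LPhi - t) / LPhi with hc
    set C := (lPhi - t) / lPhi with hCd
    have hcpos : 0 < c := div_pos (by linarith only [htneg, hLPhipos]) hLPhipos
    have hcC : c ≤ C := by
      rw [hc, hCd, div_le_div_iff₀ hLPhipos hlPhipos]
      nlinarith only [hlLePhi, htneg, hlPhipos, hLPhipos]
    have hCpos : 0 < C := lt_of_lt_of_le hcpos hcC
    have hform : ∀ z, z ⬝ᵥ M *ᵥ z = z ⬝ᵥ Φm *ᵥ z - t * (z ⬝ᵥ Φh *ᵥ z) := by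
      intro z
      rw [hM, Matrix.sub_mulVec, dotProduct_sub, Matrix.smul_mulVec,
        dotProduct_smul, smul_eq_mul]
    have hlow : ∀ z, c * (z ⬝ᵥ Φm *ᵥ z) ≤ z ⬝ᵥ M *ᵥ z := by
      intro z
      have hz := rΦ z
      rw [hform z, hc, div_mul_eq_mul_div, div_le_iff₀ hLPhipos]
      nlinarith only [hz.2, mul_le_mul_of_nonneg_left hz.2 (by linarith only [htneg] : (0:ℝ) ≤ -t)]
    have hup : ∀ z, z ⬝ᵥ M *ᵥ z ≤ C * (z ⬝ᵥ Φm *ᵥ z) := by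
      intro z
      have hz := rΦ z
      rw [hform z, hCd, div_mul_eq_mul_div, le_div_iff₀ hlPhipos]
      nlinarith only [hz.1, mul_le_mul_of_nonneg_left hz.1 (by linarith only [htneg] : (0:ℝ) ≤ -t)]
    obtain ⟨hg1, hg2⟩ := inv_form_bounds Φm hΦmP hΦmt M hMt c C hcpos hcC hlow hup
      x (-(Bm *ᵥ p)) hMx
    have hgneg : (-(Bm *ᵥ p)) ⬝ᵥ Φm⁻¹ *ᵥ (-(Bm *ᵥ p)) = p ⬝ᵥ S *ᵥ p := by
      rw [Matrix.mulVec_neg, dotProduct_neg, neg_dotProduct, neg_neg, hgS]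
    have hxy : x ⬝ᵥ (-(Bm *ᵥ p)) = (-t) * s0 := by
      rw [dotProduct_neg, hc0]; ring
    rw [hgneg, hxy] at hg1 hg2
    set gS := p ⬝ᵥ S *ᵥ p with hgSd
    -- h2' : (-t)*(LPhi - t) ≤ LPhi*(LS*LL*κD)
    have hKup : gS ≤ LS * LL * κD * s0 := hR5.2
    have hKlo : lS * lL / κD * s0 ≤ gS := hR5.1
    have htc : (-t) * c ≤ LS * LL * κD := by
      rw [le_div_iff₀ hcpos] at hg2
      have h0 : (-t) * c * s0 ≤ LS * LL * κD * s0 := by nlinarith only [hg2, hKup]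
      exact le_of_mul_le_mul_right (by nlinarith only [h0]) hs0pos
    have hcL : c * LPhi = LPhi - t := by rw [hc]; field_simp
    have h2' : (-t) * (LPhi - t) ≤ LPhi * (LS * LL * κD) := by
      have := mul_le_mul_of_nonneg_right htc hLPhipos.le
      calc (-t) * (LPhi - t) = (-t) * c * LPhi := by rw [mul_assoc, hcL]
        _ ≤ LS * LL * κD * LPhi := this
        _ = LPhi * (LS * LL * κD) := by ring
    have htC : lS * lL / κD ≤ (-t) * C := by
      rw [div_le_iff₀ hCpos] at hg1
      have h0 : lS * lL / κD * s0 ≤ (-t) * C * s0 := by nlinarith only [hg1, hKlo]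
      exact le_of_mul_le_mul_right (by nlinarith only [h0]) hs0pos
    have hCL : C * lPhi = lPhi - t := by rw [hCd]; field_simp
    have h1' : lPhi * (lS * lL / κD) ≤ (-t) * (lPhi - t) := by
      have := mul_le_mul_of_nonneg_right htC hlPhipos.le
      calc lPhi * (lS * lL / κD) = lS * lL / κD * lPhi := by ring
        _ ≤ (-t) * C * lPhi := this
        _ = (-t) * (lPhi - t) := by rw [mul_assoc, hCL]
    left; left
    constructor
    · have hsq : (lPhi - 2 * t) ^ 2 ≤ lPhi ^ 2 + 4 * LPhi * LS * LL * κD := by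
        nlinarith only [h2', mul_le_mul_of_nonneg_left (by linarith only [hlLePhi] : lPhi - t ≤ LPhi - t)
          (by linarith only [htneg] : (0:ℝ) ≤ -t)]
      have h0 : lPhi - 2 * t = Real.sqrt ((lPhi - 2 * t) ^ 2) :=
        (Real.sqrt_sq (by linarith only [htneg, hlPhipos])).symm
      have h1 := Real.sqrt_le_sqrt hsq
      rw [← h0] at h1
      linarith only [h1]
    · have ering : 4 * lPhi * lS * lL / κD = 4 * (lPhi * (lS * lL / κD)) := by ring
      have hsq : LPhi ^ 2 + 4 * lPhi * lS * lL / κD ≤ (LPhi - 2 * t) ^ 2 := by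
        rw [ering]
        nlinarith only [h1', mul_le_mul_of_nonneg_left (by linarith only [hlLePhi] : lPhi - t ≤ LPhi - t)
          (by linarith only [htneg] : (0:ℝ) ≤ -t)]
      have h1 := Real.sqrt_le_sqrt hsq
      rw [Real.sqrt_sq (by linarith only [htneg, hLPhipos])] at h1
      linarith only [h1]
  · -- zero is impossible
    exfalso
    rw [htzero] at hmain
    simp only [zero_mul] at hmain
    linarith only [hmain, ha0pos]
  · by_cases hle : t ≤ LPhi
    · -- middle interval
      left; right
      refine ⟨?_, hle⟩
      nlinarith only [hmain, (rΦ x).1, hb0pos, hs0nn, htpos]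
    · -- positive outer interval
      push_neg at hle
      have hpne : p ≠ 0 := by
        intro h0
        have hs00 : s0 = 0 := by rw [hs0, h0]; simp
        rw [hs00] at hmain
        nlinarith only [hmain, (rΦ x).2, hb0pos, hle]
      have hs0pos : 0 < s0 := by
        have := hSh.dotProduct_mulVec_pos hpne; simpa [star_trivial, hs0] using this
      set M := t • Φh - Φm with hM
      have hMt : Mᵀ = M := by
        rw [hM, Matrix.transpose_sub, Matrix.transpose_smul, hΦht, hΦmt]
      have hMx : M *ᵥ x = Bm *ᵥ p := by
        rw [hM, Matrix.sub_mulVec, Matrix.smul_mulVec, ← E1]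
        abel
      set c := (t - LPhi) / LPhi with hc
      set C := (t - lPhi) / lPhi with hCd
      have hcpos : 0 < c := div_pos (by linarith only [hle]) hLPhipos
      have hcC : c ≤ C := by
        rw [hc, hCd, div_le_div_iff₀ hLPhipos hlPhipos]
        nlinarith only [hlLePhi, htpos, hlPhipos, hLPhipos]
      have hCpos : 0 < C := lt_of_lt_of_le hcpos hcC
      have hform : ∀ z, z ⬝ᵥ M *ᵥ z = t * (z ⬝ᵥ Φh *ᵥ z) - z ⬝ᵥ Φm *ᵥ z := by
        intro z
        rw [hM, Matrix.sub_mulVec, dotProduct_sub, Matrix.smul_mulVec,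
          dotProduct_smul, smul_eq_mul]
      have hlow : ∀ z, c * (z ⬝ᵥ Φm *ᵥ z) ≤ z ⬝ᵥ M *ᵥ z := by
        intro z
        have hz := rΦ z
        rw [hform z, hc, div_mul_eq_mul_div, div_le_iff₀ hLPhipos]
        nlinarith only [hz.2, mul_le_mul_of_nonneg_left hz.2 htpos.le]
      have hup : ∀ z, z ⬝ᵥ M *ᵥ z ≤ C * (z ⬝ᵥ Φm *ᵥ z) := by
        intro z
        have hz := rΦ z
        rw [hform z, hCd, div_mul_eq_mul_div, le_div_iff₀ hlPhipos]
        nlinarith only [hz.1, mul_le_mul_of_nonneg_left hz.1 htpos.le]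
      obtain ⟨hg1, hg2⟩ := inv_form_bounds Φm hΦmP hΦmt M hMt c C hcpos hcC hlow hup
        x (Bm *ᵥ p) hMx
      rw [hgS, hc0] at hg1 hg2
      set gS := p ⬝ᵥ S *ᵥ p with hgSd
      have hKup : gS ≤ LS * LL * κD * s0 := hR5.2
      have hKlo : lS * lL / κD * s0 ≤ gS := hR5.1
      have htc : t * c ≤ LS * LL * κD := by
        rw [le_div_iff₀ hcpos] at hg2
        have h0 : t * c * s0 ≤ LS * LL * κD * s0 := by nlinarith only [hg2, hKup]
        exact le_of_mul_le_mul_right (by nlinarith only [h0]) hs0pos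
      have hcL : c * LPhi = t - LPhi := by rw [hc]; field_simp
      have h2 : t * (t - LPhi) ≤ LPhi * (LS * LL * κD) := by
        have := mul_le_mul_of_nonneg_right htc hLPhipos.le
        calc t * (t - LPhi) = t * c * LPhi := by rw [mul_assoc, hcL]
          _ ≤ LS * LL * κD * LPhi := this
          _ = LPhi * (LS * LL * κD) := by ring
      have htC : lS * lL / κD ≤ t * C := by
        rw [div_le_iff₀ hCpos] at hg1
        have h0 : lS * lL / κD * s0 ≤ t * C * s0 := by nlinarith only [hg1, hKlo]
        exact le_of_mul_le_mul_right (by nlinarith only [h0]) hs0pos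
      have hCL : C * lPhi = t - lPhi := by rw [hCd]; field_simp
      have h1 : lPhi * (lS * lL / κD) ≤ t * (t - lPhi) := by
        have := mul_le_mul_of_nonneg_right htC hlPhipos.le
        calc lPhi * (lS * lL / κD) = lS * lL / κD * lPhi := by ring
          _ ≤ t * C * lPhi := this
          _ = t * (t - lPhi) := by rw [mul_assoc, hCL]
      right
      constructor
      · have ering : 4 * lPhi * lS * lL / κD = 4 * (lPhi * (lS * lL / κD)) := by ring
        have hsq : lPhi ^ 2 + 4 * lPhi * lS * lL / κD ≤ (2 * t - lPhi) ^ 2 := by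
          rw [ering]
          nlinarith only [h1]
        have h0 := Real.sqrt_le_sqrt hsq
        rw [Real.sqrt_sq (by linarith only [hle, hlLePhi, hlPhipos] : (0:ℝ) ≤ 2 * t - lPhi)] at h0
        linarith only [h0]
      · have hsq : (2 * t - LPhi) ^ 2 ≤ LPhi ^ 2 + 4 * LPhi * LS * LL * κD := by
          nlinarith only [h2]
        have h0 := Real.sqrt_le_sqrt hsq
        rw [Real.sqrt_sq (by linarith only [hle, hLPhipos] : (0:ℝ) ≤ 2 * t - LPhi)] at h0
        linarith only [h0]
end

section
/- Let n, m be positive integers with m ≤ n. Let Φ ∈ ℝ^{n×n} be symmetric positive definite, Ψ ∈ ℝ^{m×n} have full row rank, and set S = ΨΦ⁻¹Ψᵀ. Let Φ̂ ∈ ℝ^{n×n} and Ŝ ∈ ℝ^{m×m} be symmetric positive definite. Let δ and Δ be the minimum and maximum eigenvalues of Φ̂⁻¹Φ, and let φ and Φ' be the minimum and maximum eigenvalues of Ŝ⁻¹S. Consider the saddle point matrix A = [[Φ, Ψᵀ], [Ψ, 0]] ∈ ℝ^{(n+m)×(n+m)} and the block diagonal preconditioner P = blkdiag(Φ̂, Ŝ).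 Then every eigenvalue λ of P⁻¹A satisfies λ ∈ [ (δ − √(δ² + 4ΔΦ'))/2 , (Δ − √(Δ² + 4δφ))/2 ] ∪ [δ, Δ] ∪ [ (δ + √(δ² + 4δφ))/2 , (Δ + √(Δ² + 4ΔΦ'))/2 ]. -/
open Matrix
-- quadratic root helper lemmas
lemma quad_neg_le {a c lam : ℝ} (ha : 0 < a) (hc : 0 < c) (hlam : lam < 0)
    (h : 0 ≤ lam^2 - a*lam - c) : lam ≤ (a - Real.sqrt (a^2 + 4*c))/2 := by
  have harg : (0:ℝ) ≤ a^2 + 4*c := by positivity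
  have hr2 : (Real.sqrt (a^2+4*c))^2 = a^2+4*c := Real.sq_sqrt harg
  have hr0 : 0 ≤ Real.sqrt (a^2+4*c) := Real.sqrt_nonneg _
  nlinarith [sq_nonneg (2*lam - a + Real.sqrt (a^2+4*c)), sq_nonneg (2*lam - a - Real.sqrt (a^2+4*c))]

lemma quad_pos_ge {a c lam : ℝ} (ha : 0 < a) (hc : 0 < c) (hlam : 0 < lam)
    (h : 0 ≤ lam^2 - a*lam - c) : (a + Real.sqrt (a^2 + 4*c))/2 ≤ lam := by
  have harg : (0:ℝ) ≤ a^2 + 4*c := by positivity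
  have hr2 : (Real.sqrt (a^2+4*c))^2 = a^2+4*c := Real.sq_sqrt harg
  have hr0 : 0 ≤ Real.sqrt (a^2+4*c) := Real.sqrt_nonneg _
  nlinarith [sq_nonneg (2*lam - a + Real.sqrt (a^2+4*c)), sq_nonneg (2*lam - a - Real.sqrt (a^2+4*c))]

lemma quad_between {a c lam : ℝ} (ha : 0 < a) (hc : 0 < c)
    (h : lam^2 - a*lam - c ≤ 0) :
    (a - Real.sqrt (a^2 + 4*c))/2 ≤ lam ∧ lam ≤ (a + Real.sqrt (a^2 + 4*c))/2 := by
  have harg : (0:ℝ) ≤ a^2 + 4*c := by positivity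
  have hr2 : (Real.sqrt (a^2+4*c))^2 = a^2+4*c := Real.sq_sqrt harg
  have hr0 : 0 ≤ Real.sqrt (a^2+4*c) := Real.sqrt_nonneg _
  constructor
  · nlinarith [sq_nonneg (2*lam - a + Real.sqrt (a^2+4*c)), sq_nonneg (2*lam - a - Real.sqrt (a^2+4*c))]
  · nlinarith [sq_nonneg (2*lam - a + Real.sqrt (a^2+4*c)), sq_nonneg (2*lam - a - Real.sqrt (a^2+4*c))]

lemma sqrt_mono_aux {a b c : ℝ} (ha : 0 < a) (hab : a ≤ b) (hc : 0 < c) :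
    a - Real.sqrt (a^2 + 4*c) ≤ b - Real.sqrt (b^2 + 4*c) := by
  have ha2 : (0:ℝ) ≤ a^2 + 4*c := by positivity
  have hb2 : (0:ℝ) ≤ b^2 + 4*c := by positivity
  have ht2 : (Real.sqrt (a^2+4*c))^2 = a^2+4*c := Real.sq_sqrt ha2
  have hu2 : (Real.sqrt (b^2+4*c))^2 = b^2+4*c := Real.sq_sqrt hb2
  have ht0 : 0 ≤ Real.sqrt (a^2+4*c) := Real.sqrt_nonneg _
  have hu0 : 0 ≤ Real.sqrt (b^2+4*c) := Real.sqrt_nonneg _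
  have hta : a ≤ Real.sqrt (a^2+4*c) := by nlinarith
  have hub : b ≤ Real.sqrt (b^2+4*c) := by nlinarith
  nlinarith [mul_nonneg ht0 hu0]

lemma vecMul_symm {k : ℕ} {M : Matrix (Fin k) (Fin k) ℝ} (h : M.IsHermitian) (v : Fin k → ℝ) :
    v ᵥ* M = M *ᵥ v := by
  have ht : Mᵀ = M := by
    rw [← Matrix.conjTranspose_eq_transpose_of_trivial]; exact h
  conv_lhs => rw [← ht]
  exact Matrix.vecMul_transpose M v

-- inverse comparison: M ⪯ c • N implies N⁻¹ ⪯ c • M⁻¹ (as quadratic forms)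
lemma inv_form_le {k : ℕ} {M N : Matrix (Fin k) (Fin k) ℝ} (hM : M.PosDef) (hN : N.PosDef)
    {c : ℝ} (hc : 0 < c) (h : ∀ z, z ⬝ᵥ (M *ᵥ z) ≤ c * (z ⬝ᵥ (N *ᵥ z))) :
    ∀ w, w ⬝ᵥ (N⁻¹ *ᵥ w) ≤ c * (w ⬝ᵥ (M⁻¹ *ᵥ w)) := by
  intro w
  have hMdet : IsUnit M.det := isUnit_iff_ne_zero.mpr hM.det_pos.ne'
  have hNdet : IsUnit N.det := isUnit_iff_ne_zero.mpr hN.det_pos.ne'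
  set u : Fin k → ℝ := M⁻¹ *ᵥ w with hu
  set z : Fin k → ℝ := c⁻¹ • (N⁻¹ *ᵥ w) with hz
  have hMu : M *ᵥ u = w := by
    rw [hu, Matrix.mulVec_mulVec, Matrix.mul_nonsing_inv _ hMdet, Matrix.one_mulVec]
  have hNz : N *ᵥ (N⁻¹ *ᵥ w) = w := by
    rw [Matrix.mulVec_mulVec, Matrix.mul_nonsing_inv _ hNdet, Matrix.one_mulVec]
  have key : (0:ℝ) ≤ (z - u) ⬝ᵥ (M *ᵥ (z - u)) := by
    simpa using hM.posSemidef.dotProduct_mulVec_nonneg (z - u)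
  have expand : (z - u) ⬝ᵥ (M *ᵥ (z - u))
      = z ⬝ᵥ (M *ᵥ z) - 2 * (z ⬝ᵥ w) + u ⬝ᵥ w := by
    have huMz : u ⬝ᵥ (M *ᵥ z) = z ⬝ᵥ w := by
      rw [Matrix.dotProduct_mulVec, vecMul_symm hM.isHermitian, hMu, dotProduct_comm]
    have hzMu : z ⬝ᵥ (M *ᵥ u) = z ⬝ᵥ w := by rw [hMu]
    rw [Matrix.mulVec_sub, dotProduct_sub, sub_dotProduct, sub_dotProduct]
    rw [huMz, hzMu]
    have : u ⬝ᵥ (M *ᵥ u) = u ⬝ᵥ w := by rw [hMu]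
    rw [this]; ring
  have hzw : z ⬝ᵥ w = c⁻¹ * (w ⬝ᵥ (N⁻¹ *ᵥ w)) := by
    rw [hz, smul_dotProduct, smul_eq_mul, dotProduct_comm]
  have hzNz : z ⬝ᵥ (N *ᵥ z) = c⁻¹ * (c⁻¹ * (w ⬝ᵥ (N⁻¹ *ᵥ w))) := by
    conv_lhs => rw [show N *ᵥ z = c⁻¹ • w by rw [hz, Matrix.mulVec_smul, hNz]]
    rw [dotProduct_smul, smul_eq_mul, hzw]
  have h1 : z ⬝ᵥ (M *ᵥ z) ≤ c⁻¹ * (w ⬝ᵥ (N⁻¹ *ᵥ w)) := by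
    have := h z
    rw [hzNz] at this
    calc z ⬝ᵥ (M *ᵥ z) ≤ c * (c⁻¹ * (c⁻¹ * (w ⬝ᵥ (N⁻¹ *ᵥ w)))) := this
      _ = c⁻¹ * (w ⬝ᵥ (N⁻¹ *ᵥ w)) := by rw [← mul_assoc, mul_inv_cancel₀ hc.ne', one_mul]
  have huw : u ⬝ᵥ w = w ⬝ᵥ (M⁻¹ *ᵥ w) := by rw [hu, dotProduct_comm]
  have hc' : c⁻¹ * (w ⬝ᵥ (N⁻¹ *ᵥ w)) ≤ w ⬝ᵥ (M⁻¹ *ᵥ w) := by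
    rw [expand, hzw, huw] at key
    linarith
  calc w ⬝ᵥ (N⁻¹ *ᵥ w) = c * (c⁻¹ * (w ⬝ᵥ (N⁻¹ *ᵥ w))) := by
        rw [← mul_assoc, mul_inv_cancel₀ hc.ne', one_mul]
    _ ≤ c * (w ⬝ᵥ (M⁻¹ *ᵥ w)) := by
        exact mul_le_mul_of_nonneg_left hc' hc.le
lemma herm_form_bounds {k : ℕ} (B : Matrix (Fin k) (Fin k) ℝ) (hB : B.IsHermitian) (a b : ℝ)
    (hab : ∀ μ : ℝ, (∃ w : Fin k → ℝ, w ≠ 0 ∧ B *ᵥ w = μ • w) → a ≤ μ ∧ μ ≤ b) :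
    ∀ x : Fin k → ℝ, a * (x ⬝ᵥ x) ≤ x ⬝ᵥ (B *ᵥ x) ∧ x ⬝ᵥ (B *ᵥ x) ≤ b * (x ⬝ᵥ x) := by
  intro x
  have heig : ∀ i, a ≤ hB.eigenvalues i ∧ hB.eigenvalues i ≤ b := by
    intro i
    refine hab _ ⟨⇑(hB.eigenvectorBasis i), ?_, hB.mulVec_eigenvectorBasis i⟩
    have hne := hB.eigenvectorBasis.orthonormal.ne_zero i
    intro h
    apply hne
    ext j
    exact congrFun h j
  have hUU : (hB.eigenvectorUnitary : Matrix (Fin k) (Fin k) ℝ)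
      * star (hB.eigenvectorUnitary : Matrix (Fin k) (Fin k) ℝ) = 1 :=
    Matrix.mem_unitaryGroup_iff.mp hB.eigenvectorUnitary.2
  set c : Fin k → ℝ := star (hB.eigenvectorUnitary : Matrix (Fin k) (Fin k) ℝ) *ᵥ x with hc
  have h1 : x ᵥ* (hB.eigenvectorUnitary : Matrix (Fin k) (Fin k) ℝ) = c := by
    rw [hc, Matrix.star_eq_conjTranspose, Matrix.conjTranspose_eq_transpose_of_trivial,
      ← Matrix.vecMul_transpose, Matrix.transpose_transpose]
  have hform : x ⬝ᵥ (B *ᵥ x) = ∑ i, hB.eigenvalues i * (c i)^2 := by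
    conv_lhs => rw [hB.spectral_theorem, Unitary.conjStarAlgAut_apply, ← mulVec_mulVec, ← mulVec_mulVec]
    rw [Matrix.dotProduct_mulVec, h1]
    simp only [dotProduct, Matrix.mulVec_diagonal, Function.comp, RCLike.ofReal_real_eq_id, id_eq]
    exact Finset.sum_congr rfl fun i _ => by ring
  have hnorm : x ⬝ᵥ x = ∑ i, (c i)^2 := by
    calc x ⬝ᵥ x = x ⬝ᵥ (1 *ᵥ x) := by rw [Matrix.one_mulVec]
      _ = ∑ i, (c i)^2 := by
          rw [← hUU, ← mulVec_mulVec, Matrix.dotProduct_mulVec, h1]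
          simp [dotProduct, pow_two, ← hc]
  constructor
  · rw [hform, hnorm, Finset.mul_sum]
    exact Finset.sum_le_sum fun i _ => by nlinarith [(heig i).1, sq_nonneg (c i)]
  · rw [hform, hnorm, Finset.mul_sum]
    exact Finset.sum_le_sum fun i _ => by nlinarith [(heig i).2, sq_nonneg (c i)]

open scoped MatrixOrder in
lemma pencil_form_bounds {k : ℕ} (A P : Matrix (Fin k) (Fin k) ℝ)
    (hA : A.IsHermitian) (hP : P.PosDef) (a b : ℝ)
    (hab : ∀ μ : ℝ, (∃ v : Fin k → ℝ, v ≠ 0 ∧ (P⁻¹ * A) *ᵥ v = μ • v) → a ≤ μ ∧ μ ≤ b) :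
    ∀ x : Fin k → ℝ, a * (x ⬝ᵥ (P *ᵥ x)) ≤ x ⬝ᵥ (A *ᵥ x)
      ∧ x ⬝ᵥ (A *ᵥ x) ≤ b * (x ⬝ᵥ (P *ᵥ x)) := by
  set C : Matrix (Fin k) (Fin k) ℝ := CFC.sqrt P with hCdef
  have hCherm : C.IsHermitian := (CFC.sqrt_nonneg P).posSemidef.1
  have hC2 : C * C = P := CFC.sqrt_mul_sqrt_self P hP.posSemidef.nonneg
  have hCdet : IsUnit C.det := by
    have : C.det * C.det = P.det := by rw [← Matrix.det_mul, hC2]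
    have hPdet := hP.det_pos
    refine isUnit_iff_ne_zero.mpr fun h => ?_
    rw [h, mul_zero] at this
    exact hPdet.ne this
  have hCiC : C⁻¹ * C = 1 := Matrix.nonsing_inv_mul _ hCdet
  have hCCi : C * C⁻¹ = 1 := Matrix.mul_nonsing_inv _ hCdet
  have hCiherm : (C⁻¹).IsHermitian := by
    unfold Matrix.IsHermitian
    rw [Matrix.conjTranspose_nonsing_inv, hCherm]
  set B : Matrix (Fin k) (Fin k) ℝ := C⁻¹ * A * C⁻¹ with hBdef
  have hBherm : B.IsHermitian := by
    have : B = C⁻¹ * A * (C⁻¹)ᴴ := by rw [hCiherm]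
    rw [this]
    exact Matrix.isHermitian_mul_mul_conjTranspose _ hA
  have hPinv : P⁻¹ = C⁻¹ * C⁻¹ := by rw [← hC2, Matrix.mul_inv_rev]
  have hBev : ∀ μ : ℝ, (∃ w : Fin k → ℝ, w ≠ 0 ∧ B *ᵥ w = μ • w) → a ≤ μ ∧ μ ≤ b := by
    rintro μ ⟨w, hw, hBw⟩
    refine hab μ ⟨C⁻¹ *ᵥ w, ?_, ?_⟩
    · intro h
      apply hw
      have : C *ᵥ (C⁻¹ *ᵥ w) = w := by rw [mulVec_mulVec, hCCi, one_mulVec]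
      rw [h, Matrix.mulVec_zero] at this
      exact this.symm
    · have : (P⁻¹ * A) *ᵥ (C⁻¹ *ᵥ w) = C⁻¹ *ᵥ (B *ᵥ w) := by
        simp only [mulVec_mulVec, hPinv, hBdef, Matrix.mul_assoc]
      rw [this, hBw, Matrix.mulVec_smul]
  have hBform := herm_form_bounds B hBherm a b hBev
  intro x
  have key1 : (C *ᵥ x) ⬝ᵥ (C *ᵥ x) = x ⬝ᵥ (P *ᵥ x) := by
    rw [Matrix.dotProduct_mulVec, vecMul_symm hCherm, mulVec_mulVec, hC2, dotProduct_comm]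
  have key2 : (C *ᵥ x) ⬝ᵥ (B *ᵥ (C *ᵥ x)) = x ⬝ᵥ (A *ᵥ x) := by
    have hBC : B * C = C⁻¹ * A := by
      rw [hBdef, Matrix.mul_assoc, hCiC, Matrix.mul_one]
    rw [mulVec_mulVec, hBC, ← mulVec_mulVec, Matrix.dotProduct_mulVec, vecMul_symm hCiherm,
      mulVec_mulVec, hCiC, one_mulVec]
  have := hBform (C *ᵥ x)
  rw [key1, key2] at this
  exact this

lemma transpose_mulVec_inj {m n : ℕ} (Ψ : Matrix (Fin m) (Fin n) ℝ) (hrank : Ψ.rank = m) :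
    ∀ y : Fin m → ℝ, Ψᵀ *ᵥ y = 0 → y = 0 := by
  intro y hy
  have h1 : Ψᵀ.rank = m := by rw [Matrix.rank_transpose]; exact hrank
  have h2 := LinearMap.finrank_range_add_finrank_ker (Ψᵀ.mulVecLin)
  rw [show Module.finrank ℝ (LinearMap.range Ψᵀ.mulVecLin) = Ψᵀ.rank from rfl] at h2
  have h3 : Module.finrank ℝ (Fin m → ℝ) = m := by simp
  rw [h1, h3] at h2
  have h4 : Module.finrank ℝ (LinearMap.ker Ψᵀ.mulVecLin) = 0 := by omega
  have h5 : LinearMap.ker Ψᵀ.mulVecLin = ⊥ := Submodule.finrank_eq_zero.mp h4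
  have h6 : y ∈ LinearMap.ker Ψᵀ.mulVecLin := by
    rw [LinearMap.mem_ker, Matrix.mulVecLin_apply]; exact hy
  rw [h5] at h6
  simpa using h6

lemma pencil_eig_pos {k : ℕ} {A P : Matrix (Fin k) (Fin k) ℝ} (hA : A.PosDef) (hP : P.PosDef)
    {μ : ℝ} (h : ∃ v : Fin k → ℝ, v ≠ 0 ∧ (P⁻¹ * A) *ᵥ v = μ • v) : 0 < μ := by
  obtain ⟨v0, hv0, hve⟩ := h
  have hPdet : IsUnit P.det := isUnit_iff_ne_zero.mpr hP.det_pos.ne'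
  have h1 : A *ᵥ v0 = μ • (P *ᵥ v0) := by
    have := congrArg (fun u => P *ᵥ u) hve
    simpa [mulVec_mulVec, ← Matrix.mul_assoc, Matrix.mul_nonsing_inv _ hPdet,
      Matrix.mulVec_smul] using this
  have h2 : v0 ⬝ᵥ (A *ᵥ v0) = μ * (v0 ⬝ᵥ (P *ᵥ v0)) := by
    rw [h1, dotProduct_smul, smul_eq_mul]
  have p1 : 0 < v0 ⬝ᵥ (A *ᵥ v0) := by simpa using hA.dotProduct_mulVec_pos hv0
  have p2 : 0 < v0 ⬝ᵥ (P *ᵥ v0) := by simpa using hP.dotProduct_mulVec_pos hv0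
  nlinarith

lemma le_inv_mul {c A B : ℝ} (hc : 0 < c) (h : c * A ≤ B) : A ≤ c⁻¹ * B := by
  have := mul_le_mul_of_nonneg_left h (inv_pos.mpr hc).le
  rwa [← mul_assoc, inv_mul_cancel₀ hc.ne', one_mul] at this

lemma isHermitian_smul_real {k : ℕ} {A : Matrix (Fin k) (Fin k) ℝ} (h : A.IsHermitian)
    (c : ℝ) : (c • A).IsHermitian := by
  unfold Matrix.IsHermitian at *
  rw [Matrix.conjTranspose_smul, star_trivial, h]

open Matrix Set

set_option maxHeartbeats 1600000 in
/-- Eigenvalue bounds for a general block diagonally preconditioned saddle point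
matrix (the classical result quoted in the proof of Theorem 3.1). -/
theorem general_block_diag_saddle_point_eigenvalue_bounds
    (n m : ℕ) (hn : 0 < n) (hm : 0 < m) (hmn : m ≤ n)
    (Φ Φhat : Matrix (Fin n) (Fin n) ℝ) (Ψ : Matrix (Fin m) (Fin n) ℝ)
    (hΦ : Φ.PosDef) (hΦhat : Φhat.PosDef)
    (hrank : Ψ.rank = m)
    (S Shat : Matrix (Fin m) (Fin m) ℝ)
    (hSdef : S = Ψ * Φ⁻¹ * Ψᵀ) (hShat : Shat.PosDef)
    (δ Δ φ Φ' : ℝ)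
    (hδ : IsLeast {μ : ℝ | ∃ v : Fin n → ℝ, v ≠ 0 ∧ (Φhat⁻¹ * Φ) *ᵥ v = μ • v} δ)
    (hΔ : IsGreatest {μ : ℝ | ∃ v : Fin n → ℝ, v ≠ 0 ∧ (Φhat⁻¹ * Φ) *ᵥ v = μ • v} Δ)
    (hφ : IsLeast {μ : ℝ | ∃ v : Fin m → ℝ, v ≠ 0 ∧ (Shat⁻¹ * S) *ᵥ v = μ • v} φ)
    (hΦ' : IsGreatest {μ : ℝ | ∃ v : Fin m → ℝ, v ≠ 0 ∧ (Shat⁻¹ * S) *ᵥ v = μ • v} Φ') :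
    ∀ (lam : ℝ) (v : (Fin n ⊕ Fin m) → ℝ), v ≠ 0 →
      (Matrix.fromBlocks Φ Ψᵀ Ψ 0) *ᵥ v
        = lam • ((Matrix.fromBlocks Φhat 0 0 Shat) *ᵥ v) →
      lam ∈
        Icc ((δ - Real.sqrt (δ ^ 2 + 4 * Δ * Φ')) / 2)
            ((Δ - Real.sqrt (Δ ^ 2 + 4 * δ * φ)) / 2)
          ∪ Icc δ Δ
          ∪ Icc ((δ + Real.sqrt (δ ^ 2 + 4 * δ * φ)) / 2)
              ((Δ + Real.sqrt (Δ ^ 2 + 4 * Δ * Φ')) / 2) := by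
  intro lam v hv heq
  classical
  simp only [Set.mem_union, Set.mem_Icc]
  have hΦhatdet : IsUnit Φhat.det := isUnit_iff_ne_zero.mpr hΦhat.det_pos.ne'
  set x : Fin n → ℝ := v ∘ Sum.inl with hxdef
  set y : Fin m → ℝ := v ∘ Sum.inr with hydef
  have E1 : Φ *ᵥ x + Ψᵀ *ᵥ y = lam • (Φhat *ᵥ x) := by
    funext i
    have h := congrFun heq (Sum.inl i)
    simpa [Matrix.fromBlocks_mulVec] using h
  have E2 : Ψ *ᵥ x = lam • (Shat *ᵥ y) := by
    funext j
    have h := congrFun heq (Sum.inr j)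
    simpa [Matrix.fromBlocks_mulVec] using h
  have hab1 : ∀ μ : ℝ, (∃ v' : Fin n → ℝ, v' ≠ 0 ∧ (Φhat⁻¹ * Φ) *ᵥ v' = μ • v') →
      δ ≤ μ ∧ μ ≤ Δ := fun μ hμ => ⟨hδ.2 hμ, hΔ.2 hμ⟩
  have hB1 := pencil_form_bounds Φ Φhat hΦ.1 hΦhat δ Δ hab1
  have hΨinj := transpose_mulVec_inj Ψ hrank
  have hSherm : S.IsHermitian := by
    rw [hSdef, show Ψᵀ = Ψᴴ from (Matrix.conjTranspose_eq_transpose_of_trivial Ψ).symm]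
    exact Matrix.isHermitian_mul_mul_conjTranspose Ψ hΦ.inv.1
  have hquadS : ∀ z : Fin m → ℝ, z ⬝ᵥ (S *ᵥ z) = (Ψᵀ *ᵥ z) ⬝ᵥ (Φ⁻¹ *ᵥ (Ψᵀ *ᵥ z)) := by
    intro z
    rw [hSdef, ← mulVec_mulVec, ← mulVec_mulVec, Matrix.dotProduct_mulVec]
    congr 1
    rw [← Matrix.mulVec_transpose]
  have hSpd : S.PosDef := by
    refine Matrix.PosDef.of_dotProduct_mulVec_pos hSherm fun z hz => ?_
    have hwz : Ψᵀ *ᵥ z ≠ 0 := fun h => hz (hΨinj z h)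
    have h2 := hΦ.inv.dotProduct_mulVec_pos hwz
    simpa [hquadS z] using h2
  have hab2 : ∀ μ : ℝ, (∃ v' : Fin m → ℝ, v' ≠ 0 ∧ (Shat⁻¹ * S) *ᵥ v' = μ • v') →
      φ ≤ μ ∧ μ ≤ Φ' := fun μ hμ => ⟨hφ.2 hμ, hΦ'.2 hμ⟩
  have hB2 := pencil_form_bounds S Shat hSherm hShat φ Φ' hab2
  have hδΔ : δ ≤ Δ := hΔ.2 hδ.1
  have hδ0 : 0 < δ := pencil_eig_pos hΦ hΦhat hδ.1
  have hΔ0 : 0 < Δ := lt_of_lt_of_le hδ0 hδΔ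
  have hφ0 : 0 < φ := pencil_eig_pos hSpd hShat hφ.1
  have hφΦ' : φ ≤ Φ' := hΦ'.2 hφ.1
  have hΦ'0 : 0 < Φ' := lt_of_lt_of_le hφ0 hφΦ'
  by_cases hy : y = 0
  · -- y = 0 : lam is an eigenvalue of the (1,1) pencil
    have hx : x ≠ 0 := by
      intro hx
      apply hv
      funext i
      cases i with
      | inl i => exact congrFun hx i
      | inr j => exact congrFun hy j
    have hΦx : Φ *ᵥ x = lam • (Φhat *ᵥ x) := by
      have h2 := E1
      rw [hy, Matrix.mulVec_zero, add_zero] at h2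
      exact h2
    have hmem : lam ∈ {μ : ℝ | ∃ v' : Fin n → ℝ, v' ≠ 0 ∧ (Φhat⁻¹ * Φ) *ᵥ v' = μ • v'} := by
      refine ⟨x, hx, ?_⟩
      rw [← mulVec_mulVec, hΦx, Matrix.mulVec_smul, mulVec_mulVec,
        Matrix.nonsing_inv_mul _ hΦhatdet, one_mulVec]
    exact Or.inl (Or.inr ⟨hδ.2 hmem, hΔ.2 hmem⟩)
  · have hw : Ψᵀ *ᵥ y ≠ 0 := fun h => hy (hΨinj y h)
    have hq : 0 < y ⬝ᵥ (Shat *ᵥ y) := by simpa using hShat.dotProduct_mulVec_pos hy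
    have hs_low : φ * (y ⬝ᵥ (Shat *ᵥ y)) ≤ y ⬝ᵥ (S *ᵥ y) := (hB2 y).1
    have hs_high : y ⬝ᵥ (S *ᵥ y) ≤ Φ' * (y ⬝ᵥ (Shat *ᵥ y)) := (hB2 y).2
    have hsw : (Ψᵀ *ᵥ y) ⬝ᵥ (Φ⁻¹ *ᵥ (Ψᵀ *ᵥ y)) = y ⬝ᵥ (S *ᵥ y) := (hquadS y).symm
    have hxw : x ⬝ᵥ (Ψᵀ *ᵥ y) = lam * (y ⬝ᵥ (Shat *ᵥ y)) := by
      rw [Matrix.dotProduct_mulVec, Matrix.vecMul_transpose, E2, smul_dotProduct, smul_eq_mul,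
        dotProduct_comm]
    rcases lt_or_ge lam δ with hcase | hge
    · -- lam < δ : negative interval
      set M : Matrix (Fin n) (Fin n) ℝ := Φ - lam • Φhat with hMdef
      have hMherm : M.IsHermitian :=
        hΦ.1.sub (isHermitian_smul_real hΦhat.1 lam)
      have hMquad : ∀ z, z ⬝ᵥ (M *ᵥ z)
          = z ⬝ᵥ (Φ *ᵥ z) - lam * (z ⬝ᵥ (Φhat *ᵥ z)) := by
        intro z
        rw [hMdef, Matrix.sub_mulVec, dotProduct_sub, Matrix.smul_mulVec,
          dotProduct_smul, smul_eq_mul]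
      have hMpd : M.PosDef := by
        refine Matrix.PosDef.of_dotProduct_mulVec_pos hMherm fun z hz => ?_
        have h1 := (hB1 z).1
        have hp2 : 0 < z ⬝ᵥ (Φhat *ᵥ z) := by simpa using hΦhat.dotProduct_mulVec_pos hz
        have h3 : 0 < z ⬝ᵥ (M *ᵥ z) := by rw [hMquad z]; nlinarith
        simpa using h3
      have hMdet : IsUnit M.det := isUnit_iff_ne_zero.mpr hMpd.det_pos.ne'
      have hMx : M *ᵥ x = -(Ψᵀ *ᵥ y) := by
        rw [hMdef, Matrix.sub_mulVec, Matrix.smul_mulVec, ← E1]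
        abel
      have hMinvw : M⁻¹ *ᵥ (Ψᵀ *ᵥ y) = -x := by
        have hM2 : M *ᵥ (-x) = Ψᵀ *ᵥ y := by rw [Matrix.mulVec_neg, hMx, neg_neg]
        rw [← hM2, mulVec_mulVec, Matrix.nonsing_inv_mul _ hMdet, one_mulVec]
      have hwMw : (Ψᵀ *ᵥ y) ⬝ᵥ (M⁻¹ *ᵥ (Ψᵀ *ᵥ y)) = -(lam * (y ⬝ᵥ (Shat *ᵥ y))) := by
        rw [hMinvw, dotProduct_neg, dotProduct_comm, hxw]
      have hlam0 : lam < 0 := by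
        have hpos : 0 < (Ψᵀ *ᵥ y) ⬝ᵥ (M⁻¹ *ᵥ (Ψᵀ *ᵥ y)) := by
          simpa using hMpd.inv.dotProduct_mulVec_pos hw
        rw [hwMw] at hpos
        nlinarith
      have hc1 : 0 < (δ - lam)/δ := div_pos (by linarith) hδ0
      have hc2 : 0 < (Δ - lam)/Δ := div_pos (by linarith) hΔ0
      have hub : ∀ z, z ⬝ᵥ (M *ᵥ z) ≤ ((δ - lam)/δ) * (z ⬝ᵥ (Φ *ᵥ z)) := by
        intro z
        rw [div_mul_eq_mul_div, le_div_iff₀ hδ0, hMquad z]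
        have h1 := (hB1 z).1
        nlinarith [mul_le_mul_of_nonneg_left h1 (neg_nonneg.mpr hlam0.le)]
      have hlow := inv_form_le hMpd hΦ hc1 hub (Ψᵀ *ᵥ y)
      rw [hsw, hwMw] at hlow
      have ineq1 : 0 ≤ lam^2 - δ*lam - δ*φ := by
        have h5 : δ * (y ⬝ᵥ (S *ᵥ y)) ≤ (δ - lam) * (-(lam * (y ⬝ᵥ (Shat *ᵥ y)))) := by
          calc δ * (y ⬝ᵥ (S *ᵥ y))
              ≤ δ * ((δ - lam)/δ * (-(lam * (y ⬝ᵥ (Shat *ᵥ y))))) :=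
                mul_le_mul_of_nonneg_left hlow hδ0.le
            _ = (δ - lam) * (-(lam * (y ⬝ᵥ (Shat *ᵥ y)))) := by
                field_simp
        nlinarith [mul_le_mul_of_nonneg_left hs_low hδ0.le, hq]
      have hub2 : ∀ z, z ⬝ᵥ (Φ *ᵥ z) ≤ ((Δ - lam)/Δ)⁻¹ * (z ⬝ᵥ (M *ᵥ z)) := by
        intro z
        refine le_inv_mul hc2 ?_
        rw [div_mul_eq_mul_div, div_le_iff₀ hΔ0, hMquad z]
        have h2 := (hB1 z).2
        nlinarith [mul_le_mul_of_nonneg_left h2 (neg_nonneg.mpr hlam0.le)]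
      have hupp := inv_form_le hΦ hMpd (inv_pos.mpr hc2) hub2 (Ψᵀ *ᵥ y)
      rw [hsw, hwMw] at hupp
      have ineq2 : lam^2 - Δ*lam - Δ*Φ' ≤ 0 := by
        have h5 : (Δ - lam) * (-(lam * (y ⬝ᵥ (Shat *ᵥ y)))) ≤ Δ * (y ⬝ᵥ (S *ᵥ y)) := by
          have h6 : (Δ - lam)/Δ * (-(lam * (y ⬝ᵥ (Shat *ᵥ y))))
              ≤ (Δ - lam)/Δ * (((Δ - lam)/Δ)⁻¹ * (y ⬝ᵥ (S *ᵥ y))) :=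
            mul_le_mul_of_nonneg_left hupp hc2.le
          rw [← mul_assoc, mul_inv_cancel₀ hc2.ne', one_mul] at h6
          calc (Δ - lam) * (-(lam * (y ⬝ᵥ (Shat *ᵥ y))))
              = Δ * ((Δ - lam)/Δ * (-(lam * (y ⬝ᵥ (Shat *ᵥ y))))) := by field_simp
            _ ≤ Δ * (y ⬝ᵥ (S *ᵥ y)) := mul_le_mul_of_nonneg_left h6 hΔ0.le
        nlinarith [mul_le_mul_of_nonneg_left hs_high hΔ0.le, hq]
      refine Or.inl (Or.inl ⟨?_, ?_⟩)
      · rw [show δ ^ 2 + 4 * Δ * Φ' = δ^2 + 4*(Δ*Φ') by ring]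
        have hqb := (quad_between hΔ0 (mul_pos hΔ0 hΦ'0) ineq2).1
        have hmono := sqrt_mono_aux hδ0 hδΔ (mul_pos hΔ0 hΦ'0)
        linarith
      · rw [show Δ ^ 2 + 4 * δ * φ = Δ^2 + 4*(δ*φ) by ring]
        have hqa := quad_neg_le hδ0 (mul_pos hδ0 hφ0) hlam0 ineq1
        have hmono := sqrt_mono_aux hδ0 hδΔ (mul_pos hδ0 hφ0)
        rw [show δ ^ 2 + 4 * (δ * φ) = δ^2 + 4*(δ*φ) by ring] at hqa
        linarith
    · rcases le_or_gt lam Δ with hle | hgt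
      · exact Or.inl (Or.inr ⟨hge, hle⟩)
      · -- lam > Δ : right interval
        have hlam0 : 0 < lam := lt_trans hΔ0 hgt
        set M : Matrix (Fin n) (Fin n) ℝ := lam • Φhat - Φ with hMdef
        have hMherm : M.IsHermitian :=
          Matrix.IsHermitian.sub (isHermitian_smul_real hΦhat.1 lam) hΦ.1
        have hMquad : ∀ z, z ⬝ᵥ (M *ᵥ z)
            = lam * (z ⬝ᵥ (Φhat *ᵥ z)) - z ⬝ᵥ (Φ *ᵥ z) := by
          intro z
          rw [hMdef, Matrix.sub_mulVec, dotProduct_sub, Matrix.smul_mulVec,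
            dotProduct_smul, smul_eq_mul]
        have hMpd : M.PosDef := by
          refine Matrix.PosDef.of_dotProduct_mulVec_pos hMherm fun z hz => ?_
          have h2 := (hB1 z).2
          have hp2 : 0 < z ⬝ᵥ (Φhat *ᵥ z) := by simpa using hΦhat.dotProduct_mulVec_pos hz
          have h3 : 0 < z ⬝ᵥ (M *ᵥ z) := by rw [hMquad z]; nlinarith
          simpa using h3
        have hMdet : IsUnit M.det := isUnit_iff_ne_zero.mpr hMpd.det_pos.ne'
        have hMx : M *ᵥ x = Ψᵀ *ᵥ y := by
          rw [hMdef, Matrix.sub_mulVec, Matrix.smul_mulVec, ← E1]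
          abel
        have hMinvw : M⁻¹ *ᵥ (Ψᵀ *ᵥ y) = x := by
          rw [← hMx, mulVec_mulVec, Matrix.nonsing_inv_mul _ hMdet, one_mulVec]
        have hwMw : (Ψᵀ *ᵥ y) ⬝ᵥ (M⁻¹ *ᵥ (Ψᵀ *ᵥ y)) = lam * (y ⬝ᵥ (Shat *ᵥ y)) := by
          rw [hMinvw, dotProduct_comm, hxw]
        have hc1 : 0 < (lam - δ)/δ := div_pos (by linarith) hδ0
        have hc2 : 0 < (lam - Δ)/Δ := div_pos (by linarith) hΔ0
        have hub : ∀ z, z ⬝ᵥ (M *ᵥ z) ≤ ((lam - δ)/δ) * (z ⬝ᵥ (Φ *ᵥ z)) := by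
          intro z
          rw [div_mul_eq_mul_div, le_div_iff₀ hδ0, hMquad z]
          have h1 := (hB1 z).1
          nlinarith [mul_le_mul_of_nonneg_left h1 hlam0.le]
        have hlow := inv_form_le hMpd hΦ hc1 hub (Ψᵀ *ᵥ y)
        rw [hsw, hwMw] at hlow
        have ineq1 : 0 ≤ lam^2 - δ*lam - δ*φ := by
          have h5 : δ * (y ⬝ᵥ (S *ᵥ y)) ≤ (lam - δ) * (lam * (y ⬝ᵥ (Shat *ᵥ y))) := by
            calc δ * (y ⬝ᵥ (S *ᵥ y))
                ≤ δ * ((lam - δ)/δ * (lam * (y ⬝ᵥ (Shat *ᵥ y)))) :=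
                  mul_le_mul_of_nonneg_left hlow hδ0.le
              _ = (lam - δ) * (lam * (y ⬝ᵥ (Shat *ᵥ y))) := by field_simp
          nlinarith [mul_le_mul_of_nonneg_left hs_low hδ0.le, hq]
        have hub2 : ∀ z, z ⬝ᵥ (Φ *ᵥ z) ≤ ((lam - Δ)/Δ)⁻¹ * (z ⬝ᵥ (M *ᵥ z)) := by
          intro z
          refine le_inv_mul hc2 ?_
          rw [div_mul_eq_mul_div, div_le_iff₀ hΔ0, hMquad z]
          have h2 := (hB1 z).2
          nlinarith [mul_le_mul_of_nonneg_left h2 hlam0.le]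
        have hupp := inv_form_le hΦ hMpd (inv_pos.mpr hc2) hub2 (Ψᵀ *ᵥ y)
        rw [hsw, hwMw] at hupp
        have ineq2 : lam^2 - Δ*lam - Δ*Φ' ≤ 0 := by
          have h5 : (lam - Δ) * (lam * (y ⬝ᵥ (Shat *ᵥ y))) ≤ Δ * (y ⬝ᵥ (S *ᵥ y)) := by
            have h6 : (lam - Δ)/Δ * (lam * (y ⬝ᵥ (Shat *ᵥ y)))
                ≤ (lam - Δ)/Δ * (((lam - Δ)/Δ)⁻¹ * (y ⬝ᵥ (S *ᵥ y))) :=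
              mul_le_mul_of_nonneg_left hupp hc2.le
            rw [← mul_assoc ((lam - Δ)/Δ) (((lam - Δ)/Δ)⁻¹) (y ⬝ᵥ (S *ᵥ y)),
              mul_inv_cancel₀ hc2.ne', one_mul] at h6
            calc (lam - Δ) * (lam * (y ⬝ᵥ (Shat *ᵥ y)))
                = Δ * ((lam - Δ)/Δ * (lam * (y ⬝ᵥ (Shat *ᵥ y)))) := by field_simp
              _ ≤ Δ * (y ⬝ᵥ (S *ᵥ y)) := mul_le_mul_of_nonneg_left h6 hΔ0.le
          nlinarith [mul_le_mul_of_nonneg_left hs_high hΔ0.le, hq]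
        refine Or.inr ⟨?_, ?_⟩
        · rw [show δ ^ 2 + 4 * δ * φ = δ^2 + 4*(δ*φ) by ring]
          exact quad_pos_ge hδ0 (mul_pos hδ0 hφ0) hlam0 ineq1
        · rw [show Δ ^ 2 + 4 * Δ * Φ' = Δ^2 + 4*(Δ*Φ') by ring]
          exact (quad_between hΔ0 (mul_pos hΔ0 hΦ'0) ineq2).2
end

section
/- Let m, q be positive integers. Let D ∈ ℝ^{m×m} and R ∈ ℝ^{q×q} be symmetric positive definite, let L, L̂ ∈ ℝ^{m×m} be invertible, and let H ∈ ℝ^{q×m}. Define S = LᵀD⁻¹L + HᵀR⁻¹H, S̃ = LᵀD⁻¹L, and Ŝ = L̂ᵀD⁻¹L̂. Suppose every eigenvalue of S̃⁻¹S lies in [λ_S, Λ_S] and every eigenvalue of (L̂ᵀL̂)⁻¹(LᵀL) lies in [λ_L, Λ_L], with all endpoints positive, and let κ(D) = λ_max(D)/λ_min(D) be the spectral condition number of D. Then for every nonzero vector x ∈ ℝ^m, the Rayleigh quotient (xᵀSx)/(xᵀŜx) lies in the interval [ λ_Sλ_L/κ(D) , Λ_SΛ_Lκ(D) ]. -/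
open Matrix Set

private lemma dot_tmul {n k : ℕ} (C : Matrix (Fin k) (Fin n) ℝ) (A : Matrix (Fin k) (Fin k) ℝ)
    (x : Fin n → ℝ) :
    x ⬝ᵥ ((Cᵀ * A * C) *ᵥ x) = (C *ᵥ x) ⬝ᵥ (A *ᵥ (C *ᵥ x)) := by
  rw [← mulVec_mulVec, ← mulVec_mulVec, dotProduct_mulVec x Cᵀ, vecMul_transpose]

private lemma dot_mul3 {n : ℕ} (U A : Matrix (Fin n) (Fin n) ℝ) (y : Fin n → ℝ) :
    y ⬝ᵥ ((U * A * Uᵀ) *ᵥ y) = (Uᵀ *ᵥ y) ⬝ᵥ (A *ᵥ (Uᵀ *ᵥ y)) := by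
  have := dot_tmul Uᵀ A y
  rwa [transpose_transpose] at this

private lemma quad_bound_herm {n : ℕ} {M : Matrix (Fin n) (Fin n) ℝ} (hM : M.IsHermitian)
    {a b : ℝ} (h : ∀ (μ : ℝ) (v : Fin n → ℝ), v ≠ 0 → M *ᵥ v = μ • v → μ ∈ Icc a b)
    (y : Fin n → ℝ) :
    a * (y ⬝ᵥ y) ≤ y ⬝ᵥ (M *ᵥ y) ∧ y ⬝ᵥ (M *ᵥ y) ≤ b * (y ⬝ᵥ y) := by
  have hev : ∀ i, hM.eigenvalues i ∈ Icc a b := fun i =>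
    h _ _ ((WithLp.ofLp_eq_zero 2).not.mpr (hM.eigenvectorBasis.orthonormal.ne_zero i)) (hM.mulVec_eigenvectorBasis i)
  set U : Matrix (Fin n) (Fin n) ℝ := (hM.eigenvectorUnitary : Matrix (Fin n) (Fin n) ℝ) with hU
  have hspec : M = U * diagonal hM.eigenvalues * Uᵀ := by
    have := hM.spectral_theorem
    simpa [RCLike.ofReal_real_eq_id, Function.comp_def, star_eq_conjTranspose,
      conjTranspose_eq_transpose_of_trivial] using this
  have hUU : U * Uᵀ = 1 := by
    have := (Matrix.mem_unitaryGroup_iff).mp hM.eigenvectorUnitary.2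
    simpa [star_eq_conjTranspose, conjTranspose_eq_transpose_of_trivial] using this
  have hdot : y ⬝ᵥ (M *ᵥ y) =
      (Uᵀ *ᵥ y) ⬝ᵥ (diagonal hM.eigenvalues *ᵥ (Uᵀ *ᵥ y)) := by
    conv_lhs => rw [hspec]
    exact dot_mul3 _ _ _
  have hyy : y ⬝ᵥ y = (Uᵀ *ᵥ y) ⬝ᵥ (Uᵀ *ᵥ y) := by
    have h1 := dot_mul3 U 1 y
    rw [mul_one, hUU, one_mulVec, one_mulVec] at h1
    exact h1
  have hdiag : (Uᵀ *ᵥ y) ⬝ᵥ (diagonal hM.eigenvalues *ᵥ (Uᵀ *ᵥ y)) =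
      ∑ i, hM.eigenvalues i * ((Uᵀ *ᵥ y) i)^2 := by
    simp only [dotProduct, mulVec_diagonal]
    congr 1; funext i; ring
  have hzz : (Uᵀ *ᵥ y) ⬝ᵥ (Uᵀ *ᵥ y) = ∑ i, ((Uᵀ *ᵥ y) i)^2 := by
    simp [dotProduct, sq]
  rw [hdot, hdiag, hyy, hzz]
  refine ⟨?_, ?_⟩ <;> rw [Finset.mul_sum] <;>
    exact Finset.sum_le_sum fun i _ => mul_le_mul_of_nonneg_right (by
      first
        | exact (hev i).1
        | exact (hev i).2) (sq_nonneg _)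

private lemma posdef_tconj {n : ℕ} {A : Matrix (Fin n) (Fin n) ℝ} (hA : A.PosDef)
    {C : Matrix (Fin n) (Fin n) ℝ} (hC : IsUnit C.det) : (Cᵀ * A * C).PosDef := by
  have hsemi := hA.posSemidef.conjTranspose_mul_mul_same C
  rw [conjTranspose_eq_transpose_of_trivial] at hsemi
  refine posDef_iff_dotProduct_mulVec.mpr ⟨hsemi.1, fun x hx => ?_⟩
  have hCinj := Matrix.mulVec_injective_iff_isUnit.mpr ((Matrix.isUnit_iff_isUnit_det C).mpr hC)
  have hCx : C *ᵥ x ≠ 0 := fun h0 =>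
    hx (hCinj (h0.trans (mulVec_zero C).symm))
  have := hA.dotProduct_mulVec_pos hCx
  simpa [star_trivial, dot_tmul] using this

open scoped MatrixOrder in
private lemma quad_bound_gen {n : ℕ} {A B : Matrix (Fin n) (Fin n) ℝ}
    (hA : A.IsHermitian) (hB : B.PosDef) {a b : ℝ}
    (h : ∀ (μ : ℝ) (v : Fin n → ℝ), v ≠ 0 → (B⁻¹ * A) *ᵥ v = μ • v → μ ∈ Icc a b)
    (x : Fin n → ℝ) :
    a * (x ⬝ᵥ (B *ᵥ x)) ≤ x ⬝ᵥ (A *ᵥ x) ∧ x ⬝ᵥ (A *ᵥ x) ≤ b * (x ⬝ᵥ (B *ᵥ x)) := by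
  classical
  set P := CFC.sqrt B with hP
  have hPP : P * P = B := CFC.sqrt_mul_sqrt_self B hB.posSemidef.nonneg
  have hPherm : P.IsHermitian := (CFC.sqrt_nonneg B).posSemidef.1
  have hPt : Pᵀ = P := by
    have := hPherm
    rwa [IsHermitian, conjTranspose_eq_transpose_of_trivial] at this
  have hPdet : IsUnit P.det := by
    have hBdet : 0 < B.det := hB.det_pos
    rw [← hPP, det_mul] at hBdet
    have : P.det ≠ 0 := fun h0 => by simp [h0] at hBdet
    exact isUnit_iff_ne_zero.mpr this
  have hPinv : P⁻¹ * P = 1 := nonsing_inv_mul P hPdet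
  have hPinv' : P * P⁻¹ = 1 := mul_nonsing_inv P hPdet
  have hPinvT : (P⁻¹)ᵀ = P⁻¹ := by rw [transpose_nonsing_inv, hPt]
  set M := P⁻¹ * A * P⁻¹ with hM
  have hMherm : M.IsHermitian := by
    rw [IsHermitian, conjTranspose_eq_transpose_of_trivial, hM, transpose_mul, transpose_mul,
      hPinvT]
    rw [IsHermitian, conjTranspose_eq_transpose_of_trivial] at hA
    rw [hA, mul_assoc]
  have hBinv : B⁻¹ = P⁻¹ * P⁻¹ := by rw [← hPP, Matrix.mul_inv_rev]
  have heig : ∀ (μ : ℝ) (v : Fin n → ℝ), v ≠ 0 → M *ᵥ v = μ • v → μ ∈ Icc a b := by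
    intro μ v hv hMv
    have hw : P⁻¹ *ᵥ v ≠ 0 := by
      intro h0
      apply hv
      have : P *ᵥ (P⁻¹ *ᵥ v) = v := by rw [mulVec_mulVec, hPinv', one_mulVec]
      rw [h0, mulVec_zero] at this
      exact this.symm
    refine h μ (P⁻¹ *ᵥ v) hw ?_
    have : (B⁻¹ * A) *ᵥ (P⁻¹ *ᵥ v) = P⁻¹ *ᵥ (M *ᵥ v) := by
      rw [mulVec_mulVec, mulVec_mulVec, hBinv, hM]
      simp only [Matrix.mul_assoc]
    rw [this, hMv, mulVec_smul]
  have hq := quad_bound_herm hMherm heig (P *ᵥ x)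
  have hPMP : Pᵀ * M * P = A := by
    rw [hPt, hM]
    calc P * (P⁻¹ * A * P⁻¹) * P = (P * P⁻¹) * A * (P⁻¹ * P) := by
          simp only [Matrix.mul_assoc]
      _ = A := by rw [hPinv, hPinv', Matrix.one_mul, Matrix.mul_one]
  have hPPB : Pᵀ * 1 * P = B := by rw [hPt, Matrix.mul_one, hPP]
  have e1 : (P *ᵥ x) ⬝ᵥ (M *ᵥ (P *ᵥ x)) = x ⬝ᵥ (A *ᵥ x) := by
    rw [← dot_tmul, hPMP]
  have e2 : (P *ᵥ x) ⬝ᵥ (P *ᵥ x) = x ⬝ᵥ (B *ᵥ x) := by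
    have := dot_tmul P 1 x
    rw [hPPB, one_mulVec] at this
    exact this.symm
  rw [e1, e2] at hq
  exact hq

/-- Bound on the Rayleigh quotient xᵀSx / xᵀŜx in terms of the eigenvalue
intervals of S̃⁻¹S and (L̂ᵀL̂)⁻¹(LᵀL) and the condition number of D. -/
theorem schur_complement_rayleigh_quotient_bounds
    (m q : ℕ) (hm : 0 < m) (hq : 0 < q)
    (D : Matrix (Fin m) (Fin m) ℝ) (R : Matrix (Fin q) (Fin q) ℝ)
    (L Lhat : Matrix (Fin m) (Fin m) ℝ) (H : Matrix (Fin q) (Fin m) ℝ)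
    (hD : D.PosDef) (hR : R.PosDef)
    (hL : IsUnit L.det) (hLhat : IsUnit Lhat.det)
    (S Stilde Shat : Matrix (Fin m) (Fin m) ℝ)
    (hSdef : S = Lᵀ * D⁻¹ * L + Hᵀ * R⁻¹ * H)
    (hStdef : Stilde = Lᵀ * D⁻¹ * L)
    (hShdef : Shat = Lhatᵀ * D⁻¹ * Lhat)
    (lS LS lL LL : ℝ)
    (hlS : 0 < lS) (hLS : 0 < LS) (hlL : 0 < lL) (hLL : 0 < LL)
    -- every eigenvalue of S̃⁻¹S lies in [lS, LS]
    (hSint : ∀ (μ : ℝ) (v : Fin m → ℝ), v ≠ 0 → (Stilde⁻¹ * S) *ᵥ v = μ • v →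
      μ ∈ Icc lS LS)
    -- every eigenvalue of (L̂ᵀL̂)⁻¹(LᵀL) lies in [lL, LL]
    (hLint : ∀ (μ : ℝ) (v : Fin m → ℝ), v ≠ 0 →
      ((Lhatᵀ * Lhat)⁻¹ * (Lᵀ * L)) *ᵥ v = μ • v → μ ∈ Icc lL LL)
    -- extreme eigenvalues of D and its spectral condition number
    (dmin dmax : ℝ)
    (hdmin : IsLeast {μ : ℝ | ∃ v : Fin m → ℝ, v ≠ 0 ∧ D *ᵥ v = μ • v} dmin)
    (hdmax : IsGreatest {μ : ℝ | ∃ v : Fin m → ℝ, v ≠ 0 ∧ D *ᵥ v = μ • v} dmax)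
    (κD : ℝ) (hκD : κD = dmax / dmin) :
    ∀ x : Fin m → ℝ, x ≠ 0 →
      (x ⬝ᵥ (S *ᵥ x)) / (x ⬝ᵥ (Shat *ᵥ x)) ∈ Icc (lS * lL / κD) (LS * LL * κD) := by
  have hDi : D⁻¹.PosDef := hD.inv
  have hRi : R⁻¹.PosDef := hR.inv
  have hSt : Stilde.PosDef := hStdef ▸ posdef_tconj hDi hL
  have hSh : Shat.PosDef := hShdef ▸ posdef_tconj hDi hLhat
  have hSsemi : (Hᵀ * R⁻¹ * H).PosSemidef := by
    have := hRi.posSemidef.conjTranspose_mul_mul_same H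
    rwa [conjTranspose_eq_transpose_of_trivial] at this
  have hSpd : S.PosDef := by
    rw [hSdef, ← hStdef]
    exact hSt.add_posSemidef hSsemi
  have hLL' : (Lᵀ * L).PosDef := by
    have := posdef_tconj (Matrix.PosDef.one (n := Fin m) (R := ℝ)) hL
    rwa [Matrix.mul_one] at this
  have hLhL : (Lhatᵀ * Lhat).PosDef := by
    have := posdef_tconj (Matrix.PosDef.one (n := Fin m) (R := ℝ)) hLhat
    rwa [Matrix.mul_one] at this
  -- eigenvalues of D lie in [dmin, dmax]
  have hDeig : ∀ (μ : ℝ) (v : Fin m → ℝ), v ≠ 0 → D *ᵥ v = μ • v → μ ∈ Icc dmin dmax :=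
    fun μ v hv he => ⟨hdmin.2 ⟨v, hv, he⟩, hdmax.2 ⟨v, hv, he⟩⟩
  have hdminpos : 0 < dmin := by
    obtain ⟨v, hv, hDv⟩ := hdmin.1
    have h1 : 0 < v ⬝ᵥ (D *ᵥ v) := by
      have := hD.dotProduct_mulVec_pos hv
      simpa [star_trivial] using this
    have h2 : 0 < v ⬝ᵥ v := by
      have := (Matrix.PosDef.one (n := Fin m) (R := ℝ)).dotProduct_mulVec_pos hv
      simpa [star_trivial] using this
    rw [hDv, dotProduct_smul, smul_eq_mul] at h1
    nlinarith
  have hdmaxpos : 0 < dmax := lt_of_lt_of_le hdminpos (hdmin.2 hdmax.1)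
  have hDdet : IsUnit D.det := isUnit_iff_ne_zero.mpr (ne_of_gt hD.det_pos)
  -- eigenvalues of D⁻¹ lie in [1/dmax, 1/dmin]
  have hDieig : ∀ (μ : ℝ) (v : Fin m → ℝ), v ≠ 0 → D⁻¹ *ᵥ v = μ • v →
      μ ∈ Icc (1/dmax) (1/dmin) := by
    intro μ v hv he
    have hv' : D *ᵥ (D⁻¹ *ᵥ v) = v := by
      rw [mulVec_mulVec, mul_nonsing_inv _ hDdet, one_mulVec]
    have hveq : v = μ • (D *ᵥ v) := by
      conv_lhs => rw [← hv', he]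
      rw [mulVec_smul]
    have hμ : μ ≠ 0 := by
      intro h0
      rw [h0, zero_smul] at hveq
      exact hv hveq
    have hDv : D *ᵥ v = μ⁻¹ • v := by
      calc D *ᵥ v = μ⁻¹ • (μ • (D *ᵥ v)) := by
            rw [smul_smul, inv_mul_cancel₀ hμ, one_smul]
        _ = μ⁻¹ • v := by rw [← hveq]
    have hmem := hDeig μ⁻¹ v hv hDv
    have hμinvpos : 0 < μ⁻¹ := lt_of_lt_of_le hdminpos hmem.1
    have hμpos : 0 < μ := inv_pos.mp hμinvpos
    have hmm : μ * μ⁻¹ = 1 := mul_inv_cancel₀ hμ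
    constructor
    · rw [div_le_iff₀ hdmaxpos]
      nlinarith [hmem.2]
    · rw [le_div_iff₀ hdminpos]
      nlinarith [hmem.1]
  have hDiQ := quad_bound_herm hDi.1 hDieig
  intro x hx
  obtain ⟨g1, g2⟩ := quad_bound_gen hSpd.1 hSt hSint x
  obtain ⟨g5, g6⟩ := quad_bound_gen hLL'.1 hLhL hLint x
  -- rewrite quadratic forms
  have ept : x ⬝ᵥ (Stilde *ᵥ x) = (L *ᵥ x) ⬝ᵥ (D⁻¹ *ᵥ (L *ᵥ x)) := by
    rw [hStdef, dot_tmul]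
  have eph : x ⬝ᵥ (Shat *ᵥ x) = (Lhat *ᵥ x) ⬝ᵥ (D⁻¹ *ᵥ (Lhat *ᵥ x)) := by
    rw [hShdef, dot_tmul]
  have epL : x ⬝ᵥ ((Lᵀ * L) *ᵥ x) = (L *ᵥ x) ⬝ᵥ (L *ᵥ x) := by
    have := dot_tmul L 1 x
    rw [Matrix.mul_one, one_mulVec] at this
    exact this
  have epLh : x ⬝ᵥ ((Lhatᵀ * Lhat) *ᵥ x) = (Lhat *ᵥ x) ⬝ᵥ (Lhat *ᵥ x) := by
    have := dot_tmul Lhat 1 x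
    rw [Matrix.mul_one, one_mulVec] at this
    exact this
  set s : ℝ := x ⬝ᵥ (S *ᵥ x) with hs
  set t : ℝ := x ⬝ᵥ (Stilde *ᵥ x) with ht
  set sh : ℝ := x ⬝ᵥ (Shat *ᵥ x) with hsh
  set p : ℝ := (L *ᵥ x) ⬝ᵥ (L *ᵥ x) with hp
  set ph : ℝ := (Lhat *ᵥ x) ⬝ᵥ (Lhat *ᵥ x) with hph
  obtain ⟨g3, g4⟩ := hDiQ (L *ᵥ x)
  obtain ⟨g7, g8⟩ := hDiQ (Lhat *ᵥ x)
  rw [← ept] at g3 g4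
  rw [← eph] at g7 g8
  rw [epL] at g5 g6
  rw [epLh] at g5 g6
  -- g1 : lS * t ≤ s, g2 : s ≤ LS * t
  -- g3 : 1/dmax * p ≤ t, g4 : t ≤ 1/dmin * p
  -- g5 : lL * ph ≤ p, g6 : p ≤ LL * ph
  -- g7 : 1/dmax * ph ≤ sh, g8 : sh ≤ 1/dmin * ph
  have hshpos : 0 < sh := by
    have := hSh.dotProduct_mulVec_pos hx
    simpa [star_trivial, hsh] using this
  have hphpos : dmin * sh ≤ ph := by
    have := mul_le_mul_of_nonneg_left g8 hdminpos.le
    calc dmin * sh ≤ dmin * (1/dmin * ph) := this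
      _ = ph := by field_simp
  have hphup : ph ≤ dmax * sh := by
    have := mul_le_mul_of_nonneg_left g7 hdmaxpos.le
    calc ph = dmax * (1/dmax * ph) := by field_simp
      _ ≤ dmax * sh := this
  rw [hκD]
  constructor
  · rw [le_div_iff₀ hshpos]
    have c1 : lS * (1/dmax * (lL * (dmin * sh))) ≤ lS * (1/dmax * (lL * ph)) :=
      mul_le_mul_of_nonneg_left (mul_le_mul_of_nonneg_left
        (mul_le_mul_of_nonneg_left hphpos hlL.le) (by positivity)) hlS.le
    have c2 : lS * (1/dmax * (lL * ph)) ≤ lS * (1/dmax * p) :=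
      mul_le_mul_of_nonneg_left (mul_le_mul_of_nonneg_left g5 (by positivity)) hlS.le
    have c3 : lS * (1/dmax * p) ≤ lS * t := mul_le_mul_of_nonneg_left g3 hlS.le
    have ceq : lS * lL / (dmax / dmin) * sh = lS * (1/dmax * (lL * (dmin * sh))) := by
      field_simp
    rw [ceq]
    linarith
  · rw [div_le_iff₀ hshpos]
    have c1 : LS * t ≤ LS * (1/dmin * p) := mul_le_mul_of_nonneg_left g4 hLS.le
    have c2 : LS * (1/dmin * p) ≤ LS * (1/dmin * (LL * ph)) :=
      mul_le_mul_of_nonneg_left (mul_le_mul_of_nonneg_left g6 (by positivity)) hLS.le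
    have c3 : LS * (1/dmin * (LL * ph)) ≤ LS * (1/dmin * (LL * (dmax * sh))) :=
      mul_le_mul_of_nonneg_left (mul_le_mul_of_nonneg_left
        (mul_le_mul_of_nonneg_left hphup hLL.le) (by positivity)) hLS.le
    have ceq : LS * LL * (dmax / dmin) * sh = LS * (1/dmin * (LL * (dmax * sh))) := by
      field_simp
    rw [ceq]
    linarith
end

section
/- Let s, N ≥ 1 and let k be an integer with 1 ≤ k ≤ N+1. Let M_1, …, M_N ∈ ℝ^{s×s}. Let L ∈ ℝ^{(N+1)s×(N+1)s} be the block lower bidiagonal matrix with identity s×s blocks on the diagonal and blocks −M_i (for i = 1, …, N) on the first subdiagonal, and let L_M = L_M(k) be the block matrix whose (i,j)th block equals the identity I if i = j, equals −M_j if i = j+1 and j is not divisible by k, and equals the zero matrix otherwise. Define A(M) ∈ ℝ^{(N+1)s×(N+1)s} blockwise as follows: for each n = 1, …, ⌊N/k⌋, the (i,j)th block of A(M) equals (∏_{t=i}^{nk} M_tᵀ)(∏_{q=j}^{nk} M_{nk−q+j}) when (n−1)k+1 ≤ i, j ≤ nk; equals −∏_{t=j}^{nk} M_{nk−t+j} when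 i = nk+1 and (n−1)k+1 ≤ j ≤ nk; equals −∏_{t=i}^{nk} M_tᵀ when j = nk+1 and (n−1)k+1 ≤ i ≤ nk; and all blocks not covered by these cases equal zero. Then L_M is invertible and L_M⁻ᵀ Lᵀ L L_M⁻¹ = I + A(M); equivalently, Lᵀ L = L_Mᵀ (I + A(M)) L_M. -/
open Matrix

/-- The product `M_a * M_{a-1} * ⋯ * M_b` (factors in decreasing index order from
left to right); equal to the identity when `b > a`. -/
def descProd {s : ℕ} (M : ℕ → Matrix (Fin s) (Fin s) ℝ) (a b : ℕ) :
    Matrix (Fin s) (Fin s) ℝ :=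
  (((List.range (a + 1 - b)).map fun t => M (a - t))).prod

/-- The block lower bidiagonal matrix `L` with identity diagonal blocks and blocks
`−M_j` in position `(j+1, j)` (1-based block indices `1, …, N+1`). -/
def Lmat (s N : ℕ) (M : ℕ → Matrix (Fin s) (Fin s) ℝ) :
    Matrix (Fin (N + 1) × Fin s) (Fin (N + 1) × Fin s) ℝ :=
  Matrix.of fun p q =>
    if p.1 = q.1 then (if p.2 = q.2 then 1 else 0)
    else if (p.1 : ℕ) = (q.1 : ℕ) + 1 then -(M ((q.1 : ℕ) + 1) p.2 q.2)
    else 0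

/-- The block matrix `L_M(k)`: the `(i,j)`th block (1-based) is `I` if `i = j`,
`−M_j` if `i = j + 1` and `k ∤ j`, and `0` otherwise. -/
def LMmat (s N k : ℕ) (M : ℕ → Matrix (Fin s) (Fin s) ℝ) :
    Matrix (Fin (N + 1) × Fin s) (Fin (N + 1) × Fin s) ℝ :=
  Matrix.of fun p q =>
    if p.1 = q.1 then (if p.2 = q.2 then 1 else 0)
    else if (p.1 : ℕ) = (q.1 : ℕ) + 1 ∧ ¬ k ∣ ((q.1 : ℕ) + 1) then
      -(M ((q.1 : ℕ) + 1) p.2 q.2)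
    else 0

/-- The contribution to `A(M)` from index `n`, as a function of the 1-based block
indices `i, j`: using `∏_{t=i}^{nk} M_tᵀ = (M_{nk} ⋯ M_i)ᵀ` and
`∏_{q=j}^{nk} M_{nk−q+j} = M_{nk} ⋯ M_j`. -/
def Ablock {s : ℕ} (k : ℕ) (M : ℕ → Matrix (Fin s) (Fin s) ℝ) (n i j : ℕ) :
    Matrix (Fin s) (Fin s) ℝ :=
  if (n - 1) * k + 1 ≤ i ∧ i ≤ n * k ∧ (n - 1) * k + 1 ≤ j ∧ j ≤ n * k then
    (descProd M (n * k) i)ᵀ * descProd M (n * k) j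
  else if i = n * k + 1 ∧ (n - 1) * k + 1 ≤ j ∧ j ≤ n * k then
    -(descProd M (n * k) j)
  else if j = n * k + 1 ∧ (n - 1) * k + 1 ≤ i ∧ i ≤ n * k then
    -((descProd M (n * k) i)ᵀ)
  else 0

/-- The matrix `A(M)`, assembled from the blocks for `n = 1, …, ⌊N/k⌋` (all blocks
not covered by the cases of `Ablock` are zero). -/
def AMmat (s N k : ℕ) (M : ℕ → Matrix (Fin s) (Fin s) ℝ) :
    Matrix (Fin (N + 1) × Fin s) (Fin (N + 1) × Fin s) ℝ :=
  ∑ n ∈ Finset.Icc 1 (N / k),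
    Matrix.of fun p q => Ablock k M n ((p.1 : ℕ) + 1) ((q.1 : ℕ) + 1) p.2 q.2

namespace LMaux

variable {s : ℕ}

theorem descProd_self (M : ℕ → Matrix (Fin s) (Fin s) ℝ) (a : ℕ) :
    descProd M a a = M a := by
  simp [descProd, show a + 1 - a = 1 from by omega, List.range_succ]

theorem descProd_step (M : ℕ → Matrix (Fin s) (Fin s) ℝ) {a b : ℕ} (h : b ≤ a) :
    descProd M a (b + 1) * M b = descProd M a b := by
  unfold descProd
  rw [show a + 1 - b = (a - b) + 1 from by omega, List.range_succ, List.map_append,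
    List.prod_append, show a + 1 - (b + 1) = a - b from by omega]
  simp [show a - (a - b) = b from by omega]

theorem lt_div_succ_mul {i k : ℕ} (hk : 0 < k) : i < (i / k + 1) * k := by
  have h1 := Nat.div_add_mod i k
  have h2 := Nat.mod_lt i hk
  have h3 : (i / k + 1) * k = k * (i / k) + k := by ring
  omega

theorem mult_interval {k p r : ℕ} (hk : 0 < k) (h1 : k ∣ p) (h2 : k ∣ (r + 1))
    (h3 : p - k ≤ r) (h4 : r < p) : p = r + 1 := by
  obtain ⟨a, rfl⟩ := h1
  obtain ⟨b, hb⟩ := h2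
  have ha : a ≠ 0 := by rintro rfl; omega
  obtain ⟨a', rfl⟩ : ∃ a', a = a' + 1 := ⟨a - 1, by omega⟩
  have e1 : k * (a' + 1) = k * a' + k := by ring
  have h5 : b ≤ a' + 1 := by
    have : k * b ≤ k * (a' + 1) := by omega
    exact Nat.le_of_mul_le_mul_left this hk
  have h6 : a' + 1 ≤ b := by
    have : k * a' < k * b := by omega
    have := Nat.lt_of_mul_lt_mul_left this
    omega
  have hab : a' + 1 = b := by omega
  subst hab
  omega

theorem condIff {k t i : ℕ} (hk : 0 < k) :
    (k ∣ t ∧ k ≤ t ∧ t - k ≤ i ∧ i < t) ↔ t = (i / k + 1) * k := by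
  constructor
  · rintro ⟨⟨a, rfl⟩, h2, h3, h4⟩
    have ha : a ≠ 0 := by rintro rfl; omega
    obtain ⟨a', rfl⟩ : ∃ a', a = a' + 1 := ⟨a - 1, by omega⟩
    have e1 : k * (a' + 1) = a' * k + k := by ring
    have e2 : (a' + 1) * k = a' * k + k := by ring
    have hdiv : i / k = a' := Nat.div_eq_of_lt_le (by omega) (by omega)
    rw [hdiv, mul_comm]
  · rintro rfl
    refine ⟨dvd_mul_left k _, ?_, ?_, lt_div_succ_mul hk⟩
    · have e : (i / k + 1) * k = i / k * k + k := by ring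
      omega
    · have e : (i / k + 1) * k = i / k * k + k := by ring
      have := Nat.div_mul_le_self i k
      omega

theorem seg_iff {k n i : ℕ} (hk : 0 < k) (hn : 1 ≤ n) :
    ((n - 1) * k + 1 ≤ i + 1 ∧ i + 1 ≤ n * k) ↔ n = i / k + 1 := by
  obtain ⟨m, rfl⟩ : ∃ m, n = m + 1 := ⟨n - 1, by omega⟩
  simp only [Nat.add_sub_cancel]
  constructor
  · rintro ⟨h1, h2⟩
    have : i / k = m := Nat.div_eq_of_lt_le (by omega) (by omega)
    omega
  · rintro h
    have hm : m = i / k := by omega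
    subst hm
    have h1 : i / k * k ≤ i := Nat.div_mul_le_self i k
    have h2 : i < (i / k + 1) * k := lt_div_succ_mul hk
    omega

end LMaux

namespace LMaux

variable {s : ℕ}

def Lb (M : ℕ → Matrix (Fin s) (Fin s) ℝ) (p q : ℕ) : Matrix (Fin s) (Fin s) ℝ :=
  if p = q then 1 else if p = q + 1 then -(M (q + 1)) else 0

def LMb (k : ℕ) (M : ℕ → Matrix (Fin s) (Fin s) ℝ) (p q : ℕ) : Matrix (Fin s) (Fin s) ℝ :=
  if p = q then 1 else if p = q + 1 ∧ ¬ k ∣ (q + 1) then -(M (q + 1)) else 0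

def Gb (k : ℕ) (M : ℕ → Matrix (Fin s) (Fin s) ℝ) (p q : ℕ) : Matrix (Fin s) (Fin s) ℝ :=
  if k ∣ p ∧ k ≤ p ∧ p - k ≤ q ∧ q < p then -(descProd M p (q + 1)) else 0

def Gmat (s N k : ℕ) (M : ℕ → Matrix (Fin s) (Fin s) ℝ) :
    Matrix (Fin (N + 1) × Fin s) (Fin (N + 1) × Fin s) ℝ :=
  Matrix.of fun p q => Gb k M p.1 q.1 p.2 q.2

theorem Lmat_of (N : ℕ) (M : ℕ → Matrix (Fin s) (Fin s) ℝ) :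
    Lmat s N M = Matrix.of (fun p q : Fin (N + 1) × Fin s => Lb M p.1 q.1 p.2 q.2) := by
  ext ⟨p1, p2⟩ ⟨q1, q2⟩
  simp only [Lmat, Lb, Matrix.of_apply]
  by_cases h : (p1 : ℕ) = (q1 : ℕ)
  · have h' : p1 = q1 := Fin.ext h
    simp [h', Matrix.one_apply]
  · have h' : p1 ≠ q1 := fun hh => h (by rw [hh])
    simp only [h', h, if_false, if_neg h]
    split_ifs <;> simp [Matrix.neg_apply]

theorem LMmat_of (N k : ℕ) (M : ℕ → Matrix (Fin s) (Fin s) ℝ) :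
    LMmat s N k M = Matrix.of (fun p q : Fin (N + 1) × Fin s => LMb k M p.1 q.1 p.2 q.2) := by
  ext ⟨p1, p2⟩ ⟨q1, q2⟩
  simp only [LMmat, LMb, Matrix.of_apply]
  by_cases h : (p1 : ℕ) = (q1 : ℕ)
  · have h' : p1 = q1 := Fin.ext h
    simp [h', Matrix.one_apply]
  · have h' : p1 ≠ q1 := fun hh => h (by rw [hh])
    simp only [h', h, if_false, if_neg h]
    split_ifs <;> simp [Matrix.neg_apply]

theorem blockMul {n : ℕ} (B C : Fin n → Fin n → Matrix (Fin s) (Fin s) ℝ) :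
    (Matrix.of fun p q : Fin n × Fin s => B p.1 q.1 p.2 q.2) *
      (Matrix.of fun p q : Fin n × Fin s => C p.1 q.1 p.2 q.2) =
    Matrix.of (fun p q : Fin n × Fin s => (∑ t, B p.1 t * C t q.1) p.2 q.2) := by
  ext p q
  simp [Matrix.mul_apply, Matrix.sum_apply, Fintype.sum_prod_type]

theorem fin_sum_ite {n : ℕ} (v : ℕ) (g : Matrix (Fin s) (Fin s) ℝ) :
    (∑ t : Fin (n + 1), if (t : ℕ) = v then g else 0) = if v ≤ n then g else 0 := by
  by_cases hv : v ≤ n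
  · rw [if_pos hv]
    have h : ∀ t : Fin (n + 1),
        (if (t : ℕ) = v then g else 0) = (if t = ⟨v, by omega⟩ then g else 0) := by
      intro t
      refine if_congr ⟨fun h => Fin.ext h, fun h => by rw [h]⟩ rfl rfl
    rw [Finset.sum_congr rfl fun t _ => h t,
      Finset.sum_ite_eq' Finset.univ _ (fun _ => g), if_pos (Finset.mem_univ _)]
  · rw [if_neg hv]
    apply Finset.sum_eq_zero
    intro t _
    rw [if_neg]
    have := t.isLt
    omega

theorem fin_sum_ite' {n : ℕ} (v : ℕ) (P : Prop) [Decidable P] (g : Matrix (Fin s) (Fin s) ℝ) :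
    (∑ t : Fin (n + 1), if (t : ℕ) = v ∧ P then g else 0) = if v ≤ n ∧ P then g else 0 := by
  by_cases hP : P
  · simp only [hP, and_true]
    exact fin_sum_ite v g
  · simp [hP]

theorem Gb_eq {k : ℕ} (hk : 0 < k) (M : ℕ → Matrix (Fin s) (Fin s) ℝ) (i j : ℕ) :
    Gb k M i j = if k ∣ i ∧ j / k + 1 = i / k then -(descProd M i (j + 1)) else 0 := by
  unfold Gb
  refine if_congr ?_ rfl rfl
  constructor
  · rintro ⟨h1, h2, h3, h4⟩
    refine ⟨h1, ?_⟩
    obtain ⟨a, rfl⟩ := h1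
    have ha : a ≠ 0 := by rintro rfl; omega
    obtain ⟨a', rfl⟩ : ∃ a', a = a' + 1 := ⟨a - 1, by omega⟩
    have e1 : k * (a' + 1) = a' * k + k := by ring
    have e2 : (a' + 1) * k = a' * k + k := by ring
    have hdj : j / k = a' := Nat.div_eq_of_lt_le (by omega) (by omega)
    have hdi : k * (a' + 1) / k = a' + 1 := by
      rw [mul_comm]; exact Nat.mul_div_cancel _ hk
    omega
  · rintro ⟨h1, h2⟩
    obtain ⟨a, rfl⟩ := h1
    have hdi : k * a / k = a := by rw [mul_comm]; exact Nat.mul_div_cancel _ hk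
    have ha : a = j / k + 1 := by omega
    subst ha
    have e1 : k * (j / k + 1) = j / k * k + k := by ring
    have hj1 : j / k * k ≤ j := Nat.div_mul_le_self j k
    have hj2 : j < (j / k + 1) * k := lt_div_succ_mul hk
    have e2 : (j / k + 1) * k = j / k * k + k := by ring
    exact ⟨⟨_, rfl⟩, by omega, by omega, by omega⟩

end LMaux

namespace LMaux

variable {s : ℕ}

theorem key1nat (N k : ℕ) (hk : 1 ≤ k) (M : ℕ → Matrix (Fin s) (Fin s) ℝ)
    (p r : ℕ) (hp : p ≤ N) (hr : r ≤ N) :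
    Gb k M p r + (if r + 1 ≤ N then
        Gb k M p (r + 1) * (if ¬ k ∣ (r + 1) then -(M (r + 1)) else 0) else 0)
      = Lb M p r - LMb k M p r := by
  have hRHS : Lb M p r - LMb k M p r
      = if p = r + 1 ∧ k ∣ (r + 1) then -(M (r + 1)) else 0 := by
    unfold Lb LMb
    by_cases h1 : p = r
    · simp [h1]
    · by_cases h2 : p = r + 1
      · by_cases h3 : k ∣ (r + 1) <;> simp [h1, h2, h3]
      · simp [h1, h2]
  rw [hRHS]
  by_cases hD : k ∣ (r + 1)
  · have hz : (if r + 1 ≤ N then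
        Gb k M p (r + 1) * (if ¬ k ∣ (r + 1) then -(M (r + 1)) else 0) else 0) = 0 := by
      have h0 : (if ¬ k ∣ (r + 1) then -(M (r + 1)) else (0 : Matrix (Fin s) (Fin s) ℝ)) = 0 := by
        simp [hD]
      rw [h0, mul_zero, ite_self]
    rw [hz, add_zero]
    by_cases h2 : p = r + 1
    · subst h2
      rw [if_pos ⟨rfl, hD⟩]
      unfold Gb
      rw [if_pos ⟨hD, Nat.le_of_dvd (by omega) hD, by omega, by omega⟩, descProd_self]
    · rw [if_neg (fun h => h2 h.1)]
      unfold Gb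
      rw [if_neg]
      rintro ⟨c1, c2, c3, c4⟩
      exact h2 (mult_interval (by omega) c1 hD c3 c4)
  · have hrhs0 : (if p = r + 1 ∧ k ∣ (r + 1) then -(M (r + 1)) else
        (0 : Matrix (Fin s) (Fin s) ℝ)) = 0 := if_neg (fun h => hD h.2)
    have hinner : (if ¬ k ∣ (r + 1) then -(M (r + 1)) else
        (0 : Matrix (Fin s) (Fin s) ℝ)) = -(M (r + 1)) := if_pos hD
    rw [hrhs0, hinner]
    by_cases hC : k ∣ p ∧ k ≤ p ∧ p - k ≤ r + 1 ∧ r + 1 < p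
    · have hN : r + 1 ≤ N := by omega
      rw [if_pos hN]
      have hG1 : Gb k M p (r + 1) = -(descProd M p (r + 2)) := by
        unfold Gb; rw [if_pos hC]
      have hG0 : Gb k M p r = -(descProd M p (r + 1)) := by
        unfold Gb
        rw [if_pos]
        obtain ⟨c1, c2, c3, c4⟩ := hC
        refine ⟨c1, c2, ?_, by omega⟩
        by_contra hcon
        have hcon2 : r + 1 = p - k := by omega
        apply hD; rw [hcon2]
        exact Nat.dvd_sub c1 dvd_rfl
      rw [hG0, hG1, neg_mul_neg,
        descProd_step M (show r + 1 ≤ p from by omega)]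
      exact neg_add_cancel _
    · have hG0 : Gb k M p r = 0 := by
        unfold Gb; rw [if_neg]
        rintro ⟨c1, c2, c3, c4⟩
        apply hC
        refine ⟨c1, c2, by omega, ?_⟩
        rcases Nat.lt_or_ge (r + 1) p with h | h
        · exact h
        · exfalso
          apply hD
          have he : r + 1 = p := by omega
          rw [he]; exact c1
      have hG1 : Gb k M p (r + 1) = 0 := by unfold Gb; rw [if_neg hC]
      rw [hG0, hG1, zero_mul, ite_self, add_zero]

theorem key1 (N k : ℕ) (hk : 1 ≤ k) (M : ℕ → Matrix (Fin s) (Fin s) ℝ)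
    (p r : Fin (N + 1)) :
    (∑ t : Fin (N + 1), Gb k M (p : ℕ) (t : ℕ) * LMb k M (t : ℕ) (r : ℕ)) =
      Lb M (p : ℕ) (r : ℕ) - LMb k M (p : ℕ) (r : ℕ) := by
  have hsplit : ∀ t : Fin (N + 1), Gb k M (p : ℕ) (t : ℕ) * LMb k M (t : ℕ) (r : ℕ) =
      (if (t : ℕ) = (r : ℕ) then Gb k M (p : ℕ) (r : ℕ) else 0) +
      (if (t : ℕ) = (r : ℕ) + 1 then Gb k M (p : ℕ) ((r : ℕ) + 1) *
         (if ¬ k ∣ ((r : ℕ) + 1) then -(M ((r : ℕ) + 1)) else 0) else 0) := by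
    intro t
    unfold LMb
    by_cases h1 : (t : ℕ) = (r : ℕ)
    · simp [h1]
    · by_cases h2 : (t : ℕ) = (r : ℕ) + 1
      · by_cases h3 : k ∣ ((r : ℕ) + 1) <;> simp [h1, h2, h3]
      · simp [h1, h2]
  rw [Finset.sum_congr rfl (fun t _ => hsplit t), Finset.sum_add_distrib,
    fin_sum_ite, fin_sum_ite, if_pos r.is_le]
  exact key1nat N k hk M p r p.is_le r.is_le

end LMaux

namespace LMaux

variable {s : ℕ}

theorem Ablock_norm {k : ℕ} (M : ℕ → Matrix (Fin s) (Fin s) ℝ) (hk : 0 < k)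
    {n i j : ℕ} (hn : 1 ≤ n) :
    Ablock k M n (i + 1) (j + 1) =
      if n = i / k + 1 ∧ n = j / k + 1 then
        (descProd M (n * k) (i + 1))ᵀ * descProd M (n * k) (j + 1)
      else if i = n * k ∧ n = j / k + 1 then -(descProd M (n * k) (j + 1))
      else if j = n * k ∧ n = i / k + 1 then -((descProd M (n * k) (i + 1))ᵀ)
      else 0 := by
  have ei := seg_iff (i := i) hk hn
  have ej := seg_iff (i := j) hk hn
  unfold Ablock
  refine if_congr ?_ rfl (if_congr ?_ rfl (if_congr ?_ rfl rfl))
  · constructor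
    · rintro ⟨a, b, c, d⟩; exact ⟨ei.1 ⟨a, b⟩, ej.1 ⟨c, d⟩⟩
    · rintro ⟨ha, hb⟩
      obtain ⟨a, b⟩ := ei.2 ha
      obtain ⟨c, d⟩ := ej.2 hb
      exact ⟨a, b, c, d⟩
  · constructor
    · rintro ⟨a, c, d⟩; exact ⟨by omega, ej.1 ⟨c, d⟩⟩
    · rintro ⟨ha, hb⟩
      obtain ⟨c, d⟩ := ej.2 hb
      exact ⟨by omega, c, d⟩
  · constructor
    · rintro ⟨a, c, d⟩; exact ⟨by omega, ei.1 ⟨c, d⟩⟩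
    · rintro ⟨ha, hb⟩
      obtain ⟨c, d⟩ := ei.2 hb
      exact ⟨by omega, c, d⟩

theorem sumGt (N k : ℕ) (hk : 1 ≤ k) (M : ℕ → Matrix (Fin s) (Fin s) ℝ) (i j : ℕ) :
    (∑ t : Fin (N + 1), (Gb k M (t : ℕ) i)ᵀ * Gb k M (t : ℕ) j) =
      if (i / k + 1) * k ≤ N ∧ i / k = j / k then
        (descProd M ((i / k + 1) * k) (i + 1))ᵀ * descProd M ((i / k + 1) * k) (j + 1)
      else 0 := by
  have hGb : ∀ (t a : ℕ), Gb k M t a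
      = if t = (a / k + 1) * k then -(descProd M t (a + 1)) else 0 := by
    intro t a
    unfold Gb
    exact if_congr (condIff (by omega)) rfl rfl
  have hterm : ∀ t : Fin (N + 1), (Gb k M (t : ℕ) i)ᵀ * Gb k M (t : ℕ) j =
      if (t : ℕ) = (i / k + 1) * k ∧ i / k = j / k then
        (descProd M ((i / k + 1) * k) (i + 1))ᵀ * descProd M ((i / k + 1) * k) (j + 1)
      else 0 := by
    intro t
    rw [hGb, hGb]
    by_cases h1 : (t : ℕ) = (i / k + 1) * k
    · by_cases h2 : i / k = j / k
      · rw [if_pos h1, if_pos (show (t : ℕ) = (j / k + 1) * k from by rw [← h2]; exact h1),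
          if_pos ⟨h1, h2⟩, transpose_neg, neg_mul_neg, h1, h2]
      · have hqj : ¬ (t : ℕ) = (j / k + 1) * k := by
          intro hcon
          apply h2
          have := Nat.eq_of_mul_eq_mul_right (show 0 < k from by omega)
            (h1 ▸ hcon : (i / k + 1) * k = (j / k + 1) * k)
          omega
        rw [if_pos h1, if_neg hqj, mul_zero, if_neg (fun h => h2 h.2)]
    · rw [if_neg h1, transpose_zero, zero_mul, if_neg (fun h => h1 h.1)]
  rw [Finset.sum_congr rfl fun t _ => hterm t, fin_sum_ite']

theorem key2nat (N k : ℕ) (hk : 1 ≤ k) (M : ℕ → Matrix (Fin s) (Fin s) ℝ)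
    (i j : ℕ) (hi : i ≤ N) (hj : j ≤ N) :
    (∑ n ∈ Finset.Icc 1 (N / k), Ablock k M n (i + 1) (j + 1)) =
      Gb k M i j + (Gb k M j i)ᵀ +
        (if (i / k + 1) * k ≤ N ∧ i / k = j / k then
          (descProd M ((i / k + 1) * k) (i + 1))ᵀ * descProd M ((i / k + 1) * k) (j + 1)
        else 0) := by
  have hk0 : 0 < k := hk
  have hmulc : ∀ n : ℕ, n * k / k = n := fun n => Nat.mul_div_cancel n hk0
  rw [Finset.sum_congr rfl fun n hn => Ablock_norm M hk0 (Finset.mem_Icc.1 hn).1]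
  by_cases hdd : i / k = j / k
  · have hstep : ∀ n ∈ Finset.Icc 1 (N / k),
        (if n = i / k + 1 ∧ n = j / k + 1 then
          (descProd M (n * k) (i + 1))ᵀ * descProd M (n * k) (j + 1)
        else if i = n * k ∧ n = j / k + 1 then -(descProd M (n * k) (j + 1))
        else if j = n * k ∧ n = i / k + 1 then -((descProd M (n * k) (i + 1))ᵀ)
        else 0) =
        if n = i / k + 1 then (descProd M (n * k) (i + 1))ᵀ * descProd M (n * k) (j + 1)
        else 0 := by
      intro n _
      by_cases h : n = i / k + 1
      · rw [if_pos ⟨h, by omega⟩, if_pos h]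
      · rw [if_neg (fun hc => h hc.1), if_neg (fun hc => h (by omega)),
          if_neg (fun hc => h hc.2), if_neg h]
    rw [Finset.sum_congr rfl hstep, Finset.sum_ite_eq']
    have hGb1 : Gb k M i j = 0 := by
      rw [Gb_eq hk0, if_neg]; rintro ⟨_, h⟩; omega
    have hGb2 : Gb k M j i = 0 := by
      rw [Gb_eq hk0, if_neg]; rintro ⟨_, h⟩; omega
    rw [hGb1, hGb2, transpose_zero, zero_add, zero_add]
    by_cases hle : (i / k + 1) * k ≤ N
    · have hmem : i / k + 1 ∈ Finset.Icc 1 (N / k) :=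
        Finset.mem_Icc.2 ⟨Nat.le_add_left 1 _, (Nat.le_div_iff_mul_le hk0).2 hle⟩
      rw [if_pos hmem, if_pos ⟨hle, hdd⟩]
    · have hmem : i / k + 1 ∉ Finset.Icc 1 (N / k) := by
        intro hc
        exact hle ((Nat.le_div_iff_mul_le hk0).1 (Finset.mem_Icc.1 hc).2)
      rw [if_neg hmem, if_neg (fun hc => hle hc.1)]
  · by_cases hc2 : k ∣ i ∧ i / k = j / k + 1
    · obtain ⟨hc2a, hc2b⟩ := hc2
      have hik : i / k * k = i := Nat.div_mul_cancel hc2a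
      have hstep : ∀ n ∈ Finset.Icc 1 (N / k),
          (if n = i / k + 1 ∧ n = j / k + 1 then
            (descProd M (n * k) (i + 1))ᵀ * descProd M (n * k) (j + 1)
          else if i = n * k ∧ n = j / k + 1 then -(descProd M (n * k) (j + 1))
          else if j = n * k ∧ n = i / k + 1 then -((descProd M (n * k) (i + 1))ᵀ)
          else 0) =
          if n = i / k then -(descProd M (n * k) (j + 1)) else 0 := by
        intro n _
        by_cases h : n = i / k
        · have hA : ¬ (n = i / k + 1 ∧ n = j / k + 1) := by
            rintro ⟨ha, _⟩; omega
          have hB : i = n * k := by rw [h]; exact hik.symm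
          rw [if_neg hA, if_pos ⟨hB, by omega⟩, if_pos h]
        · have hA : ¬ (n = i / k + 1 ∧ n = j / k + 1) := by
            rintro ⟨ha, hb⟩; omega
          have hB : ¬ (i = n * k ∧ n = j / k + 1) := by
            rintro ⟨hc, _⟩
            have : i / k = n := by rw [hc, hmulc]
            exact h this.symm
          have hC : ¬ (j = n * k ∧ n = i / k + 1) := by
            rintro ⟨hc, hcc⟩
            have : j / k = n := by rw [hc, hmulc]
            omega
          rw [if_neg hA, if_neg hB, if_neg hC, if_neg h]
      have hmem : i / k ∈ Finset.Icc 1 (N / k) :=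
        Finset.mem_Icc.2 ⟨by rw [hc2b]; exact Nat.le_add_left 1 _,
          by rw [Nat.le_div_iff_mul_le hk0]; omega⟩
      rw [Finset.sum_congr rfl hstep, Finset.sum_ite_eq', if_pos hmem]
      have hGb1 : Gb k M i j = -(descProd M i (j + 1)) := by
        rw [Gb_eq hk0, if_pos ⟨hc2a, by omega⟩]
      have hGb2 : Gb k M j i = 0 := by
        rw [Gb_eq hk0, if_neg]; rintro ⟨_, h⟩; omega
      rw [hGb1, hGb2, transpose_zero, add_zero, if_neg (fun hc => hdd hc.2), add_zero, hik]
    · by_cases hc3 : k ∣ j ∧ j / k = i / k + 1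
      · obtain ⟨hc3a, hc3b⟩ := hc3
        have hjk : j / k * k = j := Nat.div_mul_cancel hc3a
        have hstep : ∀ n ∈ Finset.Icc 1 (N / k),
            (if n = i / k + 1 ∧ n = j / k + 1 then
              (descProd M (n * k) (i + 1))ᵀ * descProd M (n * k) (j + 1)
            else if i = n * k ∧ n = j / k + 1 then -(descProd M (n * k) (j + 1))
            else if j = n * k ∧ n = i / k + 1 then -((descProd M (n * k) (i + 1))ᵀ)
            else 0) =
            if n = j / k then -((descProd M (n * k) (i + 1))ᵀ) else 0 := by
          intro n _
          by_cases h : n = j / k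
          · have hA : ¬ (n = i / k + 1 ∧ n = j / k + 1) := by
              rintro ⟨_, hb⟩; omega
            have hB : ¬ (i = n * k ∧ n = j / k + 1) := by
              rintro ⟨_, hcc⟩; omega
            have hC : j = n * k := by rw [h]; exact hjk.symm
            rw [if_neg hA, if_neg hB, if_pos ⟨hC, by omega⟩, if_pos h]
          · have hA : ¬ (n = i / k + 1 ∧ n = j / k + 1) := by
              rintro ⟨ha, hb⟩; omega
            have hB : ¬ (i = n * k ∧ n = j / k + 1) := by
              rintro ⟨hc, hcc⟩
              have : i / k = n := by rw [hc, hmulc]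
              omega
            have hC : ¬ (j = n * k ∧ n = i / k + 1) := by
              rintro ⟨hc, _⟩
              have : j / k = n := by rw [hc, hmulc]
              exact h this.symm
            rw [if_neg hA, if_neg hB, if_neg hC, if_neg h]
        have hmem : j / k ∈ Finset.Icc 1 (N / k) :=
          Finset.mem_Icc.2 ⟨by rw [hc3b]; exact Nat.le_add_left 1 _,
            by rw [Nat.le_div_iff_mul_le hk0]; omega⟩
        rw [Finset.sum_congr rfl hstep, Finset.sum_ite_eq', if_pos hmem]
        have hGb1 : Gb k M i j = 0 := by
          rw [Gb_eq hk0, if_neg]; rintro ⟨_, h⟩; omega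
        have hGb2 : Gb k M j i = -(descProd M j (i + 1)) := by
          rw [Gb_eq hk0, if_pos ⟨hc3a, by omega⟩]
        rw [hGb1, hGb2, zero_add, if_neg (fun hc => hdd hc.2), add_zero, transpose_neg, hjk]
      · have hstep : ∀ n ∈ Finset.Icc 1 (N / k),
            (if n = i / k + 1 ∧ n = j / k + 1 then
              (descProd M (n * k) (i + 1))ᵀ * descProd M (n * k) (j + 1)
            else if i = n * k ∧ n = j / k + 1 then -(descProd M (n * k) (j + 1))
            else if j = n * k ∧ n = i / k + 1 then -((descProd M (n * k) (i + 1))ᵀ)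
            else 0) = 0 := by
          intro n _
          have h1 : ¬ (n = i / k + 1 ∧ n = j / k + 1) := by rintro ⟨a, b⟩; omega
          have h2 : ¬ (i = n * k ∧ n = j / k + 1) := by
            rintro ⟨hc, hcc⟩
            have hd : i / k = n := by rw [hc, hmulc]
            have hdvd : k ∣ i := by rw [hc]; exact dvd_mul_left k n
            exact hc2 ⟨hdvd, by omega⟩
          have h3 : ¬ (j = n * k ∧ n = i / k + 1) := by
            rintro ⟨hc, hcc⟩
            have hd : j / k = n := by rw [hc, hmulc]
            have hdvd : k ∣ j := by rw [hc]; exact dvd_mul_left k n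
            exact hc3 ⟨hdvd, by omega⟩
          rw [if_neg h1, if_neg h2, if_neg h3]
        rw [Finset.sum_eq_zero hstep]
        have hGb1 : Gb k M i j = 0 := by
          rw [Gb_eq hk0, if_neg]
          rintro ⟨ha, hb⟩
          exact hc2 ⟨ha, by omega⟩
        have hGb2 : Gb k M j i = 0 := by
          rw [Gb_eq hk0, if_neg]
          rintro ⟨ha, hb⟩
          exact hc3 ⟨ha, by omega⟩
        rw [hGb1, hGb2, transpose_zero, if_neg (fun hc => hdd hc.2)]
        simp

end LMaux

namespace LMaux

variable {s : ℕ}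

theorem hGmul (N k : ℕ) (hk : 1 ≤ k) (M : ℕ → Matrix (Fin s) (Fin s) ℝ) :
    Gmat s N k M * LMmat s N k M = Lmat s N M - LMmat s N k M := by
  have h1 : Gmat s N k M * LMmat s N k M =
      Matrix.of (fun p q : Fin (N + 1) × Fin s =>
        (∑ t : Fin (N + 1), Gb k M p.1 t * LMb k M t q.1) p.2 q.2) := by
    rw [LMmat_of]
    exact blockMul (fun a b => Gb k M a b) (fun a b => LMb k M a b)
  rw [h1, Lmat_of, LMmat_of]
  ext ⟨p1, p2⟩ ⟨q1, q2⟩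
  rw [Matrix.sub_apply, Matrix.of_apply, Matrix.of_apply, Matrix.of_apply,
    key1 N k hk M p1 q1, Matrix.sub_apply]

theorem hAM (N k : ℕ) (hk : 1 ≤ k) (M : ℕ → Matrix (Fin s) (Fin s) ℝ) :
    AMmat s N k M = Gmat s N k M + (Gmat s N k M)ᵀ + (Gmat s N k M)ᵀ * Gmat s N k M := by
  have h1 : (Gmat s N k M)ᵀ * Gmat s N k M =
      Matrix.of (fun p q : Fin (N + 1) × Fin s =>
        (∑ t : Fin (N + 1), (Gb k M t p.1)ᵀ * Gb k M t q.1) p.2 q.2) :=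
    blockMul (fun a b => (Gb k M b a)ᵀ) (fun a b => Gb k M a b)
  rw [h1]
  ext ⟨p1, p2⟩ ⟨q1, q2⟩
  have hL : (AMmat s N k M) (p1, p2) (q1, q2) =
      (∑ n ∈ Finset.Icc 1 (N / k), Ablock k M n ((p1 : ℕ) + 1) ((q1 : ℕ) + 1)) p2 q2 := by
    simp [AMmat, Matrix.sum_apply]
  rw [hL, key2nat N k hk M p1 q1 p1.is_le q1.is_le, ← sumGt N k hk M p1 q1]
  simp [Gmat, Matrix.add_apply, Matrix.transpose_apply, Matrix.of_apply, Matrix.sum_apply]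

theorem nilpow (N k : ℕ) (M : ℕ → Matrix (Fin s) (Fin s) ℝ) :
    ∀ (m : ℕ) (p q : Fin (N + 1) × Fin s),
      (p.1 : ℕ) < (q.1 : ℕ) + m → ((LMmat s N k M - 1) ^ m) p q = 0 := by
  intro m
  induction m with
  | zero =>
    intro p q h
    rw [pow_zero]
    refine Matrix.one_apply_ne fun he => ?_
    rw [he] at h
    omega
  | succ m ih =>
    intro p q h
    rw [pow_succ, Matrix.mul_apply]
    apply Finset.sum_eq_zero
    intro t _
    by_cases ht : (t.1 : ℕ) = (q.1 : ℕ) + 1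
    · rw [ih p t (by omega), zero_mul]
    · have hX : (LMmat s N k M - 1) t q = 0 := by
        obtain ⟨t1, t2⟩ := t
        obtain ⟨q1, q2⟩ := q
        rw [Matrix.sub_apply]
        by_cases h1 : t1 = q1
        · by_cases h2 : t2 = q2 <;>
            simp [LMmat, Matrix.one_apply, Prod.ext_iff, h1, h2]
        · simp only [LMmat, Matrix.of_apply, Matrix.one_apply, Prod.ext_iff]
          simp [h1, ht]
      rw [hX, mul_zero]

theorem LM_isUnit (N k : ℕ) (M : ℕ → Matrix (Fin s) (Fin s) ℝ) :
    IsUnit (LMmat s N k M) := by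
  have hnil : IsNilpotent (LMmat s N k M - 1) := by
    refine ⟨N + 1, ?_⟩
    ext p q
    rw [Matrix.zero_apply]
    exact nilpow N k M (N + 1) p q (by have := p.1.is_le; omega)
  have h := hnil.isUnit_one_add
  rwa [show (1 : Matrix (Fin (N + 1) × Fin s) (Fin (N + 1) × Fin s) ℝ) +
      (LMmat s N k M - 1) = LMmat s N k M from by abel] at h

end LMaux


open LMaux in
/-- Lemma 4.3: `L_M` is invertible and `L_M⁻ᵀ Lᵀ L L_M⁻¹ = I + A(M)`. -/
theorem LM_preconditioned_normal_matrix (s N k : ℕ) (hs : 1 ≤ s) (hN : 1 ≤ N)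
    (hk1 : 1 ≤ k) (hk2 : k ≤ N + 1)
    (M : ℕ → Matrix (Fin s) (Fin s) ℝ) :
    IsUnit (LMmat s N k M).det ∧
      ((LMmat s N k M)⁻¹)ᵀ * (Lmat s N M)ᵀ * Lmat s N M * (LMmat s N k M)⁻¹
        = 1 + AMmat s N k M := by
  have hdet : IsUnit (LMmat s N k M).det :=
    (Matrix.isUnit_iff_isUnit_det _).1 (LM_isUnit N k M)
  refine ⟨hdet, ?_⟩
  have hL : Lmat s N M = (1 + Gmat s N k M) * LMmat s N k M := by
    rw [add_mul, one_mul, hGmul N k hk1 M]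
    abel
  have hA : (1 : Matrix (Fin (N + 1) × Fin s) (Fin (N + 1) × Fin s) ℝ) + AMmat s N k M
      = (1 + Gmat s N k M)ᵀ * (1 + Gmat s N k M) := by
    rw [hAM N k hk1 M, Matrix.transpose_add, Matrix.transpose_one]
    noncomm_ring
  have h1 : LMmat s N k M * (LMmat s N k M)⁻¹ = 1 := Matrix.mul_nonsing_inv _ hdet
  have h2 : ((LMmat s N k M)⁻¹)ᵀ * (LMmat s N k M)ᵀ = 1 := by
    rw [← Matrix.transpose_mul, h1, Matrix.transpose_one]
  rw [hL, Matrix.transpose_mul, hA]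
  have h3 : ((LMmat s N k M)⁻¹)ᵀ * ((LMmat s N k M)ᵀ * (1 + Gmat s N k M)ᵀ) *
        ((1 + Gmat s N k M) * LMmat s N k M) * (LMmat s N k M)⁻¹
      = (((LMmat s N k M)⁻¹)ᵀ * (LMmat s N k M)ᵀ) *
          ((1 + Gmat s N k M)ᵀ * (1 + Gmat s N k M)) *
          (LMmat s N k M * (LMmat s N k M)⁻¹) := by
    noncomm_ring
  rw [h3, h1, h2, one_mul, mul_one]
end

section
/- Let s, N ≥ 1 and let k be an integer with 2 ≤ k ≤ N+1. Let M_1, …, M_N ∈ ℝ^{s×s}. Let L ∈ ℝ^{(N+1)s×(N+1)s} be the block lower bidiagonal matrix with identity s×s blocks on the diagonal and blocks −M_i (for i = 1, …, N) on the first subdiagonal, and let L_M = L_M(k) be the block matrix whose (i,j)th block equals the identity I if i = j, equals −M_j if i = j+1 and j is not divisible by k, and equals the zero matrix otherwise. Set r = N + 1 − 2⌊N/k⌋. Then the symmetric matrix L_M⁻ᵀ Lᵀ L L_M⁻¹ has the eigenvalue 1 with multiplicity at least rs; that is, the eigenspace { v : L_M⁻ᵀ Lᵀ L L_M⁻¹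 v = v } has dimension at least rs. -/
open Matrix

lemma Dmat_support (s N k : ℕ) (M : ℕ → Matrix (Fin s) (Fin s) ℝ)
    (p q : Fin (N + 1) × Fin s)
    (hq : ¬ (k ∣ ((q.1 : ℕ) + 1) ∧ (q.1 : ℕ) + 1 ≤ N)) :
    (Lmat s N M - LMmat s N k M) p q = 0 := by
  simp only [Matrix.sub_apply, Lmat, LMmat, of_apply]
  by_cases h1 : p.1 = q.1
  · rw [if_pos h1, if_pos h1, sub_self]
  · rw [if_neg h1, if_neg h1]
    by_cases h2 : (p.1 : ℕ) = (q.1 : ℕ) + 1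
    · have hle : (q.1 : ℕ) + 1 ≤ N := by have := p.1.isLt; omega
      have hdvd : ¬ k ∣ ((q.1 : ℕ) + 1) := fun hd => hq ⟨hd, hle⟩
      rw [if_pos h2, if_pos ⟨h2, hdvd⟩, sub_self]
    · rw [if_neg h2, if_neg (fun h => h2 h.1), sub_self]

lemma card_good (N k : ℕ) :
    Fintype.card {i : Fin (N + 1) // k ∣ ((i : ℕ) + 1) ∧ (i : ℕ) + 1 ≤ N} = N / k := by
  rw [Fintype.card_subtype, ← Nat.Ioc_filter_dvd_card_eq_div N k]
  refine Finset.card_bij (fun i _ => (i : ℕ) + 1) ?_ ?_ ?_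
  · intro a ha
    simp only [Finset.mem_filter, Finset.mem_univ, true_and] at ha
    simp only [Finset.mem_filter, Finset.mem_Ioc]
    exact ⟨⟨Nat.succ_pos _, ha.2⟩, ha.1⟩
  · intro a _ b _ h
    have h' : (a : ℕ) + 1 = (b : ℕ) + 1 := h
    exact Fin.val_injective (by omega)
  · intro b hb
    simp only [Finset.mem_filter, Finset.mem_Ioc] at hb
    have hb1 : 0 < b := hb.1.1
    have hb2 : b ≤ N := hb.1.2
    refine ⟨⟨b - 1, by omega⟩, ?_, ?_⟩
    · simp only [Finset.mem_filter, Finset.mem_univ, true_and]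
      show k ∣ (b - 1) + 1 ∧ (b - 1) + 1 ≤ N
      have hbb : b - 1 + 1 = b := by omega
      rw [hbb]
      exact ⟨hb.2, hb2⟩
    · show b - 1 + 1 = b
      omega

lemma Dmat_rank_le (s N k : ℕ) (M : ℕ → Matrix (Fin s) (Fin s) ℝ) :
    (Lmat s N M - LMmat s N k M).rank ≤ (N / k) * s := by
  classical
  set D := Lmat s N M - LMmat s N k M with hD
  set P : Fin (N + 1) × Fin s → Prop := fun q => k ∣ ((q.1 : ℕ) + 1) ∧ (q.1 : ℕ) + 1 ≤ N with hP
  set C : Matrix (Fin (N + 1) × Fin s) {q // P q} ℝ := Matrix.of fun p t => D p t.1 with hC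
  set Pm : Matrix {q // P q} (Fin (N + 1) × Fin s) ℝ :=
    Matrix.of fun t q => if t.1 = q then 1 else 0 with hPm
  have hfac : D = C * Pm := by
    ext p q
    rw [Matrix.mul_apply]
    by_cases hq : P q
    · rw [Finset.sum_eq_single (⟨q, hq⟩ : {q // P q})]
      · simp [hC, hPm]
      · intro t _ ht
        have : (t : Fin (N + 1) × Fin s) ≠ q := fun h => ht (Subtype.ext h)
        simp [hC, hPm, this]
      · intro h; exact absurd (Finset.mem_univ _) h
    · have h0 : D p q = 0 := Dmat_support s N k M p q hq
      rw [h0]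
      symm
      apply Finset.sum_eq_zero
      intro t _
      have : (t : Fin (N + 1) × Fin s) ≠ q := fun h => hq (h ▸ t.2)
      simp [hC, hPm, this]
  have hcard : Fintype.card {q // P q} = (N / k) * s := by
    have e : {q // P q} ≃ {i : Fin (N + 1) // k ∣ ((i : ℕ) + 1) ∧ (i : ℕ) + 1 ≤ N} × Fin s :=
      { toFun := fun q => (⟨q.1.1, q.2⟩, q.1.2)
        invFun := fun x => ⟨(x.1.1, x.2), x.1.2⟩
        left_inv := fun _ => rfl
        right_inv := fun _ => rfl }
    rw [Fintype.card_congr e, Fintype.card_prod, card_good, Fintype.card_fin]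
  calc D.rank = (C * Pm).rank := by rw [← hfac]
    _ ≤ C.rank := Matrix.rank_mul_le_left C Pm
    _ ≤ Fintype.card {q // P q} := Matrix.rank_le_card_width C
    _ = (N / k) * s := hcard

lemma LMmat_det (s N k : ℕ) (M : ℕ → Matrix (Fin s) (Fin s) ℝ) :
    (LMmat s N k M).det = 1 := by
  rw [← Matrix.det_transpose]
  have hbt : ((LMmat s N k M)ᵀ).BlockTriangular (fun p => p.1) := by
    intro p q h
    have h' : (q.1 : ℕ) < (p.1 : ℕ) := h
    simp only [transpose_apply, LMmat, of_apply]
    rw [if_neg (by intro e; rw [e] at h'; omega), if_neg (by rintro ⟨h1, -⟩; omega)]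
  rw [hbt.det]
  apply Finset.prod_eq_one
  intro a _
  have : ((LMmat s N k M)ᵀ).toSquareBlock (fun p => p.1) a = 1 := by
    ext i j
    have hi : (i : Fin (N+1) × Fin s).1 = a := i.2
    have hj : (j : Fin (N+1) × Fin s).1 = a := j.2
    simp only [Matrix.toSquareBlock, Matrix.toSquareBlockProp, transpose_apply,
      LMmat, of_apply, Matrix.toBlock_apply, Matrix.one_apply]
    rw [if_pos (hj.trans hi.symm)]
    by_cases h2 : (j : Fin (N+1) × Fin s).2 = (i : Fin (N+1) × Fin s).2
    · rw [if_pos h2, if_pos]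
      exact Subtype.ext (Prod.ext (hi.trans hj.symm) h2.symm)
    · rw [if_neg h2, if_neg]
      intro e
      exact h2 (congrArg (fun x => (x : Fin (N+1) × Fin s).2) (congrArg Subtype.val e)).symm
  rw [this, Matrix.det_one]


/-- Proposition 4.4: for `2 ≤ k ≤ N+1`, the matrix `L_M⁻ᵀ Lᵀ L L_M⁻¹` has the
eigenvalue `1` with multiplicity at least `r·s`, where `r = N + 1 − 2⌊N/k⌋`;
i.e. its eigenspace for the eigenvalue `1` has dimension at least `r·s`. -/
theorem LM_unit_eigenvalue_multiplicity (s N k : ℕ) (hs : 1 ≤ s) (hN : 1 ≤ N)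
    (hk1 : 2 ≤ k) (hk2 : k ≤ N + 1)
    (M : ℕ → Matrix (Fin s) (Fin s) ℝ) :
    (N + 1 - 2 * (N / k)) * s ≤
      Module.finrank ℝ
        (Module.End.eigenspace
          (Matrix.toLin'
            (((LMmat s N k M)⁻¹)ᵀ * (Lmat s N M)ᵀ * Lmat s N M * (LMmat s N k M)⁻¹))
          1) := by
  classical
  set L := Lmat s N M with hLdef
  set LM := LMmat s N k M with hLMdef
  have hdet : IsUnit LM.det := by rw [hLMdef, LMmat_det]; exact isUnit_one
  have hinv : LM * LM⁻¹ = 1 := Matrix.mul_nonsing_inv _ hdet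
  set D := L - LM with hDdef
  set E := D * LM⁻¹ with hEdef
  have hLLMi : L * LM⁻¹ = 1 + E := by
    rw [hEdef, hDdef, Matrix.sub_mul, ← hinv]
    abel
  have hG : (LM⁻¹)ᵀ * Lᵀ * L * LM⁻¹ = 1 + E + Eᵀ + Eᵀ * E := by
    have h1 : (LM⁻¹)ᵀ * Lᵀ * L * LM⁻¹ = (L * LM⁻¹)ᵀ * (L * LM⁻¹) := by
      rw [Matrix.transpose_mul, Matrix.mul_assoc]
    rw [h1, hLLMi, Matrix.transpose_add, Matrix.transpose_one]
    noncomm_ring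
  have hsub : LinearMap.ker (Matrix.toLin' E) ⊓ LinearMap.ker (Matrix.toLin' Eᵀ) ≤
      Module.End.eigenspace (Matrix.toLin' ((LM⁻¹)ᵀ * Lᵀ * L * LM⁻¹)) 1 := by
    intro v hv0
    rw [Submodule.mem_inf, LinearMap.mem_ker, LinearMap.mem_ker,
      Matrix.toLin'_apply, Matrix.toLin'_apply] at hv0
    obtain ⟨hu', hv'⟩ := hv0
    rw [Module.End.mem_eigenspace_iff, one_smul, Matrix.toLin'_apply, hG]
    have h4 : (Eᵀ * E) *ᵥ v = 0 := by
      rw [← Matrix.mulVec_mulVec, hu', Matrix.mulVec_zero]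
    rw [Matrix.add_mulVec, Matrix.add_mulVec, Matrix.add_mulVec, Matrix.one_mulVec,
      hu', hv', h4]
    simp
  have hmono := Submodule.finrank_mono hsub
  have hErank : E.rank ≤ (N / k) * s :=
    le_trans (Matrix.rank_mul_le_left D LM⁻¹) (Dmat_rank_le s N k M)
  have hETrank : Eᵀ.rank ≤ (N / k) * s := by rw [Matrix.rank_transpose]; exact hErank
  have hpidim : Module.finrank ℝ ((Fin (N + 1) × Fin s) → ℝ) = (N + 1) * s := by
    rw [Module.finrank_pi, Fintype.card_prod, Fintype.card_fin, Fintype.card_fin]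
  have hU : Module.finrank ℝ (LinearMap.ker (Matrix.toLin' E)) + E.rank = (N + 1) * s := by
    have h := LinearMap.finrank_range_add_finrank_ker (Matrix.toLin' E)
    have heq : Matrix.toLin' E = E.mulVecLin := Matrix.toLin'_apply' E
    rw [hpidim] at h
    rw [Matrix.rank, ← heq]
    omega
  have hV : Module.finrank ℝ (LinearMap.ker (Matrix.toLin' Eᵀ)) + Eᵀ.rank = (N + 1) * s := by
    have h := LinearMap.finrank_range_add_finrank_ker (Matrix.toLin' Eᵀ)
    have heq : Matrix.toLin' Eᵀ = (Eᵀ).mulVecLin := Matrix.toLin'_apply' Eᵀ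
    rw [hpidim] at h
    rw [Matrix.rank, ← heq]
    omega
  have hsup : Module.finrank ℝ
      (LinearMap.ker (Matrix.toLin' E) ⊔ LinearMap.ker (Matrix.toLin' Eᵀ) :
        Submodule ℝ _) ≤ (N + 1) * s := by
    rw [← hpidim]
    exact Submodule.finrank_le _
  have hinf := Submodule.finrank_sup_add_finrank_inf_eq
    (LinearMap.ker (Matrix.toLin' E)) (LinearMap.ker (Matrix.toLin' Eᵀ))
  have hdvd2 : 2 * (N / k) ≤ N + 1 := by
    have h1 : N / k ≤ N / 2 := Nat.div_le_div_left hk1 two_pos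
    have h2 : N / 2 * 2 ≤ N := Nat.div_mul_le_self N 2
    omega
  have key : (N + 1 - 2 * (N / k)) * s = (N + 1) * s - 2 * ((N / k) * s) := by
    rw [Nat.sub_mul, mul_assoc]
  rw [key]
  generalize hnn : (N + 1) * s = nn at hU hV hsup
  generalize hmm : (N / k) * s = mm at hErank hETrank
  omega
end

section
/- Let s, N ≥ 1 and let k be an integer with 1 ≤ k ≤ N+1. Let M_1, …, M_N ∈ ℝ^{s×s} satisfy ‖M_i M_iᵀ‖₂ ≤ 1 for all i = 1, …, N, where ‖·‖₂ denotes the spectral norm. Let L ∈ ℝ^{(N+1)s×(N+1)s} be the block lower bidiagonal matrix with identity s×s blocks on the diagonal and blocks −M_i (for i = 1, …, N) on the first subdiagonal, and let L_M = L_M(k) be the block matrix whose (i,j)th block equals the identity I if i = j, equals −M_j if i = j+1 and j is not divisible by k, and equals the zero matrix otherwise. Then every eigenvalue of the symmetric matrix L_M⁻ᵀ Lᵀ L L_M⁻¹ is at most k + 1 + 2√k. -/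
open Matrix

lemma contract {s : ℕ} (A : Matrix (Fin s) (Fin s) ℝ)
    (h : ∀ (μ : ℝ) (v : Fin s → ℝ), v ≠ 0 → (A * Aᵀ) *ᵥ v = μ • v → μ ≤ 1)
    (x : Fin s → ℝ) : ∑ a, ((A *ᵥ x) a) ^ 2 ≤ ∑ a, (x a) ^ 2 := by
  have hAA : (Aᵀ * A).IsHermitian := by
    rw [← conjTranspose_eq_transpose_of_trivial]
    exact isHermitian_conjTranspose_mul_self A
  have hC : (1 - Aᵀ * A : Matrix (Fin s) (Fin s) ℝ).IsHermitian :=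
    (isHermitian_one).sub hAA
  have heig : ∀ j, 0 ≤ hC.eigenvalues j := by
    intro j
    set lam := hC.eigenvalues j with hlam
    set v : Fin s → ℝ := ⇑(hC.eigenvectorBasis j) with hv
    have hvne : v ≠ 0 := by
      have h2 := hC.eigenvectorBasis.orthonormal.ne_zero j
      intro hcon
      apply h2
      ext a
      exact congrFun hcon a
    have hmv : (1 - Aᵀ * A) *ᵥ v = lam • v := hC.mulVec_eigenvectorBasis j
    have hmv' : (Aᵀ * A) *ᵥ v = (1 - lam) • v := by
      have h3 : (1 - Aᵀ * A) *ᵥ v = v - (Aᵀ * A) *ᵥ v := by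
        rw [sub_mulVec, one_mulVec]
      rw [h3] at hmv
      rw [sub_smul, one_smul, ← hmv]
      abel
    by_cases hAv : A *ᵥ v = 0
    · have h5 : (1 - lam) • v = 0 := by
        rw [← hmv', ← mulVec_mulVec, hAv, mulVec_zero]
      have h1 : (1 : ℝ) - lam = 0 := by
        by_contra hne
        exact hvne ((smul_eq_zero.mp h5).resolve_left hne)
      nlinarith [h1]
    · have heq : (A * Aᵀ) *ᵥ (A *ᵥ v) = (1 - lam) • (A *ᵥ v) := by
        rw [mulVec_mulVec, mul_assoc, ← mulVec_mulVec, hmv', mulVec_smul]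
      have := h (1 - lam) (A *ᵥ v) hAv heq
      linarith
  have hps : (1 - Aᵀ * A : Matrix (Fin s) (Fin s) ℝ).PosSemidef :=
    hC.posSemidef_iff_eigenvalues_nonneg.mpr heig
  have h6 := hps.dotProduct_mulVec_nonneg x
  rw [star_trivial] at h6
  have h7 : x ⬝ᵥ ((1 - Aᵀ * A) *ᵥ x) = x ⬝ᵥ x - (A *ᵥ x) ⬝ᵥ (A *ᵥ x) := by
    rw [sub_mulVec, one_mulVec, dotProduct_sub, ← mulVec_mulVec,
      dotProduct_mulVec, vecMul_transpose]
  rw [h7] at h6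
  have h8 : (A *ᵥ x) ⬝ᵥ (A *ᵥ x) = ∑ a, ((A *ᵥ x) a) ^ 2 := by
    simp [dotProduct, pow_two]
  have h9 : x ⬝ᵥ x = ∑ a, (x a) ^ 2 := by simp [dotProduct, pow_two]
  rw [h8, h9] at h6
  linarith

lemma LM_isUnit (s N k : ℕ) (M : ℕ → Matrix (Fin s) (Fin s) ℝ) :
    IsUnit (LMmat s N k M) := by
  set n : Matrix (Fin (N+1) × Fin s) (Fin (N+1) × Fin s) ℝ := LMmat s N k M - 1 with hn
  have hsub : ∀ p q, n p q ≠ 0 → (p.1 : ℕ) = (q.1 : ℕ) + 1 := by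
    intro p q h
    by_contra hne
    apply h
    rw [hn]
    by_cases h1 : p.1 = q.1
    · by_cases h2 : p.2 = q.2
      · have : p = q := Prod.ext h1 h2
        simp [LMmat, Matrix.sub_apply, this, Matrix.one_apply]
      · have : p ≠ q := fun hc => h2 (congrArg Prod.snd hc)
        simp [LMmat, Matrix.sub_apply, Matrix.one_apply, h1, h2, this]
    · have : p ≠ q := fun hc => h1 (congrArg Prod.fst hc)
      simp [LMmat, Matrix.sub_apply, Matrix.one_apply, h1, this, hne]
  have key : ∀ m (p q : Fin (N+1) × Fin s), (n ^ m) p q ≠ 0 → (q.1 : ℕ) + m ≤ (p.1 : ℕ) := by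
    intro m
    induction m with
    | zero =>
      intro p q h
      rw [pow_zero] at h
      have : p = q := by
        by_contra hc
        exact h (Matrix.one_apply_ne hc)
      simp [this]
    | succ m ih =>
      intro p q h
      rw [pow_succ, Matrix.mul_apply] at h
      obtain ⟨r, -, hr⟩ := Finset.exists_ne_zero_of_sum_ne_zero h
      have h1 : (n ^ m) p r ≠ 0 := fun hc => hr (by rw [hc, zero_mul])
      have h2 : n r q ≠ 0 := fun hc => hr (by rw [hc, mul_zero])
      have := ih p r h1
      have := hsub r q h2
      omega
  have hnil : IsNilpotent n := by
    refine ⟨N + 1, ?_⟩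
    ext p q
    by_contra h
    have h2 : ((n ^ (N+1)) p q : ℝ) ≠ 0 := by simpa using h
    have := key (N+1) p q h2
    have := p.1.isLt
    omega
  have : LMmat s N k M = 1 + n := by rw [hn]; abel
  rw [this]
  exact hnil.isUnit_one_add

lemma bidiag_mulVec (s N : ℕ) (M : ℕ → Matrix (Fin s) (Fin s) ℝ) (c : ℕ → Prop)
    [DecidablePred c]
    (A : Matrix (Fin (N+1) × Fin s) (Fin (N+1) × Fin s) ℝ)
    (hA : ∀ p q, A p q = if p.1 = q.1 then (if p.2 = q.2 then (1:ℝ) else 0)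
        else if (p.1 : ℕ) = (q.1 : ℕ) + 1 ∧ c ((q.1 : ℕ) + 1) then
          -(M ((q.1 : ℕ) + 1) p.2 q.2) else 0)
    (w : Fin (N+1) × Fin s → ℝ) (i : Fin (N+1)) (a : Fin s) :
    (A *ᵥ w) (i, a) = w (i, a) - (if 1 ≤ (i : ℕ) ∧ c (i : ℕ) then
        ∑ b, M (i : ℕ) a b *
          w (⟨(i : ℕ) - 1, Nat.lt_of_le_of_lt (Nat.sub_le _ _) i.isLt⟩, b) else 0) := by
  have hmv : (A *ᵥ w) (i, a) = ∑ j : Fin (N+1), ∑ b : Fin s, A (i, a) (j, b) * w (j, b) := by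
    rw [mulVec]
    rw [dotProduct]
    rw [Fintype.sum_prod_type]
  rw [hmv]
  set f : Fin (N+1) → ℝ := fun j => ∑ b : Fin s, A (i, a) (j, b) * w (j, b) with hf
  have hfi : f i = w (i, a) := by
    rw [hf]
    simp only
    rw [Finset.sum_eq_single a]
    · rw [hA]; simp
    · intro b _ hb
      rw [hA]; simp [hb.symm]
    · intro hc; exact absurd (Finset.mem_univ a) hc
  by_cases hcase : 1 ≤ (i : ℕ) ∧ c (i : ℕ)
  · set i' : Fin (N+1) := ⟨(i : ℕ) - 1, Nat.lt_of_le_of_lt (Nat.sub_le _ _) i.isLt⟩ with hi'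
    have hii' : i' ≠ i := by
      intro hc
      have := congrArg (Fin.val) hc
      simp [hi'] at this
      omega
    have hfi' : f i' = -∑ b, M (i : ℕ) a b * w (i', b) := by
      rw [hf]
      simp only
      rw [← Finset.sum_neg_distrib]
      apply Finset.sum_congr rfl
      intro b _
      rw [hA]
      have h1 : (i : ℕ) = (i' : ℕ) + 1 := by simp [hi']; omega
      have h2 : ((i, a) : Fin (N+1) × Fin s).1 ≠ ((i', b) : Fin (N+1) × Fin s).1 := by
        simpa using fun hc => hii' hc.symm
      rw [if_neg h2, if_pos ⟨h1, by rw [← h1]; exact hcase.2⟩, ← h1]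
      ring
    have hother : ∀ j : Fin (N+1), j ≠ i → j ≠ i' → f j = 0 := by
      intro j hji hji'
      rw [hf]
      simp only
      apply Finset.sum_eq_zero
      intro b _
      rw [hA]
      have h1 : ¬ ((i, a).1 = (j, b).1) := by simpa using fun hc => hji hc.symm
      have h2 : ¬ ((i : ℕ) = (j : ℕ) + 1 ∧ c ((j : ℕ) + 1)) := by
        rintro ⟨hc, -⟩
        apply hji'
        apply Fin.ext
        simp [hi']
        omega
      simp only [h1, if_false, h2, if_false, zero_mul]
    have hsum : ∑ j, f j = f i + f i' := by
      rw [← Finset.add_sum_erase _ f (Finset.mem_univ i)]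
      congr 1
      rw [Finset.sum_eq_single_of_mem i' (Finset.mem_erase.mpr ⟨hii', Finset.mem_univ i'⟩)]
      intro j hj hji'
      exact hother j (Finset.mem_erase.mp hj).1 hji'
    rw [hsum, hfi, hfi', if_pos hcase]
    ring
  · rw [if_neg hcase, sub_zero]
    rw [Finset.sum_eq_single_of_mem i (Finset.mem_univ i)]
    · exact hfi
    intro j _ hji
    apply Finset.sum_eq_zero
    intro b _
    rw [hA]
    have h1 : ¬ ((i, a).1 = (j, b).1) := by simpa using fun hc => hji hc.symm
    have h2 : ¬ ((i : ℕ) = (j : ℕ) + 1 ∧ c ((j : ℕ) + 1)) := by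
      rintro ⟨hc, hcc⟩
      apply hcase
      constructor
      · omega
      · rw [← hc] at hcc; exact hcc
    simp only [h1, if_false, h2, if_false, zero_mul]

lemma nsq_triangle {s : ℕ} (x y : Fin s → ℝ) :
    Real.sqrt (∑ a, (x a + y a) ^ 2) ≤
      Real.sqrt (∑ a, x a ^ 2) + Real.sqrt (∑ a, y a ^ 2) := by
  have hx : (0:ℝ) ≤ ∑ a, x a ^ 2 := Finset.sum_nonneg fun a _ => sq_nonneg _
  have hy : (0:ℝ) ≤ ∑ a, y a ^ 2 := Finset.sum_nonneg fun a _ => sq_nonneg _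
  have hcs : ∑ a, x a * y a ≤ Real.sqrt (∑ a, x a ^ 2) * Real.sqrt (∑ a, y a ^ 2) :=
    Real.sum_mul_le_sqrt_mul_sqrt _ _ _
  have hle : ∑ a, (x a + y a) ^ 2 ≤
      (Real.sqrt (∑ a, x a ^ 2) + Real.sqrt (∑ a, y a ^ 2)) ^ 2 := by
    have hexp : ∑ a, (x a + y a) ^ 2 = ∑ a, x a ^ 2 + 2 * ∑ a, x a * y a + ∑ a, y a ^2 := by
      rw [Finset.mul_sum, ← Finset.sum_add_distrib, ← Finset.sum_add_distrib]
      apply Finset.sum_congr rfl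
      intro a _
      ring
    rw [hexp, add_sq, Real.sq_sqrt hx, Real.sq_sqrt hy]
    nlinarith [hcs]
  calc Real.sqrt (∑ a, (x a + y a) ^ 2)
      ≤ Real.sqrt ((Real.sqrt (∑ a, x a ^ 2) + Real.sqrt (∑ a, y a ^ 2)) ^ 2) :=
        Real.sqrt_le_sqrt hle
    _ = _ := Real.sqrt_sq (by positivity)

lemma chain (k N : ℕ) (a b : ℕ → ℝ)
    (h1 : ∀ t, t ≤ N → (t = 0 ∨ k ∣ t) → a t = b t)
    (h2 : ∀ t, t ≤ N → 1 ≤ t → ¬ k ∣ t → a t ≤ b t + a (t - 1)) :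
    ∀ t, t ≤ N → a t ≤ ∑ j ∈ Finset.Icc (k * (t / k)) t, b j := by
  intro t
  induction t with
  | zero =>
    intro h
    rw [h1 0 h (Or.inl rfl)]
    simp
  | succ t ih =>
    intro h
    by_cases hdvd : k ∣ (t + 1)
    · rw [h1 (t + 1) h (Or.inr hdvd)]
      rw [Nat.mul_div_cancel' hdvd, Finset.Icc_self, Finset.sum_singleton]
    · have hq : (t + 1) / k = t / k := by rw [Nat.succ_div, if_neg hdvd, add_zero]
      have hle : k * (t / k) ≤ t := by
        rw [mul_comm]; exact Nat.div_mul_le_self t k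
      have hins : Finset.Icc (k * ((t + 1) / k)) (t + 1) =
          insert (t + 1) (Finset.Icc (k * (t / k)) t) := by
        rw [hq]
        ext x
        simp only [Finset.mem_Icc, Finset.mem_insert]
        omega
      have hnm : (t + 1) ∉ Finset.Icc (k * (t / k)) t := by
        simp [Finset.mem_Icc]
      rw [hins, Finset.sum_insert hnm]
      have ht1 : a (t + 1) ≤ b (t + 1) + a t := by
        have := h2 (t + 1) h (by omega) hdvd
        simpa using this
      have := ih (by omega)
      linarith

lemma seg_sum (k N : ℕ) (hk : 1 ≤ k) (g : ℕ → ℝ) (hg : ∀ j, 0 ≤ g j) :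
    ∑ t ∈ (Finset.range (N + 1)).filter (fun t => 1 ≤ t ∧ k ∣ t),
      (∑ j ∈ Finset.Icc (k * ((t - 1) / k)) (t - 1), g j) ≤
    ∑ j ∈ Finset.range (N + 1), g j := by
  set D := (Finset.range (N + 1)).filter (fun t => 1 ≤ t ∧ k ∣ t) with hD
  have hIcc : ∀ t ∈ D, Finset.Icc (k * ((t - 1) / k)) (t - 1) = Finset.Ico (t - k) t := by
    intro t ht
    rw [hD, Finset.mem_filter, Finset.mem_range] at ht
    obtain ⟨htN, ht1, m, rfl⟩ := ht
    rcases m with _ | m'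
    · simp at ht1
    · have hdiv : (k * (m' + 1) - 1) / k = m' := by
        apply Nat.div_eq_of_lt_le
        · have h1 : k * m' + k = k * (m' + 1) := by ring
          have h2 : m' * k = k * m' := mul_comm _ _
          omega
        · have h1 : (m' + 1) * k = k * (m' + 1) := mul_comm _ _
          have h2 : Nat.succ m' * k = (m' + 1) * k := rfl
          omega
      rw [hdiv]
      have h3 : k * m' = k * (m' + 1) - k := by
        have h4 : k * m' + k = k * (m' + 1) := by ring
        omega
      rw [h3]
      ext x
      simp only [Finset.mem_Icc, Finset.mem_Ico]
      omega
  have hsep : ∀ t t', k ∣ t → k ∣ t' → t < t' → t + k ≤ t' := by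
    rintro t t' ⟨c, rfl⟩ ⟨c', rfl⟩ hlt
    have hcc : c < c' := lt_of_mul_lt_mul_left hlt (Nat.zero_le k)
    have : k * (c + 1) ≤ k * c' := Nat.mul_le_mul_left k (by omega)
    have h5 : k * (c + 1) = k * c + k := by ring
    omega
  have hdisj : (↑D : Set ℕ).PairwiseDisjoint (fun t => Finset.Ico (t - k) t) := by
    intro t ht t' ht' hne
    rw [Finset.mem_coe, hD, Finset.mem_filter] at ht ht'
    simp only [Function.onFun]
    refine Finset.disjoint_left.mpr (fun x hx hx' => ?_)
    rw [Finset.mem_Ico] at hx hx'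
    rcases lt_or_gt_of_ne hne with h | h
    · have := hsep t t' ht.2.2 ht'.2.2 h
      omega
    · have := hsep t' t ht'.2.2 ht.2.2 h
      omega
  calc ∑ t ∈ D, (∑ j ∈ Finset.Icc (k * ((t - 1) / k)) (t - 1), g j)
      = ∑ t ∈ D, (∑ j ∈ Finset.Ico (t - k) t, g j) :=
        Finset.sum_congr rfl (fun t ht => by rw [hIcc t ht])
    _ = ∑ j ∈ D.biUnion (fun t => Finset.Ico (t - k) t), g j :=
        (Finset.sum_biUnion hdisj).symm
    _ ≤ ∑ j ∈ Finset.range (N + 1), g j := by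
        apply Finset.sum_le_sum_of_subset_of_nonneg
        · intro x hx
          rw [Finset.mem_biUnion] at hx
          obtain ⟨t, ht, hxt⟩ := hx
          rw [hD, Finset.mem_filter, Finset.mem_range] at ht
          rw [Finset.mem_Ico] at hxt
          rw [Finset.mem_range]
          omega
        · intro j _ _
          exact hg j

lemma fin_sum_ext (n : ℕ) (F : Fin n → ℝ) :
    ∑ i, F i = ∑ t ∈ Finset.range n, (if h : t < n then F ⟨t, h⟩ else 0) := by
  rw [← Fin.sum_univ_eq_sum_range (fun t => if h : t < n then F ⟨t, h⟩ else 0) n]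
  apply Finset.sum_congr rfl
  intro i _
  rw [dif_pos i.isLt]


/-- Proposition 4.5: if `‖M_i M_iᵀ‖₂ ≤ 1` for all `i` (expressed here, since each
`M_i M_iᵀ` is symmetric positive semidefinite, as: every eigenvalue of `M_i M_iᵀ`
is at most `1`), then every eigenvalue of `L_M⁻ᵀ Lᵀ L L_M⁻¹` is at most
`k + 1 + 2√k`. -/
theorem LM_eigenvalue_upper_bound (s N k : ℕ) (hs : 1 ≤ s) (hN : 1 ≤ N)
    (hk1 : 1 ≤ k) (hk2 : k ≤ N + 1)
    (M : ℕ → Matrix (Fin s) (Fin s) ℝ)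
    (hM : ∀ i, 1 ≤ i → i ≤ N → ∀ (μ : ℝ) (v : Fin s → ℝ), v ≠ 0 →
      (M i * (M i)ᵀ) *ᵥ v = μ • v → μ ≤ 1) :
    ∀ (μ : ℝ) (v : Fin (N + 1) × Fin s → ℝ), v ≠ 0 →
      (((LMmat s N k M)⁻¹)ᵀ * (Lmat s N M)ᵀ * Lmat s N M * (LMmat s N k M)⁻¹) *ᵥ v
        = μ • v →
      μ ≤ (k : ℝ) + 1 + 2 * Real.sqrt k := by
  intro μ v hv hveq
  classical
  set X := LMmat s N k M with hXdef
  set L := Lmat s N M with hLdef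
  have hu : IsUnit X := LM_isUnit s N k M
  have hdet : IsUnit X.det := (Matrix.isUnit_iff_isUnit_det X).mp hu
  have hXY : X * X⁻¹ = 1 := mul_nonsing_inv X hdet
  set w : Fin (N + 1) × Fin s → ℝ := X⁻¹ *ᵥ v with hwdef
  have hvXw : X *ᵥ w = v := by rw [hwdef, mulVec_mulVec, hXY, one_mulVec]
  -- the quadratic-form identity
  have hμ : μ * (v ⬝ᵥ v) = (L *ᵥ w) ⬝ᵥ (L *ᵥ w) := by
    have h := congrArg (fun z => v ⬝ᵥ z) hveq
    rw [show (X⁻¹)ᵀ * Lᵀ * L * X⁻¹ = (X⁻¹)ᵀ * (Lᵀ * (L * X⁻¹)) by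
      rw [mul_assoc, mul_assoc]] at h
    rw [← mulVec_mulVec, ← mulVec_mulVec, ← mulVec_mulVec] at h
    rw [dotProduct_mulVec, vecMul_transpose, dotProduct_mulVec, vecMul_transpose] at h
    rw [← hwdef] at h
    rw [h]
    simp only [dotProduct, Pi.smul_apply, smul_eq_mul, Finset.mul_sum]
    apply Finset.sum_congr rfl
    intro p _
    ring
  -- block sequences
  set W : ℕ → Fin s → ℝ := fun t a => if h : t < N + 1 then w (⟨t, h⟩, a) else 0 with hWdef
  set V : ℕ → Fin s → ℝ := fun t a => if h : t < N + 1 then v (⟨t, h⟩, a) else 0 with hVdef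
  set G : ℕ → Fin s → ℝ :=
    fun t a => if h : t < N + 1 then (L *ᵥ w) (⟨t, h⟩, a) else 0 with hGdef
  -- entry formulas
  have hXform : ∀ p q : Fin (N + 1) × Fin s, X p q =
      if p.1 = q.1 then (if p.2 = q.2 then (1 : ℝ) else 0)
      else if (p.1 : ℕ) = (q.1 : ℕ) + 1 ∧ (fun j => ¬ k ∣ j) ((q.1 : ℕ) + 1) then
        -(M ((q.1 : ℕ) + 1) p.2 q.2) else 0 := by
    intro p q
    simp only [hXdef, LMmat, Matrix.of_apply]
  have hLform : ∀ p q : Fin (N + 1) × Fin s, L p q =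
      if p.1 = q.1 then (if p.2 = q.2 then (1 : ℝ) else 0)
      else if (p.1 : ℕ) = (q.1 : ℕ) + 1 ∧ (fun _ => True) ((q.1 : ℕ) + 1) then
        -(M ((q.1 : ℕ) + 1) p.2 q.2) else 0 := by
    intro p q
    by_cases h1 : p.1 = q.1
    · simp [hLdef, Lmat, h1]
    · by_cases h2 : (p.1 : ℕ) = (q.1 : ℕ) + 1 <;> simp [hLdef, Lmat, h1, h2]
  have hVt : ∀ t, t < N + 1 → ∀ a, V t a = W t a -
      (if 1 ≤ t ∧ ¬ k ∣ t then (M t *ᵥ W (t - 1)) a else 0) := by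
    intro t ht a
    have hx := bidiag_mulVec s N M (fun j => ¬ k ∣ j) X hXform w ⟨t, ht⟩ a
    rw [hvXw] at hx
    have ht1 : t - 1 < N + 1 := by omega
    simp only [hVdef, hWdef, dif_pos ht, dif_pos ht1]
    rw [hx]
    congr 1
  have hGt : ∀ t, t < N + 1 → ∀ a, G t a = W t a -
      (if 1 ≤ t then (M t *ᵥ W (t - 1)) a else 0) := by
    intro t ht a
    have hx := bidiag_mulVec s N M (fun _ => True) L hLform w ⟨t, ht⟩ a
    have ht1 : t - 1 < N + 1 := by omega
    simp only [hGdef, hWdef, dif_pos ht, dif_pos ht1]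
    rw [hx]
    congr 1
    simp only [and_true]
    congr 1
  -- contraction fact
  have hcon : ∀ t, 1 ≤ t → t ≤ N → ∀ x : Fin s → ℝ,
      ∑ a, ((M t *ᵥ x) a) ^ 2 ≤ ∑ a, x a ^ 2 := fun t h1 h2 => contract (M t) (hM t h1 h2)
  set aseq : ℕ → ℝ := fun t => Real.sqrt (∑ a, W t a ^ 2) with haseq
  set bseq : ℕ → ℝ := fun t => Real.sqrt (∑ a, V t a ^ 2) with hbseq
  have ha_nonneg : ∀ t, 0 ≤ aseq t := fun t => Real.sqrt_nonneg _
  have hb_nonneg : ∀ t, 0 ≤ bseq t := fun t => Real.sqrt_nonneg _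
  have hch1 : ∀ t, t ≤ N → (t = 0 ∨ k ∣ t) → aseq t = bseq t := by
    intro t ht hc
    have hVW : ∀ a, V t a = W t a := by
      intro a
      rw [hVt t (by omega) a, if_neg, sub_zero]
      rintro ⟨h1, h2⟩
      rcases hc with rfl | hc
      · omega
      · exact h2 hc
    simp only [haseq, hbseq]
    congr 1
    exact Finset.sum_congr rfl fun a _ => by rw [hVW a]
  have hch2 : ∀ t, t ≤ N → 1 ≤ t → ¬ k ∣ t → aseq t ≤ bseq t + aseq (t - 1) := by
    intro t ht h1 h2
    have hWt : ∀ a, W t a = V t a + (M t *ᵥ W (t - 1)) a := by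
      intro a
      rw [hVt t (by omega) a, if_pos ⟨h1, h2⟩]
      ring
    have e1 : aseq t = Real.sqrt (∑ a, (V t a + (M t *ᵥ W (t - 1)) a) ^ 2) := by
      simp only [haseq]
      congr 1
      exact Finset.sum_congr rfl fun a _ => by rw [hWt a]
    rw [e1]
    calc Real.sqrt (∑ a, (V t a + (M t *ᵥ W (t - 1)) a) ^ 2)
        ≤ Real.sqrt (∑ a, V t a ^ 2) + Real.sqrt (∑ a, ((M t *ᵥ W (t - 1)) a) ^ 2) :=
          nsq_triangle _ _
      _ ≤ bseq t + aseq (t - 1) :=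
          add_le_add le_rfl (Real.sqrt_le_sqrt (hcon t h1 ht _))
  have hchain := chain k N aseq bseq hch1 hch2
  -- sum conversions
  have hsum_conv : ∀ (z : Fin (N + 1) × Fin s → ℝ) (Z : ℕ → Fin s → ℝ),
      (∀ t (h : t < N + 1) (a : Fin s), Z t a = z (⟨t, h⟩, a)) →
      ∑ p, z p ^ 2 = ∑ t ∈ Finset.range (N + 1), ∑ a, Z t a ^ 2 := by
    intro z Z hZ
    rw [Fintype.sum_prod_type]
    rw [fin_sum_ext (N + 1) (fun i => ∑ a, z (i, a) ^ 2)]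
    apply Finset.sum_congr rfl
    intro t ht
    rw [Finset.mem_range] at ht
    rw [dif_pos ht]
    exact (Finset.sum_congr rfl fun a _ => by rw [hZ t ht a]).symm
  have hSV : v ⬝ᵥ v = ∑ t ∈ Finset.range (N + 1), ∑ a, V t a ^ 2 := by
    have h0 : v ⬝ᵥ v = ∑ p, v p ^ 2 := by
      simp [dotProduct, pow_two]
    rw [h0]
    exact hsum_conv v V (fun t h a => by simp only [hVdef]; rw [dif_pos h])
  have hTG : (L *ᵥ w) ⬝ᵥ (L *ᵥ w) = ∑ t ∈ Finset.range (N + 1), ∑ a, G t a ^ 2 := by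
    have h0 : (L *ᵥ w) ⬝ᵥ (L *ᵥ w) = ∑ p, ((L *ᵥ w) p) ^ 2 := by
      simp [dotProduct, pow_two]
    rw [h0]
    exact hsum_conv (L *ᵥ w) G (fun t h a => by simp only [hGdef]; rw [dif_pos h])
  -- the error blocks
  set E : ℕ → Fin s → ℝ :=
    fun t a => if 1 ≤ t ∧ k ∣ t then (M t *ᵥ W (t - 1)) a else 0 with hEdef
  have hGVE : ∀ t, t < N + 1 → ∀ a, G t a = V t a - E t a := by
    intro t ht a
    rw [hGt t ht a, hVt t ht a]
    simp only [hEdef]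
    by_cases h1 : 1 ≤ t
    · by_cases h2 : k ∣ t
      · rw [if_pos h1, if_pos (⟨h1, h2⟩ : 1 ≤ t ∧ k ∣ t),
          if_neg (by tauto : ¬(1 ≤ t ∧ ¬ k ∣ t))]
        ring
      · rw [if_pos h1, if_neg (by tauto : ¬(1 ≤ t ∧ k ∣ t)),
          if_pos (⟨h1, h2⟩ : 1 ≤ t ∧ ¬ k ∣ t)]
        ring
    · rw [if_neg h1, if_neg (by tauto : ¬(1 ≤ t ∧ k ∣ t)),
        if_neg (by tauto : ¬(1 ≤ t ∧ ¬ k ∣ t))]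
      ring
  set S := ∑ t ∈ Finset.range (N + 1), ∑ a, V t a ^ 2 with hSdef
  set Pq := ∑ t ∈ Finset.range (N + 1), ∑ a, V t a * E t a with hPqdef
  set Q := ∑ t ∈ Finset.range (N + 1), ∑ a, E t a ^ 2 with hQdef
  have hT_expand : ∑ t ∈ Finset.range (N + 1), ∑ a, G t a ^ 2 = S - 2 * Pq + Q := by
    have h1 : ∀ t ∈ Finset.range (N + 1), ∑ a, G t a ^ 2 =
        ∑ a, (V t a ^ 2 - 2 * (V t a * E t a) + E t a ^ 2) := by
      intro t ht
      rw [Finset.mem_range] at ht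
      apply Finset.sum_congr rfl
      intro a _
      rw [hGVE t ht a]
      ring
    rw [Finset.sum_congr rfl h1]
    rw [hSdef, hPqdef, hQdef]
    simp only [Finset.sum_add_distrib, Finset.sum_sub_distrib, ← Finset.mul_sum]
  have hPQ : -Pq ≤ Real.sqrt S * Real.sqrt Q := by
    have h := Real.sum_mul_le_sqrt_mul_sqrt
      (Finset.range (N + 1) ×ˢ (Finset.univ : Finset (Fin s)))
      (fun pa => -(V pa.1 pa.2)) (fun pa => E pa.1 pa.2)
    rw [Finset.sum_product (f := fun pa => (fun pa => -(V pa.1 pa.2)) pa * (fun pa => E pa.1 pa.2) pa),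
      Finset.sum_product (f := fun pa => (fun pa => -(V pa.1 pa.2)) pa ^ 2),
      Finset.sum_product (f := fun pa => (fun pa => E pa.1 pa.2) pa ^ 2)] at h
    simp only [neg_mul, Finset.sum_neg_distrib, neg_sq] at h
    rw [hPqdef, hSdef, hQdef]
    exact h
  have hQS : Q ≤ (k : ℝ) * S := by
    set D := (Finset.range (N + 1)).filter (fun t => 1 ≤ t ∧ k ∣ t) with hDdef
    have hQfilter : Q = ∑ t ∈ D, ∑ a, ((M t *ᵥ W (t - 1)) a) ^ 2 := by
      rw [hQdef, hDdef, Finset.sum_filter]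
      apply Finset.sum_congr rfl
      intro t _
      by_cases hc : 1 ≤ t ∧ k ∣ t
      · rw [if_pos hc]
        apply Finset.sum_congr rfl
        intro a _
        rw [hEdef]
        simp only [if_pos hc]
      · rw [if_neg hc]
        apply Finset.sum_eq_zero
        intro a _
        rw [hEdef]
        simp only [if_neg hc]
        exact zero_pow (by norm_num)
    have hbound : ∀ t ∈ D, ∑ a, ((M t *ᵥ W (t - 1)) a) ^ 2 ≤
        (k : ℝ) * ∑ j ∈ Finset.Icc (k * ((t - 1) / k)) (t - 1), ∑ a, V j a ^ 2 := by
      intro t ht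
      rw [hDdef, Finset.mem_filter, Finset.mem_range] at ht
      obtain ⟨htN, ht1, htd⟩ := ht
      have hWnn : (0:ℝ) ≤ ∑ a, W (t - 1) a ^ 2 := Finset.sum_nonneg fun a _ => sq_nonneg _
      have step1 : ∑ a, ((M t *ᵥ W (t - 1)) a) ^ 2 ≤ ∑ a, W (t - 1) a ^ 2 :=
        hcon t ht1 (by omega) _
      have step2 : ∑ a, W (t - 1) a ^ 2 = (aseq (t - 1)) ^ 2 := by
        rw [haseq]
        exact (Real.sq_sqrt hWnn).symm
      have step3 : aseq (t - 1) ≤ ∑ j ∈ Finset.Icc (k * ((t - 1) / k)) (t - 1), bseq j :=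
        hchain (t - 1) (by omega)
      have step4 : (aseq (t - 1)) ^ 2 ≤
          (∑ j ∈ Finset.Icc (k * ((t - 1) / k)) (t - 1), bseq j) ^ 2 :=
        pow_le_pow_left₀ (ha_nonneg _) step3 2
      have step5 : (∑ j ∈ Finset.Icc (k * ((t - 1) / k)) (t - 1), bseq j) ^ 2 ≤
          ((Finset.Icc (k * ((t - 1) / k)) (t - 1)).card : ℝ) *
            ∑ j ∈ Finset.Icc (k * ((t - 1) / k)) (t - 1), (bseq j) ^ 2 :=
        sq_sum_le_card_mul_sum_sq
      have step6 : ∑ j ∈ Finset.Icc (k * ((t - 1) / k)) (t - 1), (bseq j) ^ 2 =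
          ∑ j ∈ Finset.Icc (k * ((t - 1) / k)) (t - 1), ∑ a, V j a ^ 2 := by
        apply Finset.sum_congr rfl
        intro j _
        rw [hbseq]
        exact Real.sq_sqrt (Finset.sum_nonneg fun a _ => sq_nonneg _)
      have step7 : ((Finset.Icc (k * ((t - 1) / k)) (t - 1)).card : ℝ) ≤ (k : ℝ) := by
        have hc1 : (Finset.Icc (k * ((t - 1) / k)) (t - 1)).card = t - 1 + 1 - k * ((t - 1) / k) :=
          Nat.card_Icc _ _
        have hc2 := Nat.div_add_mod (t - 1) k
        have hc3 : (t - 1) % k < k := Nat.mod_lt _ (by omega)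
        have : (Finset.Icc (k * ((t - 1) / k)) (t - 1)).card ≤ k := by omega
        exact_mod_cast this
      have hsum_nn : (0:ℝ) ≤ ∑ j ∈ Finset.Icc (k * ((t - 1) / k)) (t - 1), ∑ a, V j a ^ 2 :=
        Finset.sum_nonneg fun j _ => Finset.sum_nonneg fun a _ => sq_nonneg _
      calc ∑ a, ((M t *ᵥ W (t - 1)) a) ^ 2 ≤ ∑ a, W (t - 1) a ^ 2 := step1
        _ = (aseq (t - 1)) ^ 2 := step2
        _ ≤ (∑ j ∈ Finset.Icc (k * ((t - 1) / k)) (t - 1), bseq j) ^ 2 := step4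
        _ ≤ ((Finset.Icc (k * ((t - 1) / k)) (t - 1)).card : ℝ) *
            ∑ j ∈ Finset.Icc (k * ((t - 1) / k)) (t - 1), (bseq j) ^ 2 := step5
        _ = ((Finset.Icc (k * ((t - 1) / k)) (t - 1)).card : ℝ) *
            ∑ j ∈ Finset.Icc (k * ((t - 1) / k)) (t - 1), ∑ a, V j a ^ 2 := by rw [step6]
        _ ≤ (k : ℝ) * ∑ j ∈ Finset.Icc (k * ((t - 1) / k)) (t - 1), ∑ a, V j a ^ 2 :=
            mul_le_mul_of_nonneg_right step7 hsum_nn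
    calc Q = ∑ t ∈ D, ∑ a, ((M t *ᵥ W (t - 1)) a) ^ 2 := hQfilter
      _ ≤ ∑ t ∈ D, (k : ℝ) * ∑ j ∈ Finset.Icc (k * ((t - 1) / k)) (t - 1), ∑ a, V j a ^ 2 :=
          Finset.sum_le_sum hbound
      _ = (k : ℝ) * ∑ t ∈ D, ∑ j ∈ Finset.Icc (k * ((t - 1) / k)) (t - 1), ∑ a, V j a ^ 2 :=
          (Finset.mul_sum _ _ _).symm
      _ ≤ (k : ℝ) * S := by
          apply mul_le_mul_of_nonneg_left _ (by positivity)
          rw [hSdef]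
          exact seg_sum k N hk1 (fun j => ∑ a, V j a ^ 2)
            (fun j => Finset.sum_nonneg fun a _ => sq_nonneg _)
  have hQnn : 0 ≤ Q := Finset.sum_nonneg fun t _ => Finset.sum_nonneg fun a _ => sq_nonneg _
  have hSnn : 0 ≤ S := Finset.sum_nonneg fun t _ => Finset.sum_nonneg fun a _ => sq_nonneg _
  have hSpos : 0 < S := by
    rw [← hSV]
    obtain ⟨p, hp⟩ := Function.ne_iff.mp hv
    have : v ⬝ᵥ v = ∑ p, v p * v p := rfl
    rw [this]
    apply Finset.sum_pos' (fun i _ => mul_self_nonneg _)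
    exact ⟨p, Finset.mem_univ p, mul_self_pos.mpr hp⟩
  have hμS : μ * S = S - 2 * Pq + Q := by
    have h1 : μ * S = (L *ᵥ w) ⬝ᵥ (L *ᵥ w) := by rw [← hSV]; exact hμ
    rw [h1, hTG, hT_expand]
  have hsqrtQ : Real.sqrt Q ≤ Real.sqrt k * Real.sqrt S := by
    rw [← Real.sqrt_mul (by positivity : (0:ℝ) ≤ (k:ℝ))]
    exact Real.sqrt_le_sqrt hQS
  have hss : Real.sqrt S * Real.sqrt S = S := Real.mul_self_sqrt hSnn
  have hPq2 : -Pq ≤ Real.sqrt k * S := by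
    calc -Pq ≤ Real.sqrt S * Real.sqrt Q := hPQ
      _ ≤ Real.sqrt S * (Real.sqrt k * Real.sqrt S) :=
          mul_le_mul_of_nonneg_left hsqrtQ (Real.sqrt_nonneg _)
      _ = Real.sqrt k * (Real.sqrt S * Real.sqrt S) := by ring
      _ = Real.sqrt k * S := by rw [hss]
  have hfin : μ * S ≤ ((k : ℝ) + 1 + 2 * Real.sqrt k) * S := by
    rw [hμS]
    nlinarith [hQS, hPq2]
  exact le_of_mul_le_mul_right hfin hSpos
end
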